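/- arXiv:1003.6020 — 8 statements merged into one kernel-verified Lean document; each statement's English description precedes it below -/
import Mathlib

section
/- As x → ∞, Γ(x+1) / (x^x · e^{-x} · √(2πx)) tends to 1 (Stirling's formula). -/
open Real Filter Topology

namespace StirlingFormulaAux

noncomputable def L (x : ℝ) : ℝ :=
  Real.log (Real.Gamma (x + 1)) -
    (x * Real.log x - x + (Real.log (2 * π) + Real.log x) / 2)

noncomputable def logr (n : ℕ) : ℝ :=
  Real.log (n.factorial) -
    ((n : ℝ) * Real.log n - n + (Real.log (2 * π) + Real.log n) / 2)

lemma log_Gamma_succ {y : ℝ} (hy : 0 < y) :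
    Real.log (Real.Gamma (y + 1)) = Real.log y + Real.log (Real.Gamma y) := by
  rw [Real.Gamma_add_one hy.ne', Real.log_mul hy.ne' (Real.Gamma_pos_of_pos hy).ne']

lemma interp {n : ℕ} (hn : 1 ≤ n) {x : ℝ} (hx1 : (n : ℝ) ≤ x) (hx2 : x ≤ (n : ℝ) + 1) :
    Real.log (n.factorial) + (x - n) * Real.log n ≤ Real.log (Real.Gamma (x + 1)) ∧
      Real.log (Real.Gamma (x + 1)) ≤ Real.log (n.factorial) + (x - n) * Real.log (n + 1) := by
  have hn0 : (0 : ℝ) < n := by exact_mod_cast hn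
  have hfact : Real.log (Real.Gamma ((n : ℝ) + 1)) = Real.log (n.factorial) := by
    rw [Real.Gamma_nat_eq_factorial]
  rcases eq_or_lt_of_le hx1 with rfl | hlt
  · constructor <;> simp [hfact]
  · set g : ℝ → ℝ := Real.log ∘ Real.Gamma with hg
    have hconv := Real.convexOn_log_Gamma
    have hmem1 : (n : ℝ) ∈ Set.Ioi (0:ℝ) := hn0
    have hmem2 : (n : ℝ) + 1 ∈ Set.Ioi (0:ℝ) := by simp [Set.mem_Ioi]; linarith
    have hmem3 : x + 1 ∈ Set.Ioi (0:ℝ) := by simp [Set.mem_Ioi]; linarith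
    have hmem4 : (n : ℝ) + 2 ∈ Set.Ioi (0:ℝ) := by simp [Set.mem_Ioi]; linarith
    have ht : 0 < x - n := by linarith
    have hgn : g ((n:ℝ) + 1) - g (n:ℝ) = Real.log n := by
      simp only [hg, Function.comp_apply]
      rw [log_Gamma_succ hn0]; ring
    have hgn1 : g ((n:ℝ) + 2) - g ((n:ℝ) + 1) = Real.log ((n:ℝ) + 1) := by
      have : ((n:ℝ) + 2) = ((n:ℝ) + 1) + 1 := by ring
      simp only [hg, Function.comp_apply, this]
      rw [log_Gamma_succ (by linarith : (0:ℝ) < (n:ℝ) + 1)]; ring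
    constructor
    · have h := hconv.secant_mono hmem2 hmem1 hmem3
        (by intro h; linarith [congrArg id h] : (n:ℝ) ≠ (n:ℝ) + 1)
        (by intro h; linarith [congrArg id h] : x + 1 ≠ (n:ℝ) + 1)
        (by linarith)
      have hL : (g (n:ℝ) - g ((n:ℝ)+1)) / ((n:ℝ) - ((n:ℝ)+1)) = Real.log n := by
        rw [show (n:ℝ) - ((n:ℝ)+1) = -1 by ring, div_neg, div_one, neg_sub, hgn]
      rw [hL] at h
      have hx1n : x + 1 - ((n:ℝ) + 1) = x - n := by ring
      rw [hx1n, le_div_iff₀ ht] at h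
      have : g ((n:ℝ)+1) = Real.log (n.factorial) := hfact
      simp only [hg, Function.comp_apply] at h this ⊢
      nlinarith [h, this]
    · have h := hconv.secant_mono hmem2 hmem3 hmem4
        (by intro h; linarith [congrArg id h] : x + 1 ≠ (n:ℝ) + 1)
        (by intro h; linarith [congrArg id h] : (n:ℝ) + 2 ≠ (n:ℝ) + 1)
        (by linarith)
      have hR : (g ((n:ℝ)+2) - g ((n:ℝ)+1)) / (((n:ℝ)+2) - ((n:ℝ)+1)) = Real.log ((n:ℝ)+1) := by
        rw [show ((n:ℝ)+2) - ((n:ℝ)+1) = 1 by ring, div_one, hgn1]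
      rw [hR] at h
      have hx1n : x + 1 - ((n:ℝ) + 1) = x - n := by ring
      rw [hx1n, div_le_iff₀ ht] at h
      have : g ((n:ℝ)+1) = Real.log (n.factorial) := hfact
      simp only [hg, Function.comp_apply] at h this ⊢
      nlinarith [h, this]

lemma log_sub_log_bounds {n : ℝ} (hn : 0 < n) {x : ℝ} (hx : n ≤ x) :
    (x - n) / x ≤ Real.log x - Real.log n ∧ Real.log x - Real.log n ≤ (x - n) / n := by
  have hx0 : (0 : ℝ) < x := lt_of_lt_of_le hn hx
  constructor
  · have h2 : Real.log (n / x) ≤ n / x - 1 := Real.log_le_sub_one_of_pos (by positivity)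
    have h3 : Real.log (n / x) = -(Real.log x - Real.log n) := by
      rw [Real.log_div hn.ne' hx0.ne']; ring
    rw [h3] at h2
    have h4 : n / x - 1 = -((x - n) / x) := by field_simp; ring
    rw [h4] at h2
    linarith
  · have h2 : Real.log (x / n) ≤ x / n - 1 := Real.log_le_sub_one_of_pos (by positivity)
    have h1 : Real.log x - Real.log n = Real.log (x / n) := by
      rw [Real.log_div hx0.ne' hn.ne']
    have h4 : x / n - 1 = (x - n) / n := by field_simp
    rw [h1]; linarith

lemma key {n : ℕ} (hn : 1 ≤ n) {x : ℝ} (hx1 : (n : ℝ) ≤ x) (hx2 : x ≤ (n : ℝ) + 1)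
    (hΔlo : Real.log (n.factorial) + (x - n) * Real.log n ≤ Real.log (Real.Gamma (x + 1)))
    (hΔhi : Real.log (Real.Gamma (x + 1)) ≤ Real.log (n.factorial) + (x - n) * Real.log (n + 1)) :
    |L x - logr n| ≤ 3 / (2 * n) := by
  have hn0 : (0 : ℝ) < n := by exact_mod_cast hn
  have hx0 : (0 : ℝ) < x := by linarith
  have hs := log_sub_log_bounds hn0 hx1
  obtain ⟨hs1, hs2⟩ := hs
  have ht0 : (0:ℝ) ≤ x - n := by linarith
  have ht1 : x - (n:ℝ) ≤ 1 := by linarith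
  have hs0 : 0 ≤ Real.log x - Real.log (n:ℝ) :=
    le_trans (div_nonneg ht0 hx0.le) hs1
  have hsucc := log_sub_log_bounds hn0 (by linarith : (n : ℝ) ≤ (n : ℝ) + 1)
  have hsucc2 : Real.log ((n : ℝ) + 1) - Real.log (n : ℝ) ≤ 1 / n := by
    have h := hsucc.2
    have : ((n:ℝ) + 1 - n) / n = 1 / n := by ring_nf
    linarith [this ▸ h]
  have hsucc0 : 0 ≤ Real.log ((n : ℝ) + 1) - Real.log (n : ℝ) :=
    le_trans (div_nonneg (by linarith) (by linarith)) hsucc.1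
  have hxs_lo : x - (n:ℝ) ≤ x * (Real.log x - Real.log (n:ℝ)) := by
    have := mul_le_mul_of_nonneg_left hs1 hx0.le
    have h2 : x * ((x - n) / x) = x - n := by field_simp
    linarith [h2 ▸ this]
  have hxs_hi : x * (Real.log x - Real.log (n:ℝ)) ≤ (x - n) + 1 / n := by
    have h1 : x * (Real.log x - Real.log (n:ℝ)) ≤ x * ((x - n) / n) :=
      mul_le_mul_of_nonneg_left hs2 hx0.le
    have h2 : x * ((x - n) / n) = (x - n) + (x - n) * (x - n) / n := by
      field_simp; ring
    have h3 : (x - (n:ℝ)) * (x - n) / n ≤ 1 / n := by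
      apply div_le_div_of_nonneg_right ?_ hn0.le |>.trans_eq rfl
      · nlinarith
    linarith [h2 ▸ h1]
  have hshalf : (Real.log x - Real.log (n:ℝ)) / 2 ≤ 1 / (2 * n) := by
    have h1 : Real.log x - Real.log (n:ℝ) ≤ 1 / n := by
      have : (x - (n:ℝ)) / n ≤ 1 / n := by
        apply div_le_div_of_nonneg_right ?_ hn0.le |>.trans_eq rfl
        · linarith
      linarith
    have h2 : (1:ℝ) / (2 * n) = (1 / n) / 2 := by ring
    linarith [h2]
  have hΔ2 : Real.log (Real.Gamma (x + 1)) - Real.log (n.factorial)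
      - (x - n) * Real.log (n : ℝ) ≤ 1 / n := by
    have h3 : Real.log (Real.Gamma (x + 1)) - Real.log (n.factorial)
        - (x - n) * Real.log (n : ℝ)
        ≤ (x - n) * (Real.log ((n : ℝ) + 1) - Real.log (n : ℝ)) := by
      nlinarith
    have h4 : (x - (n:ℝ)) * (Real.log ((n : ℝ) + 1) - Real.log (n : ℝ)) ≤ 1 * (1 / n) :=
      mul_le_mul ht1 hsucc2 hsucc0 zero_le_one
    linarith
  have hΔ1 : 0 ≤ Real.log (Real.Gamma (x + 1)) - Real.log (n.factorial)
      - (x - n) * Real.log (n : ℝ) := by linarith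
  have hLexp : L x - logr n =
      (Real.log (Real.Gamma (x + 1)) - Real.log (n.factorial) - (x - n) * Real.log (n : ℝ))
      - (x * (Real.log x - Real.log (n:ℝ)) - (x - n)) - (Real.log x - Real.log (n:ℝ)) / 2 := by
    simp only [L, logr]; ring
  have h3n : (3 : ℝ) / (2 * n) = 1 / n + 1 / (2 * n) := by ring
  rw [abs_le, hLexp]
  constructor
  · linarith
  · linarith

lemma logr_eq {n : ℕ} (hn : 1 ≤ n) :
    logr n = Real.log (Stirling.stirlingSeq n / Real.sqrt π) := by
  have hn0 : (0 : ℝ) < n := by exact_mod_cast hn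
  have hfact : (0 : ℝ) < n.factorial := by exact_mod_cast n.factorial_pos
  have hne : (Real.sqrt (2 * n) : ℝ) ≠ 0 := by positivity
  have hpow : ((n : ℝ) / Real.exp 1) ^ n ≠ 0 := by positivity
  rw [Stirling.stirlingSeq, Real.log_div (by positivity) (by positivity),
    Real.log_div hfact.ne' (by positivity), Real.log_mul hne hpow,
    Real.log_sqrt (by positivity), Real.log_pow, Real.log_div hn0.ne' (Real.exp_ne_zero 1),
    Real.log_exp, Real.log_mul (two_ne_zero) hn0.ne', Real.log_sqrt pi_pos.le]
  simp only [logr, Real.log_mul (two_ne_zero' ℝ) pi_pos.ne']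
  ring

lemma tendsto_logr : Tendsto logr atTop (𝓝 0) := by
  have hπ : Real.sqrt π ≠ 0 := by positivity
  have h1 : Tendsto (fun n => Stirling.stirlingSeq n / Real.sqrt π) atTop (𝓝 1) := by
    simpa [div_self hπ] using Stirling.tendsto_stirlingSeq_sqrt_pi.div_const (Real.sqrt π)
  have h2 : Tendsto (fun n => Real.log (Stirling.stirlingSeq n / Real.sqrt π)) atTop (𝓝 0) := by
    have := (Real.continuousAt_log one_ne_zero).tendsto.comp h1
    simpa [Function.comp_def] using this
  refine h2.congr' ?_
  filter_upwards [eventually_ge_atTop 1] with n hn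
  exact (logr_eq hn).symm

lemma key' {x : ℝ} (hx : 1 ≤ x) : |L x - logr ⌊x⌋₊| ≤ 3 / (2 * (⌊x⌋₊ : ℝ)) := by
  have hn : 1 ≤ ⌊x⌋₊ := Nat.le_floor (by exact_mod_cast hx)
  have hx1 : ((⌊x⌋₊ : ℕ) : ℝ) ≤ x := Nat.floor_le (by linarith)
  have hx2 : x ≤ ((⌊x⌋₊ : ℕ) : ℝ) + 1 := (Nat.lt_floor_add_one x).le
  obtain ⟨h1, h2⟩ := interp hn hx1 hx2
  exact key hn hx1 hx2 h1 h2

lemma tendsto_L : Tendsto L atTop (𝓝 0) := by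
  have hfloor : Tendsto (fun x : ℝ => ⌊x⌋₊) atTop atTop := tendsto_nat_floor_atTop
  have hlogr : Tendsto (fun x : ℝ => logr ⌊x⌋₊) atTop (𝓝 0) := tendsto_logr.comp hfloor
  have hinv : Tendsto (fun x : ℝ => 3 / (2 * (⌊x⌋₊ : ℝ))) atTop (𝓝 0) := by
    have h0 : Tendsto (fun n : ℕ => 3 / (2 * (n : ℝ))) atTop (𝓝 0) := by
      have := tendsto_one_div_atTop_nhds_zero_nat.const_mul (3/2 : ℝ)
      simp only [mul_zero] at this
      refine this.congr fun n => ?_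
      rw [mul_one_div]
      ring
    exact h0.comp hfloor
  have hlo : Tendsto (fun x : ℝ => logr ⌊x⌋₊ - 3 / (2 * (⌊x⌋₊ : ℝ))) atTop (𝓝 0) := by
    simpa using hlogr.sub hinv
  have hhi : Tendsto (fun x : ℝ => logr ⌊x⌋₊ + 3 / (2 * (⌊x⌋₊ : ℝ))) atTop (𝓝 0) := by
    simpa using hlogr.add hinv
  refine tendsto_of_tendsto_of_tendsto_of_le_of_le' hlo hhi ?_ ?_
  · filter_upwards [eventually_ge_atTop (1:ℝ)] with x hx
    have := abs_le.mp (key' hx)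
    linarith [this.1]
  · filter_upwards [eventually_ge_atTop (1:ℝ)] with x hx
    have := abs_le.mp (key' hx)
    linarith [this.2]

lemma ratio_eq {x : ℝ} (hx : 1 ≤ x) :
    Real.Gamma (x + 1) / (x ^ x * Real.exp (-x) * Real.sqrt (2 * π * x)) = Real.exp (L x) := by
  have hx0 : (0 : ℝ) < x := by linarith
  have hG : (0 : ℝ) < Real.Gamma (x + 1) := Real.Gamma_pos_of_pos (by linarith)
  have h1 : x ^ x = Real.exp (x * Real.log x) := by
    rw [Real.rpow_def_of_pos hx0]; ring_nf
  have h2 : Real.sqrt (2 * π * x) = Real.exp ((Real.log (2 * π) + Real.log x) / 2) := by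
    rw [← Real.exp_log (show (0:ℝ) < Real.sqrt (2 * π * x) by positivity),
      Real.log_sqrt (by positivity),
      Real.log_mul (by positivity) hx0.ne']
  rw [h1, h2, ← Real.exp_log hG, ← Real.exp_add, ← Real.exp_add, ← Real.exp_sub]
  congr 1

end StirlingFormulaAux

theorem stirling_formula :
    Tendsto (fun x : ℝ =>
      Real.Gamma (x + 1) / (x ^ x * Real.exp (-x) * Real.sqrt (2 * π * x)))
      atTop (nhds 1) := by
  have h : Tendsto (fun x : ℝ => Real.exp (StirlingFormulaAux.L x)) atTop (𝓝 1) := by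
    have := (Real.continuous_exp.tendsto 0).comp StirlingFormulaAux.tendsto_L
    simpa [Function.comp_def] using this
  refine h.congr' ?_
  filter_upwards [eventually_ge_atTop (1:ℝ)] with x hx
  exact (StirlingFormulaAux.ratio_eq hx).symm
end

section
/- There exists a constant C > 0 and X > 0 such that for all x ≥ X, |Γ(x+1) / (x^x · e^{-x} · √(2π(x + 1/6))) − 1| ≤ C/x² (Gosper's approximation with quadratic error). -/
open Real

open Filter Topology


lemma halfLog_hasSum {a : ℝ} (ha : 0 < a) :
    HasSum (fun k : ℕ => (1/(2*a+1)) ^ (2*k+1) / (2*k+1)) (Real.log (1+a⁻¹) / 2) := by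
  have h := (Real.hasSum_log_one_add_inv ha).mul_left (1/2)
  have e : (fun k : ℕ => (1/(2*a+1)) ^ (2*k+1) / (2*k+1)) = (fun i : ℕ => 1/2 * (2 * (1 / (2 * (i:ℝ) + 1)) * (1 / (2 * a + 1)) ^ (2 * i + 1))) := by
    funext k; push_cast; ring
  rw [e, show Real.log (1+a⁻¹) / 2 = 1/2 * Real.log (1+a⁻¹) by ring]
  exact h

lemma halfLog_lower {a : ℝ} (ha : 0 < a) :
    1/(2*a+1) + (1/(2*a+1))^3/3 ≤ Real.log (1+a⁻¹) / 2 := by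
  have h := halfLog_hasSum ha
  have h2 := sum_le_hasSum (Finset.range 2) (fun k _ => by positivity) h
  calc 1/(2*a+1) + (1/(2*a+1))^3/3
      = ∑ k ∈ Finset.range 2, (1/(2*a+1)) ^ (2*k+1) / (2*k+1) := by
        simp [Finset.sum_range_succ]; ring
    _ ≤ _ := h2

lemma halfLog_upper {a : ℝ} (ha : 0 < a) :
    Real.log (1+a⁻¹) / 2 ≤ 1/(2*a+1) + (1/(2*a+1))^3/(3*(1-(1/(2*a+1))^2)) := by
  set s : ℝ := 1/(2*a+1) with hs
  have hs0 : 0 < s := by positivity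
  have hs1 : s < 1 := by
    rw [hs, div_lt_one (by linarith)]; linarith
  have hsq : s^2 < 1 := by nlinarith
  have hsqne : (1:ℝ) - s^2 ≠ 0 := by nlinarith
  have hgeo : HasSum (fun k : ℕ => s/3 * (s^2)^k) (s/3 * (1-s^2)⁻¹) :=
    (hasSum_geometric_of_lt_one (by positivity) hsq).mul_left _
  have hspike : HasSum (fun k : ℕ => if k = 0 then s - s/3 else 0) (s - s/3) :=
    hasSum_ite_eq 0 _
  have hb : HasSum (fun k : ℕ => (if k = 0 then s - s/3 else 0) + s/3 * (s^2)^k)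
      ((s - s/3) + s/3 * (1-s^2)⁻¹) := hspike.add hgeo
  have hle := hasSum_le (fun k => ?_) (halfLog_hasSum ha) hb
  · calc Real.log (1+a⁻¹)/2 ≤ (s - s/3) + s/3 * (1-s^2)⁻¹ := hle
      _ = s + s^3/(3*(1-s^2)) := by field_simp; ring
  · rcases Nat.eq_zero_or_pos k with rfl | hk
    · norm_num [hs]
    · have hk1 : (1:ℝ) ≤ (k:ℝ) := by exact_mod_cast hk
      rw [if_neg (Nat.pos_iff_ne_zero.mp hk), zero_add]
      have he : s ^ (2*k+1) = s * (s^2)^k := by rw [← pow_mul]; ring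
      rw [he]
      rw [div_le_iff₀ (by positivity)]
      have h1 : s * (s^2)^k * 3 ≤ s * (s^2)^k * (2*k+1) := by
        have : (3:ℝ) ≤ 2*k+1 := by linarith
        have hpos : 0 ≤ s * (s^2)^k := by positivity
        nlinarith
      calc s * (s ^ 2) ^ k = s * (s^2)^k * 3 / 3 := by ring
        _ ≤ s * (s^2)^k * (2*k+1) / 3 := by linarith
        _ = s / 3 * (s ^ 2) ^ k * (2 * ↑k + 1) := by ring

noncomputable def gosF (x : ℝ) : ℝ :=
  Real.log (Real.Gamma x) - ((x - 1/2) * Real.log x - x + Real.log (2*π)/2)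

lemma gosF_step {x : ℝ} (hx : 0 < x) :
    gosF x = gosF (x+1) + ((x+1/2) * Real.log (1+x⁻¹) - 1) := by
  have hG : Real.Gamma (x+1) = x * Real.Gamma x := Real.Gamma_add_one hx.ne'
  have hGpos : 0 < Real.Gamma x := Real.Gamma_pos_of_pos hx
  have h1 : Real.log (Real.Gamma (x+1)) = Real.log x + Real.log (Real.Gamma x) := by
    rw [hG, Real.log_mul hx.ne' hGpos.ne']
  have h2 : Real.log (1+x⁻¹) = Real.log (x+1) - Real.log x := by
    rw [show (1+x⁻¹ : ℝ) = (x+1)/x by field_simp, Real.log_div (by linarith) hx.ne']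
  simp only [gosF, h1, h2]
  ring

lemma gos_g_upper {x : ℝ} (hx : 0 < x) :
    (x+1/2) * Real.log (1+x⁻¹) - 1 ≤ 1/(12*x) - 1/(12*(x+1)) := by
  have h := halfLog_upper hx
  set s : ℝ := 1/(2*x+1) with hs
  have hsne : (2*x+1) ≠ 0 := by linarith
  have h2 : (x+1/2) * Real.log (1+x⁻¹) = (2*x+1) * (Real.log (1+x⁻¹)/2) := by ring
  have hsq : (1:ℝ) - s^2 = 4*x*(x+1)/(2*x+1)^2 := by
    rw [hs]; field_simp; ring
  have hx1 : (0:ℝ) < x + 1 := by linarith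
  calc (x+1/2) * Real.log (1+x⁻¹) - 1
      ≤ (2*x+1) * (s + s^3/(3*(1-s^2))) - 1 := by
        rw [h2]; nlinarith [h]
    _ = 1/(12*x) - 1/(12*(x+1)) := by
        rw [hs, hsq]; field_simp; ring

lemma gos_g_lower {x : ℝ} (hx : 0 < x) :
    1/(3*(2*x+1)^2) ≤ (x+1/2) * Real.log (1+x⁻¹) - 1 := by
  have h := halfLog_lower hx
  have hsne : (2*x+1) ≠ 0 := by linarith
  have h2 : (x+1/2) * Real.log (1+x⁻¹) = (2*x+1) * (Real.log (1+x⁻¹)/2) := by ring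
  have : (2*x+1) * (1/(2*x+1) + (1/(2*x+1))^3/3) = 1 + 1/(3*(2*x+1)^2) := by
    field_simp
  rw [h2]; nlinarith [h]
lemma gosF_nat_eq (n : ℕ) :
    gosF (n+1) = Real.log (Stirling.stirlingSeq (n+1)) - Real.log (Real.sqrt π) := by
  have hn1 : (0:ℝ) < (n:ℝ)+1 := by positivity
  have hfac : (0:ℝ) < (n+1).factorial := by exact_mod_cast (n+1).factorial_pos
  have hfacn : (0:ℝ) < n.factorial := by exact_mod_cast n.factorial_pos
  have hs : Stirling.stirlingSeq (n+1)
      = ((n+1).factorial : ℝ) / (Real.sqrt (2*((n:ℝ)+1)) * (((n:ℝ)+1)/Real.exp 1)^(n+1)) := by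
    simp [Stirling.stirlingSeq]
  have hsqrtpos : (0:ℝ) < Real.sqrt (2*((n:ℝ)+1)) := Real.sqrt_pos.mpr (by positivity)
  have hpowpos : (0:ℝ) < (((n:ℝ)+1)/Real.exp 1)^(n+1) := by positivity
  have hΓ : Real.Gamma ((n:ℝ)+1) = (n.factorial : ℝ) := Real.Gamma_nat_eq_factorial n
  have hlogfac : Real.log ((n+1).factorial : ℝ) = Real.log ((n:ℝ)+1) + Real.log (n.factorial : ℝ) := by
    rw [Nat.factorial_succ]
    push_cast
    rw [Real.log_mul (by positivity) hfacn.ne']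
  have hlogs : Real.log (Stirling.stirlingSeq (n+1))
      = Real.log ((n:ℝ)+1) + Real.log (n.factorial : ℝ)
        - (Real.log (2*((n:ℝ)+1))/2 + (n+1) * (Real.log ((n:ℝ)+1) - 1)) := by
    rw [hs, Real.log_div hfac.ne' (by positivity), Real.log_mul hsqrtpos.ne' hpowpos.ne',
      Real.log_sqrt (by positivity), Real.log_pow, Real.log_div (by positivity) (Real.exp_pos 1).ne',
      Real.log_exp, hlogfac]
    push_cast
    ring
  have hlog2pi : Real.log (2*π) = Real.log 2 + Real.log π := Real.log_mul two_ne_zero Real.pi_ne_zero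
  have hlog2n : Real.log (2*((n:ℝ)+1)) = Real.log 2 + Real.log ((n:ℝ)+1) :=
    Real.log_mul two_ne_zero (by positivity)
  rw [gosF, hΓ, hlogs, Real.log_sqrt Real.pi_pos.le, hlog2pi, hlog2n]
  ring

lemma gosF_nat_tendsto : Filter.Tendsto (fun n : ℕ => gosF n) Filter.atTop (nhds 0) := by
  rw [← Filter.tendsto_add_atTop_iff_nat 1]
  have h1 : Filter.Tendsto (fun n : ℕ => Stirling.stirlingSeq (n+1)) Filter.atTop
      (nhds (Real.sqrt π)) := by
    rw [Filter.tendsto_add_atTop_iff_nat 1]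
    exact Stirling.tendsto_stirlingSeq_sqrt_pi
  have h2 := (h1.log (Real.sqrt_ne_zero'.mpr Real.pi_pos)).sub_const (Real.log (Real.sqrt π))
  rw [sub_self] at h2
  refine h2.congr (fun n => ?_)
  rw [← gosF_nat_eq]
  push_cast
  ring_nf
lemma log_one_add_le {u : ℝ} (hu : 0 ≤ u) : Real.log (1+u) ≤ u := by
  have := Real.log_le_sub_one_of_pos (show (0:ℝ) < 1+u by linarith)
  linarith

lemma le_log_one_add {u : ℝ} (hu : 0 ≤ u) : u/(1+u) ≤ Real.log (1+u) := by
  have h1 : (0:ℝ) < 1+u := by linarith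
  have := Real.log_le_sub_one_of_pos (show (0:ℝ) < (1+u)⁻¹ by positivity)
  rw [Real.log_inv] at this
  have h2 : (1+u)⁻¹ - 1 = -(u/(1+u)) := by field_simp; ring
  linarith

lemma phi_est {m s : ℝ} (hm : 1 ≤ m) (hs0 : 0 ≤ s) (hs1 : s ≤ 1) :
    |((m+s-1/2) * Real.log (m+s) - (m+s)) - ((m-1/2) * Real.log m - m) - s * Real.log m|
      ≤ 1/m := by
  have hm0 : (0:ℝ) < m := by linarith
  have hms : (0:ℝ) < m + s := by linarith
  have hu0 : 0 ≤ s/m := by positivity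
  have hlog : Real.log (m+s) = Real.log m + Real.log (1+s/m) := by
    rw [show m+s = m*(1+s/m) by field_simp, Real.log_mul hm0.ne' (by positivity)]
  have hL1 : Real.log (1+s/m) ≤ s/m := log_one_add_le hu0
  have hL2 : s/(m+s) ≤ Real.log (1+s/m) := by
    have h := le_log_one_add hu0
    have he : (s/m)/(1+s/m) = s/(m+s) := by
      rw [div_div]
      congr 1
      field_simp
    rw [he] at h
    exact h
  have hc : (0:ℝ) < m+s-1/2 := by linarith
  rw [hlog, abs_le]
  constructor
  · have h := mul_le_mul_of_nonneg_left hL2 hc.le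
    have key : (m+s-1/2) * (s/(m+s)) - s = -(s/(2*(m+s))) := by field_simp; ring
    have h2 : s/(2*(m+s)) ≤ 1/m := by
      rw [div_le_div_iff₀ (by linarith) hm0]; nlinarith
    nlinarith
  · have h := mul_le_mul_of_nonneg_left hL1 hc.le
    have key : (m+s-1/2) * (s/m) - s = s*(s-1/2)/m := by field_simp; ring
    have h3 : s*(s-1/2) ≤ 1 := by nlinarith
    have h2 : s*(s-1/2)/m ≤ 1/m := by
      rw [div_le_div_iff₀ hm0 hm0]; nlinarith
    nlinarith

lemma gosF_sandwich {y : ℝ} {n : ℕ} (hn : 2 ≤ n) (h1 : (n:ℝ) ≤ y) (h2 : y < n+1) :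
    gosF n - 1/((n:ℝ)-1) - 1/n ≤ gosF y ∧ gosF y ≤ gosF n + 1/n := by
  have hn2 : (2:ℝ) ≤ n := by exact_mod_cast hn
  have hn0 : (0:ℝ) < n := by linarith
  have hn1 : (0:ℝ) < (n:ℝ) - 1 := by linarith
  set s : ℝ := y - n with hsdef
  have hs0 : 0 ≤ s := by simp only [hsdef]; linarith
  have hs1 : s < 1 := by simp only [hsdef]; linarith
  have hΓn : 0 < Real.Gamma (n:ℝ) := Real.Gamma_pos_of_pos hn0
  have hΓn1 : Real.log (Real.Gamma ((n:ℝ)+1)) = Real.log n + Real.log (Real.Gamma n) := by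
    rw [Real.Gamma_add_one hn0.ne', Real.log_mul hn0.ne' hΓn.ne']
  have hΓn0 : Real.log (Real.Gamma (n:ℝ)) = Real.log ((n:ℝ)-1) + Real.log (Real.Gamma ((n:ℝ)-1)) := by
    have h := Real.Gamma_add_one hn1.ne'
    rw [show ((n:ℝ)-1)+1 = n by ring] at h
    rw [h, Real.log_mul hn1.ne' (Real.Gamma_pos_of_pos hn1).ne']
  have hphi := phi_est (show (1:ℝ) ≤ n by linarith) hs0 hs1.le
  rw [show (n:ℝ) + s = y by simp [hsdef]] at hphi
  rw [abs_le] at hphi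
  have hcv := Real.convexOn_log_Gamma
  clear_value s
  constructor
  · -- lower bound
    have hlow : Real.log (Real.Gamma n) + s * Real.log ((n:ℝ)-1) ≤ Real.log (Real.Gamma y) := by
      rcases eq_or_lt_of_le h1 with heq | hlt
      · rw [← heq]
        have hz : s = 0 := by simp [hsdef, ← heq]
        simp [hz]
      · have hsl := hcv.slope_mono_adjacent (show (n:ℝ)-1 ∈ Set.Ioi (0:ℝ) from hn1)
          (show y ∈ Set.Ioi (0:ℝ) from lt_trans hn0 hlt)
          (show (n:ℝ)-1 < n by linarith) hlt
        simp only [Function.comp] at hsl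
        rw [show (n:ℝ) - ((n:ℝ)-1) = 1 by ring, div_one] at hsl
        have hspos : 0 < s := by simp only [hsdef]; linarith
        have hsl2 : Real.log ((n:ℝ)-1) ≤ (Real.log (Real.Gamma y) - Real.log (Real.Gamma n)) / s := by
          have : Real.log ((n:ℝ)-1) ≤ Real.log (Real.Gamma (n:ℝ)) - Real.log (Real.Gamma ((n:ℝ)-1)) := by
            rw [hΓn0]; ring_nf; exact le_rfl
          refine le_trans this (le_trans hsl (le_of_eq ?_))
          rw [hsdef]
        have := (le_div_iff₀ hspos).mp hsl2
        nlinarith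
    have hlogn : -(1/((n:ℝ)-1)) ≤ s * Real.log ((n:ℝ)-1) - s * Real.log n := by
      have hmono : Real.log ((n:ℝ)-1) ≤ Real.log n := Real.log_le_log hn1 (by linarith)
      have hdiff : Real.log (n:ℝ) - Real.log ((n:ℝ)-1) ≤ 1/((n:ℝ)-1) := by
        rw [← Real.log_div hn0.ne' hn1.ne']
        have he : (n:ℝ)/((n:ℝ)-1) = 1 + 1/((n:ℝ)-1) := by field_simp; ring
        rw [he]
        exact log_one_add_le (by positivity)
      nlinarith [mul_le_mul_of_nonneg_left (sub_nonneg.mpr hmono) hs0]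
    simp only [gosF]
    linarith [hphi.2, hlow, hlogn]
  · -- upper bound
    have hup : Real.log (Real.Gamma y) ≤ Real.log (Real.Gamma n) + s * Real.log n := by
      have hmem1 : (n:ℝ) ∈ Set.Ioi (0:ℝ) := hn0
      have hmem2 : (n:ℝ)+1 ∈ Set.Ioi (0:ℝ) := by simp; linarith
      have hc := hcv.2 hmem1 hmem2 (show (0:ℝ) ≤ 1 - s by linarith) hs0 (by ring)
      simp only [smul_eq_mul, Function.comp] at hc
      rw [show (1-s)*(n:ℝ) + s*((n:ℝ)+1) = y by simp [hsdef]; ring] at hc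
      rw [hΓn1] at hc
      nlinarith
    simp only [gosF]
    linarith [hphi.1, hup]
lemma gosF_shift_tendsto {x : ℝ} (hx : 1 ≤ x) :
    Filter.Tendsto (fun N : ℕ => gosF (x + N)) Filter.atTop (nhds 0) := by
  set m : ℕ := ⌊x⌋₊ with hm
  have hm1 : 1 ≤ m := Nat.le_floor (by exact_mod_cast hx)
  have hfl : (m:ℝ) ≤ x := Nat.floor_le (by linarith)
  have hflu : x < m + 1 := Nat.lt_floor_add_one x
  have hA : Filter.Tendsto (fun N : ℕ => gosF ((m+N : ℕ) : ℝ)) Filter.atTop (nhds 0) := by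
    have h := gosF_nat_tendsto.comp (Filter.tendsto_add_atTop_nat m)
    refine h.congr (fun N => ?_)
    simp [Function.comp, Nat.add_comm]
  have hB : Filter.Tendsto (fun N : ℕ => 1/((m:ℝ)+N)) Filter.atTop (nhds 0) := by
    have h1 : Filter.Tendsto (fun N : ℕ => (m:ℝ)+N) Filter.atTop Filter.atTop :=
      Filter.tendsto_atTop_add_const_left _ _ tendsto_natCast_atTop_atTop
    exact h1.inv_tendsto_atTop.congr (fun N => (one_div _).symm)
  have hC : Filter.Tendsto (fun N : ℕ => 1/((m:ℝ)+N-1)) Filter.atTop (nhds 0) := by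
    have h2 : Filter.Tendsto (fun N : ℕ => ((m:ℝ)-1)+N) Filter.atTop Filter.atTop :=
      Filter.tendsto_atTop_add_const_left _ _ tendsto_natCast_atTop_atTop
    have h1 : Filter.Tendsto (fun N : ℕ => (m:ℝ)+N-1) Filter.atTop Filter.atTop :=
      h2.congr (fun N => by ring)
    exact h1.inv_tendsto_atTop.congr (fun N => (one_div _).symm)
  have hlow : Filter.Tendsto
      (fun N : ℕ => gosF ((m+N : ℕ) : ℝ) - 1/((m:ℝ)+N-1) - 1/((m:ℝ)+N))
      Filter.atTop (nhds 0) := by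
    have h := (hA.sub hC).sub hB
    simpa using h
  have hup : Filter.Tendsto (fun N : ℕ => gosF ((m+N : ℕ) : ℝ) + 1/((m:ℝ)+N))
      Filter.atTop (nhds 0) := by
    have h := hA.add hB
    simpa using h
  refine tendsto_of_tendsto_of_tendsto_of_le_of_le' hlow hup ?_ ?_
  · filter_upwards [Filter.eventually_ge_atTop 1] with N hN
    have hn2 : 2 ≤ m + N := by omega
    have hcast : ((m+N : ℕ) : ℝ) = (m:ℝ) + N := by push_cast; ring
    have h1 : ((m+N:ℕ):ℝ) ≤ x + N := by rw [hcast]; linarith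
    have h2 : x + N < ((m+N:ℕ):ℝ) + 1 := by rw [hcast]; linarith
    have h := (gosF_sandwich hn2 h1 h2).1
    rw [hcast] at h
    rw [hcast]
    linarith
  · filter_upwards [Filter.eventually_ge_atTop 1] with N hN
    have hn2 : 2 ≤ m + N := by omega
    have hcast : ((m+N : ℕ) : ℝ) = (m:ℝ) + N := by push_cast; ring
    have h1 : ((m+N:ℕ):ℝ) ≤ x + N := by rw [hcast]; linarith
    have h2 : x + N < ((m+N:ℕ):ℝ) + 1 := by rw [hcast]; linarith
    have h := (gosF_sandwich hn2 h1 h2).2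
    rw [hcast] at h
    rw [hcast]
    linarith

lemma gosF_telescope {x : ℝ} (hx : 0 < x) (N : ℕ) :
    gosF x = gosF (x+N)
      + ∑ n ∈ Finset.range N, ((x+n+1/2) * Real.log (1+(x+n)⁻¹) - 1) := by
  induction N with
  | zero => simp
  | succ N ih =>
    rw [Finset.sum_range_succ, ih]
    have hxN : (0:ℝ) < x + N := by positivity
    rw [show x + ((N:ℕ)+1 : ℕ) = (x+(N:ℕ)) + 1 by push_cast; ring]
    have h := gosF_step hxN
    have he : x + (N:ℝ) + 1/2 = (x + N) + 1/2 := by ring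
    rw [he]
    linarith

lemma g_term_lower {y : ℝ} (hy : 1 ≤ y) :
    1/(12*y+1) - 1/(12*(y+1)+1) ≤ (y+1/2) * Real.log (1+y⁻¹) - 1 := by
  have hy0 : (0:ℝ) < y := by linarith
  refine le_trans ?_ (gos_g_lower hy0)
  rw [div_sub_div _ _ (by positivity : (12*y+1:ℝ) ≠ 0) (by positivity : (12*(y+1)+1:ℝ) ≠ 0),
    div_le_div_iff₀ (by positivity) (by positivity)]
  nlinarith

lemma gosF_bounds {x : ℝ} (hx : 1 ≤ x) :
    1/(12*x+1) ≤ gosF x ∧ gosF x ≤ 1/(12*x) := by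
  have hx0 : (0:ℝ) < x := by linarith
  have hshift := gosF_shift_tendsto hx
  have hinv : Filter.Tendsto (fun N : ℕ => 12*(x+N)+1) Filter.atTop Filter.atTop := by
    have h : Filter.Tendsto (fun N : ℕ => (12*x+1)+12*N) Filter.atTop Filter.atTop :=
      Filter.tendsto_atTop_add_const_left _ _
        (Filter.Tendsto.const_mul_atTop (by norm_num) tendsto_natCast_atTop_atTop)
    exact h.congr (fun N => by ring)
  have hinv2 : Filter.Tendsto (fun N : ℕ => 12*(x+N)) Filter.atTop Filter.atTop := by
    have h : Filter.Tendsto (fun N : ℕ => (12*x)+12*N) Filter.atTop Filter.atTop :=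
      Filter.tendsto_atTop_add_const_left _ _
        (Filter.Tendsto.const_mul_atTop (by norm_num) tendsto_natCast_atTop_atTop)
    exact h.congr (fun N => by ring)
  constructor
  · have hseq : Filter.Tendsto
        (fun N : ℕ => gosF (x+N) + (1/(12*x+1) - 1/(12*(x+N)+1)))
        Filter.atTop (nhds (1/(12*x+1))) := by
      have h1 : Filter.Tendsto (fun N : ℕ => 1/(12*(x+N)+1)) Filter.atTop (nhds 0) := by
        exact hinv.inv_tendsto_atTop.congr (fun N => (one_div _).symm)
      have hconst : Filter.Tendsto (fun _ : ℕ => (1/(12*x+1):ℝ)) Filter.atTop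
          (nhds (1/(12*x+1))) := tendsto_const_nhds
      have h := hshift.add (hconst.sub h1)
      simpa using h
    refine le_of_tendsto hseq ?_
    filter_upwards with N
    have htel := Finset.sum_range_sub' (fun n : ℕ => 1/(12*(x+n)+1)) N
    have hsum : 1/(12*(x+(0:ℕ))+1) - 1/(12*(x+N)+1)
        ≤ ∑ n ∈ Finset.range N, ((x+n+1/2) * Real.log (1+(x+n)⁻¹) - 1) := by
      rw [← htel]
      refine Finset.sum_le_sum (fun n _ => ?_)
      have hyn : (1:ℝ) ≤ x + n := by
        have : (0:ℝ) ≤ n := Nat.cast_nonneg n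
        linarith
      have h := g_term_lower hyn
      have hc : (12*(x+(n+1:ℕ))+1 : ℝ) = 12*((x+n)+1)+1 := by push_cast; ring
      rw [hc]
      exact h
    have h0 : (1/(12*(x+(0:ℕ))+1) : ℝ) = 1/(12*x+1) := by norm_num
    rw [h0] at hsum
    linarith [gosF_telescope hx0 N, hsum]
  · have hseq : Filter.Tendsto
        (fun N : ℕ => gosF (x+N) + (1/(12*x) - 1/(12*(x+N))))
        Filter.atTop (nhds (1/(12*x))) := by
      have h1 : Filter.Tendsto (fun N : ℕ => 1/(12*(x+N))) Filter.atTop (nhds 0) :=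
        hinv2.inv_tendsto_atTop.congr (fun N => (one_div _).symm)
      have hconst : Filter.Tendsto (fun _ : ℕ => (1/(12*x):ℝ)) Filter.atTop
          (nhds (1/(12*x))) := tendsto_const_nhds
      have h := hshift.add (hconst.sub h1)
      simpa using h
    refine ge_of_tendsto hseq ?_
    filter_upwards with N
    have htel := Finset.sum_range_sub' (fun n : ℕ => 1/(12*(x+n))) N
    have hsum : ∑ n ∈ Finset.range N, ((x+n+1/2) * Real.log (1+(x+n)⁻¹) - 1)
        ≤ 1/(12*(x+(0:ℕ))) - 1/(12*(x+N)) := by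
      rw [← htel]
      refine Finset.sum_le_sum (fun n _ => ?_)
      have hyn : (0:ℝ) < x + n := by
        have : (0:ℝ) ≤ n := Nat.cast_nonneg n
        linarith
      have h := gos_g_upper hyn
      have hc : (12*(x+(n+1:ℕ)) : ℝ) = 12*((x+n)+1) := by push_cast; ring
      rw [hc]
      exact h
    have h0 : (1/(12*(x+(0:ℕ))) : ℝ) = 1/(12*x) := by norm_num
    rw [h0] at hsum
    linarith [gosF_telescope hx0 N, hsum]
set_option maxHeartbeats 1000000 in
theorem gosper_approx_quadratic_error :
    ∃ C > (0:ℝ), ∃ X > (0:ℝ), ∀ x ≥ X,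
      |Real.Gamma (x + 1) / (x ^ x * Real.exp (-x) * Real.sqrt (2 * π * (x + 1/6))) - 1|
        ≤ C / x ^ 2 := by
  refine ⟨1, one_pos, 1, one_pos, fun x hx => ?_⟩
  have hx0 : (0:ℝ) < x := by linarith
  have hx6 : (0:ℝ) < 6*x := by linarith
  -- delta bounds
  have hgb := gosF_bounds hx
  have h2 := halfLog_lower hx6
  have h3 := halfLog_upper hx6
  rw [show (2*(6*x)+1 : ℝ) = 12*x+1 by ring] at h2 h3
  set s : ℝ := 1/(12*x+1) with hs
  set L : ℝ := Real.log (1+(6*x)⁻¹) / 2 with hL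
  have hs_pos : 0 < s := by rw [hs]; positivity
  have h13 : (13:ℝ) ≤ 12*x+1 := by linarith
  have hs_le : s ≤ 1/13 := by
    rw [hs]; exact one_div_le_one_div_of_le (by norm_num) h13
  have hssq : s^2 ≤ 1/169 := by nlinarith
  have hden : (2:ℝ) ≤ 3*(1-s^2) := by nlinarith
  have hs12 : s ≤ 1/(12*x) := by
    rw [hs]; exact one_div_le_one_div_of_le (by linarith) (by linarith)
  have hcube : s^3/(3*(1-s^2)) ≤ 1/(2*x^2) := by
    have hc1 : s^3/(3*(1-s^2)) ≤ s^3/2 := by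
      rw [div_le_div_iff₀ (by linarith) (by norm_num)]
      nlinarith [pow_pos hs_pos 3]
    have hc2 : s^3 ≤ (1/(12*x))^3 := pow_le_pow_left₀ hs_pos.le hs12 3
    have hc3 : (1/(12*x))^3/2 ≤ 1/(2*x^2) := by
      rw [div_pow, one_pow, div_div, div_le_div_iff₀ (by positivity) (by positivity)]
      nlinarith
    calc s^3/(3*(1-s^2)) ≤ s^3/2 := hc1
      _ ≤ (1/(12*x))^3/2 := by linarith
      _ ≤ 1/(2*x^2) := hc3
  have hd_up : gosF x - L ≤ 1/(2*x^2) := by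
    have h4 : 1/(12*x) - s ≤ 1/(2*x^2) := by
      rw [hs, div_sub_div _ _ (by positivity : (12*x:ℝ) ≠ 0) (by positivity : (12*x+1:ℝ) ≠ 0),
        div_le_div_iff₀ (by positivity) (by positivity)]
      nlinarith
    have : s ≤ L := by nlinarith [pow_pos hs_pos 3]
    linarith [hgb.2]
  have hd_low : -(1/(2*x^2)) ≤ gosF x - L := by
    have : L ≤ s + s^3/(3*(1-s^2)) := h3
    linarith [hgb.1]
  have habs : |gosF x - L| ≤ 1/(2*x^2) := abs_le.mpr ⟨hd_low, hd_up⟩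
  have habs1 : |gosF x - L| ≤ 1 := by
    refine le_trans habs ?_
    rw [div_le_one (by positivity)]
    nlinarith
  -- ratio equals exp delta
  have hΓ1 : 0 < Real.Gamma (x+1) := Real.Gamma_pos_of_pos (by linarith)
  have hΓ : 0 < Real.Gamma x := Real.Gamma_pos_of_pos hx0
  have hxx : (0:ℝ) < x ^ x := Real.rpow_pos_of_pos hx0 x
  have hpi : (0:ℝ) < 2*π*(x+1/6) := by positivity
  have hsq : (0:ℝ) < Real.sqrt (2*π*(x+1/6)) := Real.sqrt_pos.mpr hpi
  have hD : (0:ℝ) < x ^ x * Real.exp (-x) * Real.sqrt (2*π*(x+1/6)) := by positivity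
  have hQ : (0:ℝ) < Real.Gamma (x+1) / (x ^ x * Real.exp (-x) * Real.sqrt (2*π*(x+1/6))) :=
    div_pos hΓ1 hD
  have hlogQ : Real.log (Real.Gamma (x+1) / (x ^ x * Real.exp (-x) * Real.sqrt (2*π*(x+1/6))))
      = gosF x - L := by
    rw [Real.log_div hΓ1.ne' hD.ne', Real.log_mul (by positivity) hsq.ne',
      Real.log_mul hxx.ne' (Real.exp_ne_zero _), Real.log_rpow hx0, Real.log_exp,
      Real.log_sqrt hpi.le, Real.log_mul (by positivity : (2*π:ℝ) ≠ 0) (by positivity : (x+1/6:ℝ) ≠ 0),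
      show (x+1/6:ℝ) = x*(1+(6*x)⁻¹) by field_simp,
      Real.log_mul hx0.ne' (by positivity), Real.Gamma_add_one hx0.ne',
      Real.log_mul hx0.ne' hΓ.ne']
    simp only [gosF, hL]
    ring
  have hQ_eq : Real.Gamma (x+1) / (x ^ x * Real.exp (-x) * Real.sqrt (2*π*(x+1/6)))
      = Real.exp (gosF x - L) := by
    rw [← hlogQ, Real.exp_log hQ]
  rw [hQ_eq]
  calc |Real.exp (gosF x - L) - 1| ≤ 2 * |gosF x - L| := Real.abs_exp_sub_one_le habs1
    _ ≤ 2 * (1/(2*x^2)) := by linarith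
    _ ≤ 1 / x^2 := by rw [mul_one_div]; rw [div_le_div_iff₀ (by positivity) (by positivity)]; nlinarith
end

section
/- As x → ∞, log Γ(x+1) − ((x + 1/2)·log x − x + (1/2)·log(2π)) − 1/(12x) = O(1/x³). -/
open Real Filter Asymptotics Finset Set

noncomputable def SC : ℝ := (1/2) * Real.log (2 * π)
noncomputable def fS (x : ℝ) : ℝ := Real.log (Real.Gamma (x+1)) - ((x + 1/2) * Real.log x - x + SC)
noncomputable def FS (y : ℝ) : ℝ := Real.log (Real.Gamma y) - ((y - 1/2) * Real.log y - y + SC)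
noncomputable def hS (t : ℝ) : ℝ := (t + 1/2) * (Real.log (t+1) - Real.log t) - 1

lemma FS_succ (x : ℝ) : FS (x+1) = fS x - hS x := by
  unfold FS fS hS; ring

lemma fS_sub {x : ℝ} (hx : 0 < x) : fS x - fS (x+1) = hS x := by
  have h1 : Real.Gamma (x+1+1) = (x+1) * Real.Gamma (x+1) :=
    Real.Gamma_add_one (by positivity)
  have h2 : Real.log ((x+1) * Real.Gamma (x+1)) = Real.log (x+1) + Real.log (Real.Gamma (x+1)) :=
    Real.log_mul (by positivity) (Real.Gamma_pos_of_pos (by positivity)).ne'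
  unfold fS hS
  rw [h1, h2]; ring


-- Taylor bound for log(t+1)-log t
lemma logE_bound {t : ℝ} (ht : 2 ≤ t) :
    |Real.log (t+1) - Real.log t - (1/t - 1/(2*t^2) + 1/(3*t^3) - 1/(4*t^4))| ≤ 2/t^5 := by
  have ht0 : (0:ℝ) < t := by linarith
  have hu : |(-(1/t) : ℝ)| < 1 := by
    rw [abs_neg, abs_of_pos (by positivity)]
    rw [div_lt_one ht0]; linarith
  have := Real.abs_log_sub_add_sum_range_le hu 4
  have hsum : (∑ i ∈ Finset.range 4, (-(1/t)) ^ (i + 1) / (i + 1))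
      = -(1/t - 1/(2*t^2) + 1/(3*t^3) - 1/(4*t^4)) := by
    simp [Finset.sum_range_succ]
    ring
  have hlog : Real.log (1 - (-(1/t))) = Real.log (t+1) - Real.log t := by
    rw [show (1 - (-(1/t))) = (t+1)/t by field_simp; ring, Real.log_div (by positivity) ht0.ne']
  rw [hsum, hlog] at this
  have habs : |(-(1/t))| = 1/t := by rw [abs_neg, abs_of_pos (by positivity)]
  rw [habs] at this
  have h1 : (1/t)^(4+1) / (1 - 1/t) ≤ 2/t^5 := by
    have h2 : (1:ℝ)/2 ≤ 1 - 1/t := by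
      have : 1/t ≤ 1/2 := by rw [div_le_div_iff₀ ht0 (by norm_num)]; linarith
      linarith
    have e : (1/t)^(4+1) = 1/t^5 := by rw [div_pow]; norm_num
    rw [e]
    calc (1/t^5) / (1 - 1/t) ≤ (1/t^5) / (1/2) :=
          div_le_div_of_nonneg_left (by positivity) (by norm_num) h2
      _ = 2/t^5 := by ring
  calc |Real.log (t+1) - Real.log t - (1/t - 1/(2*t^2) + 1/(3*t^3) - 1/(4*t^4))|
      = |(-(1/t - 1/(2*t^2) + 1/(3*t^3) - 1/(4*t^4))) + (Real.log (t+1) - Real.log t)| := by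
        congr 1; ring
    _ ≤ (1/t)^(4+1) / (1 - 1/t) := this
    _ ≤ 2/t^5 := h1


lemma hS_est {t : ℝ} (ht : 2 ≤ t) :
    |hS t - (1/(12*t) - 1/(12*(t+1)))| ≤ 4/t^4 := by
  have ht0 : (0:ℝ) < t := by linarith
  have ht1 : (0:ℝ) < t + 1 := by linarith
  have hE := logE_bound ht
  set P : ℝ := 1/t - 1/(2*t^2) + 1/(3*t^3) - 1/(4*t^4) with hP
  set E : ℝ := Real.log (t+1) - Real.log t - P with hEdef
  have hlg : Real.log (t+1) - Real.log t = E + P := by rw [hEdef]; ring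
  have hid : hS t - (1/(12*t) - 1/(12*(t+1)))
      = (t + 1/2) * E + (-(1/(8*t^4)) - 1/(12*t^3*(t+1))) := by
    unfold hS
    rw [hlg, hP]
    field_simp
    ring
  rw [hid]
  have h1 : |(t+1/2)*E| ≤ (t+1/2) * (2/t^5) := by
    rw [abs_mul, abs_of_pos (by linarith : (0:ℝ) < t + 1/2)]
    exact mul_le_mul_of_nonneg_left hE (by linarith)
  have h2 : |(-(1/(8*t^4)) - 1/(12*t^3*(t+1)))| = 1/(8*t^4) + 1/(12*t^3*(t+1)) := by
    rw [show (-(1/(8*t^4)) - 1/(12*t^3*(t+1))) = -(1/(8*t^4) + 1/(12*t^3*(t+1))) by ring,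
      abs_neg, abs_of_pos (by positivity)]
  have h3 : (t+1/2) * (2/t^5) + (1/(8*t^4) + 1/(12*t^3*(t+1))) ≤ 4/t^4 := by
    rw [← sub_nonneg]
    have he : 4/t^4 - ((t+1/2) * (2/t^5) + (1/(8*t^4) + 1/(12*t^3*(t+1))))
        = (4*t*(t+1) - (2*t+1)*(t+1) - t*(t+1)/8 - t^2/12) / (t^5*(t+1)) := by
      field_simp
      ring
    rw [he]
    apply div_nonneg _ (by positivity)
    nlinarith
  calc |(t + 1/2) * E + (-(1/(8*t^4)) - 1/(12*t^3*(t+1)))|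
      ≤ |(t+1/2)*E| + |(-(1/(8*t^4)) - 1/(12*t^3*(t+1)))| := abs_add_le _ _
    _ ≤ (t+1/2)*(2/t^5) + (1/(8*t^4) + 1/(12*t^3*(t+1))) := by rw [h2]; exact add_le_add h1 le_rfl
    _ ≤ 4/t^4 := h3

lemma hS_small {t : ℝ} (ht : 2 ≤ t) : |hS t| ≤ 1/t := by
  have ht0 : (0:ℝ) < t := by linarith
  have h1 := hS_est ht
  have hd0 : (0:ℝ) ≤ 1/(12*t) - 1/(12*(t+1)) := by
    rw [sub_nonneg]
    apply div_le_div_of_nonneg_left (by norm_num) (by positivity)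
    linarith
  have hd1 : 1/(12*t) - 1/(12*(t+1)) ≤ 1/(2*t) := by
    have : (0:ℝ) ≤ 1/(12*(t+1)) := by positivity
    have : 1/(12*t) ≤ 1/(2*t) := by
      apply div_le_div_of_nonneg_left (by norm_num) (by positivity); linarith
    linarith
  have h4 : 4/t^4 ≤ 1/(2*t) := by
    rw [div_le_div_iff₀ (by positivity) (by positivity)]
    have h8 : (8:ℝ) ≤ t^3 := by nlinarith [sq_nonneg t, sq_nonneg (t-2)]
    nlinarith [mul_le_mul_of_nonneg_left h8 ht0.le]
  calc |hS t| ≤ |hS t - (1/(12*t) - 1/(12*(t+1)))| + |1/(12*t) - 1/(12*(t+1))| := by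
        simpa using abs_add_le (hS t - (1/(12*t) - 1/(12*(t+1)))) (1/(12*t) - 1/(12*(t+1)))
    _ ≤ 4/t^4 + (1/(12*t) - 1/(12*(t+1))) := add_le_add h1 (le_of_eq (abs_of_nonneg hd0))
    _ ≤ 1/(2*t) + 1/(2*t) := add_le_add h4 hd1
    _ = 1/t := by ring

lemma tendsto_hS : Filter.Tendsto hS atTop (nhds 0) := by
  apply squeeze_zero_norm' (a := fun t : ℝ => 1/t)
  · filter_upwards [eventually_ge_atTop (2:ℝ)] with t ht
    simpa [Real.norm_eq_abs] using hS_small ht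
  · simpa [one_div] using tendsto_inv_atTop_zero (𝕜 := ℝ)


lemma tendsto_fS_nat : Filter.Tendsto (fun n : ℕ => fS n) atTop (nhds 0) := by
  have hpi : (0:ℝ) < √π := Real.sqrt_pos.2 Real.pi_pos
  have h0 : Filter.Tendsto (fun n : ℕ => Real.log (Stirling.stirlingSeq n) - Real.log (√π))
      atTop (nhds 0) := by
    have := (Stirling.tendsto_stirlingSeq_sqrt_pi.log hpi.ne').sub_const (Real.log (√π))
    simpa using this
  apply h0.congr'
  filter_upwards [eventually_ge_atTop 1] with n hn
  have hn0 : (0:ℝ) < (n:ℝ) := by exact_mod_cast hn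
  have hfact : Real.Gamma ((n:ℝ) + 1) = ((Nat.factorial n : ℕ) : ℝ) :=
    Real.Gamma_nat_eq_factorial n
  rw [Stirling.log_stirlingSeq_formula]
  unfold fS SC
  rw [hfact, Real.log_mul (by norm_num) hn0.ne', Real.log_div hn0.ne' (Real.exp_ne_zero 1),
    Real.log_exp, Real.log_mul (by norm_num) Real.pi_pos.ne',
    Real.log_sqrt Real.pi_pos.le]
  ring


-- log(1+u)-style bounds
lemma log_ratio_le {a b : ℝ} (ha : 0 < a) (hab : a ≤ b) :
    Real.log b - Real.log a ≤ (b - a) / a := by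
  have hb : 0 < b := lt_of_lt_of_le ha hab
  have := Real.log_le_sub_one_of_pos (show 0 < b/a by positivity)
  rw [Real.log_div hb.ne' ha.ne'] at this
  calc Real.log b - Real.log a ≤ b/a - 1 := this
    _ = (b-a)/a := by field_simp

lemma le_log_ratio {a b : ℝ} (ha : 0 < a) (hab : a ≤ b) :
    (b - a) / b ≤ Real.log b - Real.log a := by
  have hb : 0 < b := lt_of_lt_of_le ha hab
  have := Real.log_le_sub_one_of_pos (show 0 < a/b by positivity)
  rw [Real.log_div ha.ne' hb.ne'] at this
  have h2 : a/b - 1 = -((b-a)/b) := by field_simp; ring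
  rw [h2] at this
  linarith

set_option maxHeartbeats 1000000 in
lemma FS_bridge {m : ℕ} (hm : 2 ≤ m) {y : ℝ} (h1 : (m:ℝ) ≤ y) (h2 : y ≤ (m:ℝ) + 1) :
    |FS y - FS m| ≤ 5 / m := by
  set M : ℝ := (m:ℝ) with hM
  have hM2 : (2:ℝ) ≤ M := by rw [hM]; exact_mod_cast hm
  clear_value M
  have hM0 : (0:ℝ) < M := by linarith
  have hy0 : (0:ℝ) < y := by linarith
  set t : ℝ := y - M with hts
  clear_value t
  have ht0 : 0 ≤ t := by rw [hts]; linarith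
  have ht1 : t ≤ 1 := by rw [hts]; linarith
  have hGM : Real.Gamma (M+1) = M * Real.Gamma M := Real.Gamma_add_one hM0.ne'
  have hGM' : Real.Gamma M = (M-1) * Real.Gamma (M-1) := by
    have := Real.Gamma_add_one (show M - 1 ≠ 0 by intro h; nlinarith [hM2])
    rw [show M - 1 + 1 = M by ring] at this
    exact this
  have hGpos : ∀ {z : ℝ}, 0 < z → 0 < Real.Gamma z := fun hz => Real.Gamma_pos_of_pos hz
  -- upper bound via convexity
  have hcv := Real.convexOn_log_Gamma
  have hup : Real.log (Real.Gamma y) - Real.log (Real.Gamma M) ≤ t * Real.log M := by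
    have hc := hcv.2 (show M ∈ Ioi (0:ℝ) from hM0) (show M + 1 ∈ Ioi (0:ℝ) by simp; linarith)
      (show 0 ≤ 1 - t by linarith) ht0 (by ring)
    have he : (1-t) • M + t • (M+1) = y := by simp [smul_eq_mul, hts]; ring
    rw [he] at hc
    simp only [smul_eq_mul, Function.comp_apply] at hc
    have hlog : Real.log (Real.Gamma (M+1)) = Real.log M + Real.log (Real.Gamma M) := by
      rw [hGM, Real.log_mul hM0.ne' (hGpos hM0).ne']
    rw [hlog] at hc
    nlinarith [hc]
  -- lower bound via slope monotonicity
  have hlow : t * Real.log (M-1) ≤ Real.log (Real.Gamma y) - Real.log (Real.Gamma M) := by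
    rcases eq_or_lt_of_le ht0 with h | h
    · have hyM : y = M := by rw [hts] at h; linarith
      rw [hyM, ← h]; simp
    · have hMy : M < y := by rw [hts] at h; linarith
      have hs := hcv.slope_mono_adjacent (show M - 1 ∈ Ioi (0:ℝ) by simp; linarith)
        (show y ∈ Ioi (0:ℝ) from hy0) (show M - 1 < M by linarith) hMy
      simp only [Function.comp_apply] at hs
      have hlog : Real.log (Real.Gamma M) - Real.log (Real.Gamma (M-1)) = Real.log (M-1) := by
        rw [hGM', Real.log_mul (by linarith : M - 1 ≠ 0) (hGpos (by linarith : (0:ℝ) < M - 1)).ne']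
        ring
      rw [show M - (M-1) = (1:ℝ) by ring, div_one, hlog] at hs
      have hs2 := (le_div_iff₀ (show 0 < y - M by linarith)).mp hs
      calc t * Real.log (M-1) = Real.log (M-1) * (y - M) := by rw [hts]; ring
        _ ≤ _ := hs2
  -- the log expansion of the reference term
  set L : ℝ := Real.log y - Real.log M with hL
  clear_value L
  have hyMt : y = M + t := by rw [hts]; ring
  have hL1 : L ≤ t/M := by
    have h := log_ratio_le hM0 h1
    rw [← hts, ← hL] at h
    exact h
  have hL2 : t/M - t^2/M^2 ≤ L := by
    have h := le_log_ratio hM0 h1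
    rw [← hts, ← hL, hyMt] at h
    have hMt0 : (0:ℝ) < M + t := by linarith
    have key : t/(M+t) - (t/M - t^2/M^2) = t^3/(M^2*(M+t)) := by field_simp; ring
    have hkey : 0 ≤ t^3/(M^2*(M+t)) := by positivity
    linarith
  have hlogy : Real.log y = Real.log M + L := by rw [hL]; ring
  have hc0 : (0:ℝ) < M + t - 1/2 := by linarith
  have hup2 : (M+t-1/2)*L ≤ (M+t-1/2)*(t/M) := mul_le_mul_of_nonneg_left hL1 hc0.le
  have hlow2 : (M+t-1/2)*(t/M - t^2/M^2) ≤ (M+t-1/2)*L := mul_le_mul_of_nonneg_left hL2 hc0.le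
  have hR2 : t - (M+t-1/2)*(t/M) = (t/2 - t^2)/M := by field_simp; ring
  have hR1 : t - (M+t-1/2)*(t/M - t^2/M^2) = (t*M/2 + t^3 - t^2/2)/M^2 := by field_simp; ring
  have hR2b : -(3/M) ≤ (t/2 - t^2)/M := by
    rw [show -(3/M) = (-3)/M by ring, div_le_div_iff₀ hM0 hM0]
    have e : (-1:ℝ)*M ≤ (t/2-t^2)*M := mul_le_mul_of_nonneg_right (by nlinarith) hM0.le
    linarith
  have hR1b : (t*M/2 + t^3 - t^2/2)/M^2 ≤ 3/M := by
    rw [div_le_div_iff₀ (by positivity) hM0]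
    have e1 : t*M*M ≤ M*M := by nlinarith
    have e2 : t^3*M ≤ M := by nlinarith [pow_le_one₀ ht0 ht1 (n := 3)]
    have e3 : M ≤ M*M := by nlinarith
    have e4 : 0 ≤ t^2*M := by positivity
    nlinarith [e1, e2, e3, e4, sq_nonneg M]
  have hA : -(3/M) ≤ t - (M+t-1/2)*L ∧ t - (M+t-1/2)*L ≤ 3/M := by
    constructor
    · calc -(3/M) ≤ (t/2 - t^2)/M := hR2b
        _ = t - (M+t-1/2)*(t/M) := hR2.symm
        _ ≤ t - (M+t-1/2)*L := by linarith
    · calc t - (M+t-1/2)*L ≤ t - (M+t-1/2)*(t/M - t^2/M^2) := by linarith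
        _ = (t*M/2 + t^3 - t^2/2)/M^2 := hR1
        _ ≤ 3/M := hR1b
  -- difference between log M and log (M-1)
  have hM1 : (0:ℝ) < M - 1 := by linarith
  have hd1 : Real.log M - Real.log (M-1) ≤ 2/M := by
    have h := log_ratio_le hM1 (by linarith : M - 1 ≤ M)
    have h2 : (M - (M-1))/(M-1) ≤ 2/M := by
      rw [show M - (M-1) = (1:ℝ) by ring, div_le_div_iff₀ hM1 hM0]
      linarith
    linarith
  have hd0 : 0 ≤ Real.log M - Real.log (M-1) := by
    have := Real.log_le_log hM1 (by linarith : M - 1 ≤ M)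
    linarith
  -- assemble
  have hFS : FS y - FS M = (Real.log (Real.Gamma y) - Real.log (Real.Gamma M))
      - ((y-1/2)*Real.log y - (M-1/2)*Real.log M - t) := by
    unfold FS; rw [hyMt]; ring
  have hAeq : t*Real.log M - ((y-1/2)*Real.log y - (M-1/2)*Real.log M - t)
      = t - (M+t-1/2)*L := by
    rw [hlogy, hyMt]; ring
  have hBeq : t*Real.log (M-1) - ((y-1/2)*Real.log y - (M-1/2)*Real.log M - t)
      = (t - (M+t-1/2)*L) - t*(Real.log M - Real.log (M-1)) := by
    rw [hlogy, hyMt]; ring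
  have htd : t*(Real.log M - Real.log (M-1)) ≤ 2/M := by
    calc t*(Real.log M - Real.log (M-1)) ≤ 1*(Real.log M - Real.log (M-1)) :=
          mul_le_mul_of_nonneg_right ht1 hd0
      _ ≤ 2/M := by linarith
  have htd0 : 0 ≤ t*(Real.log M - Real.log (M-1)) := mul_nonneg ht0 hd0
  have h35 : (5:ℝ)/M = 3/M + 2/M := by ring
  have h35' : (0:ℝ) ≤ 2/M := by positivity
  rw [abs_le]
  constructor
  · linarith [hA.1, hA.2]
  · linarith [hA.1, hA.2]


lemma tendsto_FS_nat : Filter.Tendsto (fun n : ℕ => FS n) atTop (nhds 0) := by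
  have h1 : Filter.Tendsto (fun n : ℕ => FS ((n:ℝ) + 1)) atTop (nhds 0) := by
    have hh : Filter.Tendsto (fun n : ℕ => fS n - hS n) atTop (nhds 0) := by
      have := tendsto_fS_nat.sub (tendsto_hS.comp tendsto_natCast_atTop_atTop)
      simpa using this
    apply hh.congr
    intro n
    rw [FS_succ]
  have h2 : Filter.Tendsto (fun n : ℕ => FS ((n + 1 : ℕ) : ℝ)) atTop (nhds 0) := by
    apply h1.congr
    intro n
    push_cast
    ring_nf
  exact (tendsto_add_atTop_iff_nat 1).mp h2

lemma tendsto_FS : Filter.Tendsto FS atTop (nhds 0) := by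
  have hg : Filter.Tendsto (fun n : ℕ => |FS n| + 5/n) atTop (nhds 0) := by
    have h1 : Filter.Tendsto (fun n : ℕ => |FS n|) atTop (nhds 0) := by
      simpa using tendsto_FS_nat.abs
    have h2 : Filter.Tendsto (fun n : ℕ => (5:ℝ)/n) atTop (nhds 0) :=
      tendsto_const_div_atTop_nhds_zero_nat 5
    simpa using h1.add h2
  apply squeeze_zero_norm' (a := fun y : ℝ => |FS ⌊y⌋₊| + 5/(⌊y⌋₊ : ℝ))
  · filter_upwards [eventually_ge_atTop (2:ℝ)] with y hy
    set m : ℕ := ⌊y⌋₊ with hm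
    have hy0 : (0:ℝ) ≤ y := by linarith
    have hm2 : 2 ≤ m := by
      rw [hm]
      exact Nat.le_floor (by exact_mod_cast hy)
    have hmy : (m:ℝ) ≤ y := Nat.floor_le hy0
    have hym : y ≤ (m:ℝ) + 1 := (Nat.lt_floor_add_one y).le
    have hb := FS_bridge hm2 hmy hym
    have : |FS y| ≤ |FS m| + |FS y - FS m| := by
      have := abs_add_le (FS m) (FS y - FS m)
      simpa using this
    rw [Real.norm_eq_abs]
    linarith
  · exact hg.comp tendsto_nat_floor_atTop

lemma tendsto_fS : Filter.Tendsto fS atTop (nhds 0) := by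
  have h1 : Filter.Tendsto (fun x : ℝ => FS (x+1) + hS x) atTop (nhds 0) := by
    have hc : Filter.Tendsto (fun x : ℝ => x + 1) atTop atTop :=
      tendsto_atTop_add_const_right atTop 1 tendsto_id
    simpa using (tendsto_FS.comp hc).add tendsto_hS
  apply h1.congr
  intro x
  rw [FS_succ]
  ring

lemma fS_telescope {x : ℝ} (hx : 0 < x) (N : ℕ) :
    ∑ n ∈ Finset.range N, hS (x + n) = fS x - fS (x + N) := by
  induction N with
  | zero => simp
  | succ M ih =>
    rw [Finset.sum_range_succ, ih]
    have h := fS_sub (show (0:ℝ) < x + M by positivity)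
    have hc : x + ((M+1 : ℕ) : ℝ) = (x + M) + 1 := by push_cast; ring
    rw [hc]
    linarith

lemma inv_telescope (x : ℝ) (N : ℕ) :
    ∑ n ∈ Finset.range N, (1/(12*(x+n)) - 1/(12*((x+n)+1))) = 1/(12*x) - 1/(12*(x+N)) := by
  have h := Finset.sum_range_sub' (f := fun n : ℕ => 1/(12*(x+n))) N
  calc ∑ n ∈ Finset.range N, (1/(12*(x+n)) - 1/(12*((x+n)+1)))
      = ∑ n ∈ Finset.range N, (1/(12*(x+(n:ℕ))) - 1/(12*(x+((n+1:ℕ):ℝ)))) := by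
        apply Finset.sum_congr rfl
        intro n _
        push_cast
        ring_nf
    _ = 1/(12*(x+((0:ℕ):ℝ))) - 1/(12*(x+(N:ℝ))) := h
    _ = 1/(12*x) - 1/(12*(x+N)) := by norm_num

lemma step4 {a : ℝ} (ha : 0 < a) :
    4/(a+1)^4 ≤ (4/3)*(1/a^3 - 1/(a+1)^3) := by
  have e : (4/3)*(1/a^3 - 1/(a+1)^3) - 4/(a+1)^4 = (4*(6*a^2+4*a+1))/(3*a^3*(a+1)^4) := by
    field_simp
    ring
  have hpos : 0 ≤ (4*(6*a^2+4*a+1))/(3*a^3*(a+1)^4) := by positivity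
  linarith

lemma sum4 {x : ℝ} (hx : 2 ≤ x) (N : ℕ) :
    ∑ n ∈ Finset.range N, 4/(x+n)^4 ≤ 6/x^3 := by
  have hx0 : (0:ℝ) < x := by linarith
  cases N with
  | zero => simp; positivity
  | succ M =>
    rw [Finset.sum_range_succ']
    have h0 : 4/(x+(0:ℕ))^4 ≤ 2/x^3 := by
      push_cast
      rw [add_zero, div_le_div_iff₀ (by positivity) (by positivity)]
      nlinarith [pow_pos hx0 3]
    have hsum : ∑ i ∈ Finset.range M, 4/(x+(i+1:ℕ))^4
        ≤ ∑ i ∈ Finset.range M, (4/3)*(1/(x+i)^3 - 1/(x+(i+1:ℕ))^3) := by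
      apply Finset.sum_le_sum
      intro i _
      have hc : x + ((i+1 : ℕ) : ℝ) = (x + i) + 1 := by push_cast; ring
      rw [hc]
      exact step4 (by positivity)
    have htel : ∑ i ∈ Finset.range M, (4/3)*(1/(x+i)^3 - 1/(x+(i+1:ℕ))^3)
        = (4/3)*(1/(x+(0:ℕ))^3 - 1/(x+(M:ℕ))^3) := by
      rw [← Finset.mul_sum]
      congr 1
      exact Finset.sum_range_sub' (f := fun n : ℕ => 1/(x+n)^3) M
    have hb : (4/3)*(1/(x+(0:ℕ))^3 - 1/(x+(M:ℕ))^3) ≤ (4/3)*(1/x^3) := by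
      have h1 : (0:ℝ) ≤ 1/(x+(M:ℕ))^3 := by positivity
      have h2 : 1/(x+(0:ℕ))^3 = 1/x^3 := by norm_num
      nlinarith
    have hfin : (4/3)*(1/x^3) + 2/x^3 ≤ 6/x^3 := by
      rw [show (6:ℝ)/x^3 = (4/3)*(1/x^3) + 2/x^3 + (8/3)*(1/x^3) by ring]
      have : (0:ℝ) ≤ (8/3)*(1/x^3) := by positivity
      linarith
    calc (∑ i ∈ Finset.range M, 4/(x+(i+1:ℕ))^4) + 4/(x+(0:ℕ))^4
        ≤ (4/3)*(1/(x+(0:ℕ))^3 - 1/(x+(M:ℕ))^3) + 2/x^3 := by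
          rw [← htel]; exact add_le_add hsum h0
      _ ≤ (4/3)*(1/x^3) + 2/x^3 := by linarith
      _ ≤ 6/x^3 := hfin

lemma fS_bound {x : ℝ} (hx : 2 ≤ x) : |fS x - 1/(12*x)| ≤ 6/x^3 := by
  have hx0 : (0:ℝ) < x := by linarith
  have key : ∀ N : ℕ, |(fS x - fS (x+N)) - (1/(12*x) - 1/(12*(x+N)))| ≤ 6/x^3 := by
    intro N
    have he : (fS x - fS (x+N)) - (1/(12*x) - 1/(12*(x+N)))
        = ∑ n ∈ Finset.range N, (hS (x+n) - (1/(12*(x+n)) - 1/(12*((x+n)+1)))) := by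
      rw [Finset.sum_sub_distrib, fS_telescope hx0, inv_telescope]
    rw [he]
    calc |∑ n ∈ Finset.range N, (hS (x+n) - (1/(12*(x+n)) - 1/(12*((x+n)+1))))|
        ≤ ∑ n ∈ Finset.range N, |hS (x+n) - (1/(12*(x+n)) - 1/(12*((x+n)+1)))| :=
          Finset.abs_sum_le_sum_abs _ _
      _ ≤ ∑ n ∈ Finset.range N, 4/(x+n)^4 := by
          apply Finset.sum_le_sum
          intro n _
          exact hS_est (by have : (0:ℝ) ≤ n := Nat.cast_nonneg n; linarith)
      _ ≤ 6/x^3 := sum4 hx N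
  have hten : Filter.Tendsto
      (fun N : ℕ => |(fS x - fS (x+N)) - (1/(12*x) - 1/(12*(x+N)))|) atTop
      (nhds (|fS x - 1/(12*x)|)) := by
    apply Filter.Tendsto.abs
    have hxN : Filter.Tendsto (fun N : ℕ => x + (N:ℝ)) atTop atTop :=
      tendsto_atTop_add_const_left atTop x tendsto_natCast_atTop_atTop
    have h1 : Filter.Tendsto (fun N : ℕ => fS (x+N)) atTop (nhds 0) :=
      tendsto_fS.comp hxN
    have h2 : Filter.Tendsto (fun N : ℕ => 1/(12*(x+N))) atTop (nhds 0) := by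
      have h12 : Filter.Tendsto (fun N : ℕ => 12*(x+(N:ℝ))) atTop atTop :=
        Filter.Tendsto.const_mul_atTop (by norm_num) hxN
      exact Filter.Tendsto.congr (fun n => by simp [Function.comp, one_div])
        (tendsto_inv_atTop_zero.comp h12)
    have := ((tendsto_const_nhds (x := fS x)).sub h1).sub
      ((tendsto_const_nhds (x := 1/(12*x))).sub h2)
    simpa using this
  exact le_of_tendsto hten (Filter.Eventually.of_forall key)

theorem stirling_series_truncated :
    (fun x : ℝ => Real.log (Real.Gamma (x + 1)) -
        ((x + 1/2) * Real.log x - x + (1/2) * Real.log (2 * π)) - 1 / (12 * x))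
      =O[atTop] (fun x : ℝ => 1 / x ^ 3) := by
  rw [Asymptotics.isBigO_iff]
  refine ⟨6, ?_⟩
  filter_upwards [eventually_ge_atTop (2:ℝ)] with x hx
  have hx0 : (0:ℝ) < x := by linarith
  have hb := fS_bound hx
  have he : Real.log (Real.Gamma (x + 1)) -
      ((x + 1/2) * Real.log x - x + (1/2) * Real.log (2 * π)) - 1 / (12 * x)
      = fS x - 1/(12*x) := by
    unfold fS SC
    ring
  rw [Real.norm_eq_abs, Real.norm_eq_abs, he, abs_of_pos (show (0:ℝ) < 1/x^3 by positivity)]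
  calc |fS x - 1/(12*x)| ≤ 6/x^3 := hb
    _ = 6 * (1/x^3) := by ring
end

section
/- For all x > 0, the inequality (x + 1/2)·log x − x + (1/2)·log(2π) + 1/(12x) − 1/(360x³) < log Γ(x+1) < (x + 1/2)·log x − x + (1/2)·log(2π) + 1/(12x) holds. -/
open Real Filter Topology

lemma hasD_upper (t : ℝ) (h1 : -1 < t) (h2 : t < 1) :
    HasDerivAt (fun t : ℝ => 2*t + (2/3) * (t^3/(1-t^2)) - Real.log (1+t) + Real.log (1-t))
      (4*t^4/(3*(1-t^2)^2)) t := by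
  have ht1 : (1:ℝ) + t ≠ 0 := by nlinarith
  have ht2 : (1:ℝ) - t ≠ 0 := by nlinarith
  have htsq : (1:ℝ) - t^2 ≠ 0 := by nlinarith
  have hl1 : HasDerivAt (fun t : ℝ => Real.log (1+t)) (1/(1+t)) t := by
    simpa using ((hasDerivAt_id t).const_add 1).log ht1
  have hl2 : HasDerivAt (fun t : ℝ => Real.log (1-t)) (-(1/(1-t))) t := by
    have := ((hasDerivAt_id t).const_sub 1).log ht2
    simpa [neg_div] using this
  have hdiv : HasDerivAt (fun t : ℝ => t^3/(1-t^2))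
      ((3*t^2*(1-t^2) - t^3 * (-(2*t)))/(1-t^2)^2) t := by
    simpa [Pi.div_def] using (hasDerivAt_pow 3 t).div ((hasDerivAt_pow 2 t).const_sub 1) htsq
  have := (((hasDerivAt_id t).const_mul 2).add (hdiv.const_mul (2/3))).sub hl1 |>.add hl2
  refine this.congr_deriv ?_
  field_simp
  ring
lemma hasD_lower (t : ℝ) (h1 : -1 < t) (h2 : t < 1) :
    HasDerivAt (fun t : ℝ => Real.log (1+t) - Real.log (1-t)
        - 2*t - (2/3)*t^3 - (2/5)*t^5 - (2/7)*t^7)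
      (2*t^8/(1-t^2)) t := by
  have ht1 : (1:ℝ) + t ≠ 0 := by nlinarith
  have ht2 : (1:ℝ) - t ≠ 0 := by nlinarith
  have hl1 : HasDerivAt (fun t : ℝ => Real.log (1+t)) (1/(1+t)) t := by
    simpa using ((hasDerivAt_id t).const_add 1).log ht1
  have hl2 : HasDerivAt (fun t : ℝ => Real.log (1-t)) (-(1/(1-t))) t := by
    have := ((hasDerivAt_id t).const_sub 1).log ht2
    simpa [neg_div] using this
  have := ((((hl1.sub hl2).sub ((hasDerivAt_id t).const_mul 2)).sub
      ((hasDerivAt_pow 3 t).const_mul (2/3))).sub ((hasDerivAt_pow 5 t).const_mul (2/5))).sub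
      ((hasDerivAt_pow 7 t).const_mul (2/7))
  refine this.congr_deriv ?_
  have htsq : (1:ℝ) - t^2 ≠ 0 := by nlinarith
  field_simp
  ring



lemma log_ratio_lt {s : ℝ} (h0 : 0 < s) (h1 : s < 1) :
    Real.log (1+s) - Real.log (1-s) < 2*s + (2/3) * (s^3/(1-s^2)) := by
  set f : ℝ → ℝ := fun t => 2*t + (2/3) * (t^3/(1-t^2)) - Real.log (1+t) + Real.log (1-t) with hf
  have key : f 0 < f s := by
    have hmono : StrictMonoOn f (Set.Ico 0 1) := by
      apply strictMonoOn_of_deriv_pos (convex_Ico 0 1)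
      · intro t ht
        exact (hasD_upper t (by linarith [ht.1]) ht.2).continuousAt.continuousWithinAt
      · intro t ht
        rw [interior_Ico] at ht
        rw [(hasD_upper t (by linarith [ht.1]) ht.2).deriv]
        have h2 : (0:ℝ) < 1 - t^2 := by nlinarith [ht.1, ht.2]
        have h3 : t ≠ 0 := ne_of_gt ht.1
        positivity
    exact hmono ⟨le_refl 0, one_pos⟩ ⟨h0.le, h1⟩ h0
  have hf0 : f 0 = 0 := by simp [hf]
  rw [hf0] at key
  simp only [hf] at key
  linarith


lemma log_ratio_gt {s : ℝ} (h0 : 0 < s) (h1 : s < 1) :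
    2*s + (2/3)*s^3 + (2/5)*s^5 + (2/7)*s^7 < Real.log (1+s) - Real.log (1-s) := by
  set f : ℝ → ℝ := fun t => Real.log (1+t) - Real.log (1-t)
        - 2*t - (2/3)*t^3 - (2/5)*t^5 - (2/7)*t^7 with hf
  have key : f 0 < f s := by
    have hmono : StrictMonoOn f (Set.Ico 0 1) := by
      apply strictMonoOn_of_deriv_pos (convex_Ico 0 1)
      · intro t ht
        exact (hasD_lower t (by linarith [ht.1]) ht.2).continuousAt.continuousWithinAt
      · intro t ht
        rw [interior_Ico] at ht
        rw [(hasD_lower t (by linarith [ht.1]) ht.2).deriv]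
        have h2 : (0:ℝ) < 1 - t^2 := by nlinarith [ht.1, ht.2]
        have h3 : t ≠ 0 := ne_of_gt ht.1
        positivity
    exact hmono ⟨le_refl 0, one_pos⟩ ⟨h0.le, h1⟩ h0
  have hf0 : f 0 = 0 := by simp [hf]
  rw [hf0] at key
  simp only [hf] at key
  linarith



noncomputable def dd (y : ℝ) : ℝ := (y + 1/2) * Real.log (1 + 1/y) - 1

lemma log_split {y : ℝ} (hy : 0 < y) :
    Real.log (1 + 1/y) = Real.log (1 + 1/(2*y+1)) - Real.log (1 - 1/(2*y+1)) := by
  have hpos : (0:ℝ) < 1 - 1/(2*y+1) := by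
    have : 1/(2*y+1) < 1 := by rw [div_lt_one (by linarith)]; linarith
    linarith
  rw [← Real.log_div (by positivity) (ne_of_gt hpos)]
  congr 1
  field_simp
  ring

lemma dd_lt {y : ℝ} (hy : 0 < y) : dd y < 1/(12*y) - 1/(12*(y+1)) := by
  set s : ℝ := 1/(2*y+1) with hs
  have hs0 : 0 < s := by positivity
  have hs1 : s < 1 := by rw [hs, div_lt_one (by linarith)]; linarith
  have h := log_ratio_lt hs0 hs1
  have hsplit := log_split hy
  have hkey : dd y < (y + 1/2) * (2*s + (2/3) * (s^3/(1-s^2))) - 1 := by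
    rw [dd, hsplit]
    have : (0:ℝ) < y + 1/2 := by linarith
    nlinarith [h]
  have heq : (y + 1/2) * (2*s + (2/3) * (s^3/(1-s^2))) - 1 = 1/(12*y) - 1/(12*(y+1)) := by
    rw [hs]
    have h1 : (0:ℝ) < 2*y+1 := by linarith
    have hE : (1:ℝ) - (1/(2*y+1))^2 = 4*y*(y+1)/(2*y+1)^2 := by
      field_simp; ring
    rw [hE]
    field_simp
    ring
  rw [heq] at hkey; exact hkey

lemma dd_gt {y : ℝ} (hy : 0 < y) :
    (1/(12*y) - 1/(360*y^3)) - (1/(12*(y+1)) - 1/(360*(y+1)^3)) < dd y := by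
  set s : ℝ := 1/(2*y+1) with hs
  have hs0 : 0 < s := by positivity
  have hs1 : s < 1 := by rw [hs, div_lt_one (by linarith)]; linarith
  have h := log_ratio_gt hs0 hs1
  have hsplit := log_split hy
  have hkey : (y + 1/2) * (2*s + (2/3)*s^3 + (2/5)*s^5 + (2/7)*s^7) - 1 < dd y := by
    rw [dd, hsplit]
    have : (0:ℝ) < y + 1/2 := by linarith
    nlinarith [h]
  refine lt_of_le_of_lt ?_ hkey
  rw [hs, ← sub_nonneg]
  have h1 : (0:ℝ) < 2*y+1 := by linarith
  have h2 : (0:ℝ) < y + 1 := by linarith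
  have hident : (y + 1/2) * (2*(1/(2*y+1)) + (2/3)*(1/(2*y+1))^3 + (2/5)*(1/(2*y+1))^5
        + (2/7)*(1/(2*y+1))^7) - 1
      - (1/(12*y) - 1/(360*y^3) - (1/(12*(y+1)) - 1/(360*(y+1)^3)))
      = (80*(2*y+1)^6 - 51*(2*y+1)^4 + 72*(2*y+1)^2 - 45)
        / (20160 * y^3 * (y+1)^3 * (2*y+1)^6) := by
    field_simp
    ring
  rw [hident]
  have hw : (1:ℝ) ≤ (2*y+1)^2 := by nlinarith
  have hnum : (0:ℝ) ≤ 80*(2*y+1)^6 - 51*(2*y+1)^4 + 72*(2*y+1)^2 - 45 := by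
    nlinarith [sq_nonneg ((2*y+1)^2 - 1), sq_nonneg (2*y+1), hw,
      mul_le_mul_of_nonneg_left hw (show (0:ℝ) ≤ (2*y+1)^2 by positivity)]
  positivity


noncomputable def Fb (y : ℝ) : ℝ :=
  Real.log (Real.Gamma (y + 1)) - ((y + 1/2) * Real.log y - y + (1/2) * Real.log (2 * π))


lemma Fb_rec {y : ℝ} (hy : 0 < y) : Fb y = dd y + Fb (y + 1) := by
  have hG : Real.Gamma (y + 1 + 1) = (y+1) * Real.Gamma (y+1) := Real.Gamma_add_one (by linarith)
  have hGpos : 0 < Real.Gamma (y+1) := Real.Gamma_pos_of_pos (by linarith)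
  have hlog : Real.log (Real.Gamma (y+1+1)) = Real.log (y+1) + Real.log (Real.Gamma (y+1)) := by
    rw [hG, Real.log_mul (by positivity) (by positivity)]
  have hsplit : Real.log (1 + 1/y) = Real.log (y+1) - Real.log y := by
    rw [← Real.log_div (by positivity) (ne_of_gt hy)]
    congr 1
    field_simp
  unfold Fb dd
  rw [hlog, hsplit]
  ring

lemma Gamma_prod (x : ℝ) (hx : 0 < x) (n : ℕ) :
    Real.Gamma x * ∏ j ∈ Finset.range (n + 1), (x + j) = Real.Gamma (x + n + 1) := by
  induction n with
  | zero => simp [Real.Gamma_add_one (ne_of_gt hx), mul_comm]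
  | succ n ih =>
      rw [Finset.prod_range_succ, ← mul_assoc, ih]
      have h2 : Real.Gamma ((x + (n:ℝ) + 1) + 1) = (x + (n:ℝ) + 1) * Real.Gamma (x + (n:ℝ) + 1) :=
        Real.Gamma_add_one (by positivity)
      push_cast
      rw [show x + ((n:ℝ)+1) + 1 = (x + (n:ℝ) + 1) + 1 by ring, h2]
      ring

lemma tendsto_Fb (x : ℝ) (hx : 0 < x) :
    Tendsto (fun n : ℕ => Fb (x + n)) atTop (𝓝 0) := by
  have hGx : 0 < Real.Gamma x := Real.Gamma_pos_of_pos hx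
  -- Piece A
  have hA : Tendsto (fun n : ℕ => Real.log (Real.Gamma x / Real.GammaSeq x n)) atTop (𝓝 0) := by
    have h1 : Tendsto (fun n : ℕ => Real.Gamma x / Real.GammaSeq x n) atTop (𝓝 1) := by
      have := (tendsto_const_nhds (x := Real.Gamma x) (f := atTop (α := ℕ))).div
        (Real.GammaSeq_tendsto_Gamma x) (ne_of_gt hGx)
      simpa [div_self (ne_of_gt hGx), Pi.div_def] using this
    have := (Real.continuousAt_log one_ne_zero).tendsto.comp h1
    simpa [Function.comp_def] using this
  -- Piece B
  have hB : Tendsto (fun n : ℕ => Real.log (Stirling.stirlingSeq n / Real.sqrt π)) atTop (𝓝 0) := by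
    have hπ : (0:ℝ) < Real.sqrt π := Real.sqrt_pos.mpr pi_pos
    have h1 : Tendsto (fun n : ℕ => Stirling.stirlingSeq n / Real.sqrt π) atTop (𝓝 1) := by
      have := Stirling.tendsto_stirlingSeq_sqrt_pi.div
        (tendsto_const_nhds (x := Real.sqrt π)) (ne_of_gt hπ)
      simpa [div_self (ne_of_gt hπ), Pi.div_def] using this
    have := (Real.continuousAt_log one_ne_zero).tendsto.comp h1
    simpa [Function.comp_def] using this
  -- Piece C
  have hC : Tendsto (fun n : ℕ => x - (x + n + 1/2) * Real.log (1 + x/n)) atTop (𝓝 0) := by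
    have hmain : Tendsto (fun n : ℕ => (n:ℝ) * Real.log (1 + x/n)) atTop (𝓝 x) :=
      (Real.tendsto_mul_log_one_add_div_atTop x).comp tendsto_natCast_atTop_atTop
    have hratio : Tendsto (fun n : ℕ => 1 + (x + 1/2)/(n:ℝ)) atTop (𝓝 1) := by
      have := tendsto_const_div_atTop_nhds_zero_nat (x + 1/2)
      simpa using (tendsto_const_nhds (x := (1:ℝ))).add this
    have hprod : Tendsto (fun n : ℕ => (1 + (x + 1/2)/(n:ℝ)) * ((n:ℝ) * Real.log (1 + x/n)))
        atTop (𝓝 x) := by simpa using hratio.mul hmain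
    have heq : ∀ᶠ n : ℕ in atTop, x - (1 + (x + 1/2)/(n:ℝ)) * ((n:ℝ) * Real.log (1 + x/n))
        = x - (x + n + 1/2) * Real.log (1 + x/n) := by
      filter_upwards [eventually_ge_atTop 1] with n hn
      have hn0 : (n:ℝ) ≠ 0 := by positivity
      field_simp
      ring
    have := (tendsto_const_nhds (x := x)).sub hprod
    rw [show x - x = 0 by ring] at this
    exact Tendsto.congr' heq this
  -- identity for n ≥ 1
  have hident : ∀ᶠ n : ℕ in atTop, Real.log (Real.Gamma x / Real.GammaSeq x n)
      + Real.log (Stirling.stirlingSeq n / Real.sqrt π)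
      + (x - (x + n + 1/2) * Real.log (1 + x/n)) = Fb (x + n) := by
    filter_upwards [eventually_ge_atTop 1] with n hn
    have hn0 : (0:ℝ) < n := by exact_mod_cast hn
    have hfac : (0:ℝ) < (n.factorial : ℝ) := by exact_mod_cast n.factorial_pos
    have hprodpos : 0 < ∏ j ∈ Finset.range (n + 1), (x + (j:ℝ)) :=
      Finset.prod_pos fun j _ => by positivity
    have hGS : Real.GammaSeq x n = (n:ℝ) ^ x * n.factorial / ∏ j ∈ Finset.range (n + 1), (x + j) := rfl
    have hGamma_big : Real.Gamma (x + n + 1)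
        = Real.Gamma x * ∏ j ∈ Finset.range (n + 1), (x + (j:ℝ)) := (Gamma_prod x hx n).symm
    have hlogA : Real.log (Real.Gamma x / Real.GammaSeq x n)
        = Real.log (Real.Gamma (x + n + 1)) - x * Real.log n - Real.log (n.factorial) := by
      rw [hGS, hGamma_big]
      rw [div_div_eq_mul_div, Real.log_div (by positivity) (by positivity),
        Real.log_mul (by positivity) (by positivity),
        Real.log_mul (by positivity) (ne_of_gt hfac), Real.log_rpow hn0]
      ring
    have hlogB : Real.log (Stirling.stirlingSeq n / Real.sqrt π)
        = Real.log (n.factorial) - (1/2) * Real.log (2*n) - n * (Real.log n - 1)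
          - (1/2) * Real.log π := by
      have hpow : (0:ℝ) < ((n:ℝ)/Real.exp 1)^n := pow_pos (div_pos hn0 (Real.exp_pos 1)) n
      have hsq : (0:ℝ) < Real.sqrt (2*n) := Real.sqrt_pos.mpr (by positivity)
      rw [Stirling.stirlingSeq]
      rw [Real.log_div (ne_of_gt (div_pos hfac (mul_pos hsq hpow)))
          (ne_of_gt (Real.sqrt_pos.mpr pi_pos)),
        Real.log_div (ne_of_gt hfac) (ne_of_gt (mul_pos hsq hpow)),
        Real.log_mul (ne_of_gt hsq) (ne_of_gt hpow), Real.log_pow,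
        Real.log_div (ne_of_gt hn0) (ne_of_gt (Real.exp_pos 1)), Real.log_exp,
        Real.log_sqrt (by positivity), Real.log_sqrt pi_pos.le]
      ring
    have hlogC : Real.log (1 + x/n) = Real.log (x + n) - Real.log n := by
      rw [← Real.log_div (by positivity) (ne_of_gt hn0)]
      congr 1
      field_simp
      ring
    rw [hlogA, hlogB, hlogC]
    unfold Fb
    rw [show Real.log (2*π) = Real.log 2 + Real.log π by
      rw [Real.log_mul two_ne_zero (ne_of_gt pi_pos)],
      show Real.log (2*(n:ℝ)) = Real.log 2 + Real.log n by
      rw [Real.log_mul two_ne_zero (ne_of_gt hn0)],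
      show x + (n:ℝ) + 1 = x + n + 1 by ring]
    ring
  have := Tendsto.congr' hident (by simpa using (hA.add hB).add hC)
  simpa using this



theorem stirling_enveloping_bounds (x : ℝ) (hx : 0 < x) :
    (x + 1/2) * Real.log x - x + (1/2) * Real.log (2 * π) + 1 / (12 * x) - 1 / (360 * x ^ 3)
      < Real.log (Real.Gamma (x + 1)) ∧
    Real.log (Real.Gamma (x + 1)) <
      (x + 1/2) * Real.log x - x + (1/2) * Real.log (2 * π) + 1 / (12 * x) := by
  have hxn : ∀ n : ℕ, (0:ℝ) < x + n := fun n => by positivity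
  have haux : Tendsto (fun n : ℕ => x + (n:ℝ)) atTop atTop :=
    tendsto_atTop_add_const_left atTop x tendsto_natCast_atTop_atTop
  have hinv : Tendsto (fun n : ℕ => 1/(12*(x + (n:ℝ)))) atTop (𝓝 0) := by
    have h := (tendsto_inv_atTop_zero (𝕜 := ℝ)).comp (haux.const_mul_atTop (by norm_num : (0:ℝ) < 12))
    exact h.congr fun n => by simp [Function.comp, one_div]
  have hinv3 : Tendsto (fun n : ℕ => 1/(360*(x + (n:ℝ))^3)) atTop (𝓝 0) := by
    have hp : Tendsto (fun n : ℕ => (x + (n:ℝ))^3) atTop atTop :=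
      (tendsto_pow_atTop (by norm_num : (3:ℕ) ≠ 0)).comp haux
    have h := (tendsto_inv_atTop_zero (𝕜 := ℝ)).comp (hp.const_mul_atTop (by norm_num : (0:ℝ) < 360))
    exact h.congr fun n => by simp [Function.comp, one_div]
  constructor
  · -- lower bound
    set b : ℕ → ℝ := fun n => Fb (x + n) - (1/(12*(x+n)) - 1/(360*(x+n)^3)) with hb
    have hstep : ∀ n, b (n+1) < b n := by
      intro n
      have h1 := Fb_rec (hxn n)
      have h2 := dd_gt (hxn n)
      have hc : x + ((n:ℕ)+1 : ℕ) = (x + n) + 1 := by push_cast; ring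
      simp only [hb, hc]
      nlinarith [h1, h2]
    have hanti : Antitone b := antitone_nat_of_succ_le fun n => (hstep n).le
    have htend : Tendsto b atTop (𝓝 0) := by
      have h := (tendsto_Fb x hx).sub (hinv.sub hinv3)
      rw [show (0:ℝ) - (0-0) = 0 by ring] at h
      exact h
    have hb1 : 0 ≤ b 1 := hanti.le_of_tendsto htend 1
    have hb0 : b 1 < b 0 := hstep 0
    have : 0 < b 0 := lt_of_le_of_lt hb1 hb0
    simp only [hb, Nat.cast_zero, add_zero] at this
    unfold Fb at this
    linarith
  · -- upper bound
    set a : ℕ → ℝ := fun n => Fb (x + n) - 1/(12*(x+n)) with ha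
    have hstep : ∀ n, a n < a (n+1) := by
      intro n
      have h1 := Fb_rec (hxn n)
      have h2 := dd_lt (hxn n)
      have hc : x + ((n:ℕ)+1 : ℕ) = (x + n) + 1 := by push_cast; ring
      simp only [ha, hc]
      nlinarith [h1, h2]
    have hmono : Monotone a := monotone_nat_of_le_succ fun n => (hstep n).le
    have htend : Tendsto a atTop (𝓝 0) := by
      have h := (tendsto_Fb x hx).sub hinv
      rw [show (0:ℝ) - 0 = 0 by ring] at h
      exact h
    have ha1 : a 1 ≤ 0 := hmono.ge_of_tendsto htend 1
    have : a 0 < 0 := lt_of_lt_of_le (hstep 0) ha1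
    simp only [ha, Nat.cast_zero, add_zero] at this
    unfold Fb at this
    linarith
end

section
/- There exist constants C > 0 and N such that for all n ≥ N, |C(2n, n) · √(π(n + 1/4)) / 4^n − 1| ≤ C/n² ; i.e., expanding the central binomial coefficient in powers of 1/(n + 1/4), the coefficient of the first power vanishes. -/
open Real Filter Topology

noncomputable def aseq (n : ℕ) : ℝ :=
  (Nat.centralBinom n : ℝ)^2 * π * ((n : ℝ) + 1/4) / 16 ^ n

lemma W_eq (n : ℕ) :
    Real.Wallis.W n = 16 ^ n / ((Nat.centralBinom n : ℝ)^2 * (2 * n + 1)) := by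
  have h := Real.Wallis.W_eq_factorial_ratio n
  have hf := Nat.choose_mul_factorial_mul_factorial (show n ≤ 2 * n by omega)
  have h2 : 2 * n - n = n := by omega
  rw [h2] at hf
  have hc : ((2 * n).factorial : ℝ) = (Nat.centralBinom n : ℝ) * (n.factorial * n.factorial) := by
    rw [Nat.centralBinom, ← hf]; push_cast; ring
  rw [h, hc]
  have hfn : (n.factorial : ℝ) ≠ 0 := by positivity
  have hcn : (Nat.centralBinom n : ℝ) ≠ 0 := by
    exact_mod_cast Nat.centralBinom_pos n |>.ne'
  have h21 : (0:ℝ) < 2 * n + 1 := by positivity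
  rw [show (2:ℝ)^(4*n) = 16^n by rw [pow_mul]; norm_num]
  field_simp

lemma aseq_eq (n : ℕ) :
    aseq n = π / 2 / Real.Wallis.W n * (((n:ℝ) + 1/4) / ((n:ℝ) + 1/2)) := by
  have hW := Real.Wallis.W_pos n
  have hcn : (Nat.centralBinom n : ℝ) ≠ 0 := by
    exact_mod_cast Nat.centralBinom_pos n |>.ne'
  have h16 : (0:ℝ) < 16 ^ n := by positivity
  have h21 : (0:ℝ) < 2 * n + 1 := by positivity
  rw [aseq, W_eq]
  field_simp

lemma aseq_tendsto : Tendsto aseq atTop (𝓝 1) := by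
  have h1 : Tendsto (fun n : ℕ => π / 2 / Real.Wallis.W n) atTop (𝓝 1) := by
    have hW := Real.Wallis.tendsto_W_nhds_pi_div_two
    have h := Tendsto.div (tendsto_const_nhds :
        Tendsto (fun _ : ℕ => π / 2) atTop (𝓝 (π / 2))) hW (by positivity)
    simpa [div_self (ne_of_gt Real.pi_div_two_pos), Pi.div_def] using h
  have h2 : Tendsto (fun n : ℕ => ((n:ℝ) + 1/4) / ((n:ℝ) + 1/2)) atTop (𝓝 1) := by
    have ha : Tendsto (fun n : ℕ => (n:ℝ) + 1/2) atTop atTop :=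
      tendsto_natCast_atTop_atTop.atTop_add tendsto_const_nhds
    have hb : Tendsto (fun n : ℕ => ((n:ℝ) + 1/2)⁻¹) atTop (𝓝 0) := ha.inv_tendsto_atTop
    have : Tendsto (fun n : ℕ => 1 - (1/4) * ((n:ℝ) + 1/2)⁻¹) atTop (𝓝 1) := by
      simpa using (tendsto_const_nhds.sub (hb.const_mul (1/4:ℝ)))
    refine this.congr' ?_
    filter_upwards [eventually_ge_atTop 0] with n _
    have hne : ((n:ℝ) + 1/2) ≠ 0 := by positivity
    field_simp
    ring
  have h := h1.mul h2
  rw [show (1:ℝ) = 1 * 1 by norm_num]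
  exact h.congr fun n => (aseq_eq n).symm

lemma aseq_pos (n : ℕ) : 0 < aseq n := by
  have h : (0:ℝ) < (Nat.centralBinom n : ℝ) := by exact_mod_cast Nat.centralBinom_pos n
  unfold aseq
  positivity

lemma aseq_succ (n : ℕ) :
    aseq (n+1) * (16*(n:ℝ)^3 + 36*(n:ℝ)^2 + 24*(n:ℝ) + 4)
      = aseq n * (16*(n:ℝ)^3 + 36*(n:ℝ)^2 + 24*(n:ℝ) + 5) := by
  have hr : ((n:ℝ)+1) * (Nat.centralBinom (n+1) : ℝ)
      = 2 * (2*(n:ℝ)+1) * (Nat.centralBinom n : ℝ) := by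
    exact_mod_cast Nat.succ_mul_centralBinom_succ n
  have hn1 : ((n:ℝ)+1) ≠ 0 := by positivity
  have hc1 : (Nat.centralBinom (n+1) : ℝ)
      = 2 * (2*(n:ℝ)+1) * (Nat.centralBinom n : ℝ) / ((n:ℝ)+1) := by
    field_simp
    linarith [hr]
  unfold aseq
  rw [hc1]
  push_cast
  have h16 : (0:ℝ) < 16 ^ n := by positivity
  field_simp
  ring

lemma aseq_mono : Monotone aseq := by
  apply monotone_nat_of_le_succ
  intro n
  have hD : (0:ℝ) < 16*(n:ℝ)^3 + 36*(n:ℝ)^2 + 24*(n:ℝ) + 4 := by positivity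
  have h := aseq_succ n
  have hp := aseq_pos n
  nlinarith [h, hp, hD]

lemma aseq_le_one (n : ℕ) : aseq n ≤ 1 := aseq_mono.ge_of_tendsto aseq_tendsto n

noncomputable def bseq (n : ℕ) : ℝ := aseq n * (1 + 1/(n:ℝ)^2)

lemma bseq_tendsto : Tendsto bseq atTop (𝓝 1) := by
  have h0 : Tendsto (fun n : ℕ => 1/(n:ℝ)^2) atTop (𝓝 0) := by
    have h := (tendsto_one_div_atTop_nhds_zero_nat : Tendsto (fun n : ℕ => 1 / (n:ℝ)) atTop (𝓝 0)).mul
      (tendsto_one_div_atTop_nhds_zero_nat : Tendsto (fun n : ℕ => 1 / (n:ℝ)) atTop (𝓝 0))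
    rw [mul_zero] at h
    refine h.congr fun n => ?_
    rw [div_mul_div_comm, one_mul, sq]
  have h2 : Tendsto (fun n : ℕ => 1 + 1/(n:ℝ)^2) atTop (𝓝 1) := by
    simpa using tendsto_const_nhds.add h0
  have h3 := aseq_tendsto.mul h2
  rw [mul_one] at h3
  exact h3

lemma bseq_antitone {n : ℕ} (hn : 1 ≤ n) : bseq (n+1) ≤ bseq n := by
  set x : ℝ := (n : ℝ) with hxdef
  have hx : (1:ℝ) ≤ x := by rw [hxdef]; exact_mod_cast hn
  have hxpos : (0:ℝ) < x := by linarith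
  have hD : (0:ℝ) < 16*x^3 + 36*x^2 + 24*x + 4 := by positivity
  have h := aseq_succ n
  have hp := (aseq_pos n).le
  have hP : (0:ℝ) < x^2*(x+1)^2 := by positivity
  have key : aseq (n+1) * (((x+1)^2+1)*x^2) ≤ aseq n * ((x^2+1)*(x+1)^2) := by
    have h2 : aseq (n+1) * (16*x^3 + 36*x^2 + 24*x + 4) * ((((x+1)^2+1)*x^2))
        = aseq n * (16*x^3 + 36*x^2 + 24*x + 5) * ((((x+1)^2+1)*x^2)) := by
      rw [h]
    have h4 : 0 ≤ aseq n * ((16*x^3 + 36*x^2 + 24*x + 4)*((x^2+1)*(x+1)^2)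
        - (16*x^3 + 36*x^2 + 24*x + 5)*(((x+1)^2+1)*x^2)) := by
      apply mul_nonneg hp
      nlinarith [hx, sq_nonneg x, pow_pos hxpos 3, pow_pos hxpos 4]
    have h5 : aseq (n+1) * (((x+1)^2+1)*x^2) * (16*x^3 + 36*x^2 + 24*x + 4)
        ≤ aseq n * ((x^2+1)*(x+1)^2) * (16*x^3 + 36*x^2 + 24*x + 4) := by
      nlinarith [h2, h4]
    exact le_of_mul_le_mul_right h5 hD
  unfold bseq
  push_cast
  rw [← hxdef]
  have e1 : aseq (n+1) * (1 + 1/(x+1)^2)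
      = (aseq (n+1) * (((x+1)^2+1)*x^2)) / (x^2*(x+1)^2) := by
    field_simp
  have e2 : aseq n * (1 + 1/x^2)
      = (aseq n * ((x^2+1)*(x+1)^2)) / (x^2*(x+1)^2) := by
    field_simp
  rw [e1, e2]
  gcongr

lemma bseq_le {n : ℕ} (hn : 1 ≤ n) : ∀ m, n ≤ m → bseq m ≤ bseq n := by
  intro m hm
  induction m, hm using Nat.le_induction with
  | base => exact le_rfl
  | succ m hm ih => exact le_trans (bseq_antitone (le_trans hn hm)) ih

lemma bseq_ge_one {n : ℕ} (hn : 1 ≤ n) : 1 ≤ bseq n := by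
  apply le_of_tendsto bseq_tendsto
  filter_upwards [eventually_ge_atTop n] with m hm
  exact bseq_le hn m hm

theorem central_binom_quarter_shift :
    ∃ C > (0:ℝ), ∃ N : ℕ, ∀ n : ℕ, n ≥ N →
      |(Nat.choose (2 * n) n : ℝ) * Real.sqrt (π * ((n : ℝ) + 1/4)) / 4 ^ n - 1|
        ≤ C / (n : ℝ) ^ 2 := by
  refine ⟨1, one_pos, 1, fun n hn => ?_⟩
  have hx : (1:ℝ) ≤ (n:ℝ) := by exact_mod_cast hn
  have hxpos : (0:ℝ) < (n:ℝ) := by linarith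
  have ha := aseq_le_one n
  have hb := bseq_ge_one hn
  have hp := aseq_pos n
  have hx2 : (0:ℝ) < (n:ℝ)^2 := by positivity
  have hlow : 1 - 1/(n:ℝ)^2 ≤ aseq n := by
    unfold bseq at hb
    have h5 : 0 ≤ (1 - aseq n) * (1/(n:ℝ)^2) :=
      mul_nonneg (by linarith) (by positivity)
    nlinarith [hb, h5]
  have hc0 : (0:ℝ) ≤ (Nat.centralBinom n : ℝ) := Nat.cast_nonneg _
  have h4 : (0:ℝ) < (4:ℝ)^n := by positivity
  have hrepr : aseq n = ((Nat.centralBinom n : ℝ)/4^n)^2 * (π * ((n:ℝ) + 1/4)) := by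
    unfold aseq
    have h16 : (16:ℝ)^n = 4^n * 4^n := by rw [← mul_pow]; norm_num
    rw [h16]
    field_simp
  have hsqrt : Real.sqrt (aseq n)
      = (Nat.centralBinom n : ℝ) * Real.sqrt (π * ((n:ℝ) + 1/4)) / 4^n := by
    rw [hrepr, Real.sqrt_mul (sq_nonneg _), Real.sqrt_sq (by positivity)]
    ring
  have hch : ((Nat.choose (2*n) n : ℕ) : ℝ) = (Nat.centralBinom n : ℝ) := by
    rw [Nat.centralBinom]
  rw [hch, ← hsqrt]
  have hs1 : Real.sqrt (aseq n) ≤ 1 := by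
    rw [show (1:ℝ) = Real.sqrt 1 by simp]
    exact Real.sqrt_le_sqrt ha
  have hs2 : aseq n ≤ Real.sqrt (aseq n) := by
    calc aseq n = Real.sqrt ((aseq n)^2) := (Real.sqrt_sq hp.le).symm
    _ ≤ Real.sqrt (aseq n) := Real.sqrt_le_sqrt (by nlinarith)
  rw [abs_of_nonpos (by linarith)]
  linarith [hlow, hs2]
end

section
/- There exist constants C > 0 and X such that for all x ≥ X, |Γ(x+1)/(x^x e^{-x} √(2π(x+1/6))) − (1 + 1/(144(x+1/4)²) − 1/(12960(x+1/4)³))| ≤ C/x⁴. -/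
set_option maxHeartbeats 4000000

open Real Filter Finset Topology

noncomputable def stirC : ℝ := Real.log (Real.sqrt (2 * Real.pi))

noncomputable def sAux (t : ℝ) : ℝ := (t - 1/2) * Real.log t - t + stirC

noncomputable def fAux (t : ℝ) : ℝ := Real.log (Real.Gamma t) - sAux t

noncomputable def aAux (t : ℝ) : ℝ := 1/(12*t) - 1/(360*t^3)

noncomputable def gAux (t : ℝ) : ℝ := (t + 1/2) * Real.log (1 + 1/t) - 1


lemma gAux_est {t : ℝ} (ht : 2 ≤ t) :
    |gAux t - (aAux t - aAux (t+1))| ≤ 6 / t^6 := by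
  have ht0 : (0:ℝ) < t := by linarith
  have htne : t ≠ 0 := ht0.ne'
  have ht1 : (0:ℝ) < t + 1 := by linarith
  have ht1ne : t + 1 ≠ 0 := ht1.ne'
  have hx : |(-(1/t) : ℝ)| < 1 := by
    rw [abs_neg, abs_of_pos (by positivity)]
    rw [div_lt_one ht0]; linarith
  have hlog := Real.abs_log_sub_add_sum_range_le hx 6
  have habs : |(-(1/t) : ℝ)| = 1/t := by rw [abs_neg, abs_of_pos (by positivity)]
  rw [habs] at hlog
  have hsum : (∑ i ∈ range 6, (-(1/t)) ^ (i + 1) / (i + 1) : ℝ)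
      = -(1/t - 1/(2*t^2) + 1/(3*t^3) - 1/(4*t^4) + 1/(5*t^5) - 1/(6*t^6)) := by
    simp [Finset.sum_range_succ]
    field_simp
    ring
  have h1m : (1 : ℝ) - (-(1/t)) = 1 + 1/t := by ring
  rw [hsum, h1m] at hlog
  have hbound : (1/t)^(6+1) / (1 - 1/t) ≤ 2/t^7 := by
    have h2 : (1:ℝ)/t ≤ 1/2 := by
      rw [div_le_div_iff₀ ht0 (by norm_num : (0:ℝ) < 2)]; linarith
    have h3 : (1:ℝ)/2 ≤ 1 - 1/t := by linarith
    have h4 : ((1:ℝ)/t)^(6+1) = 1/t^7 := by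
      rw [div_pow]; norm_num
    calc (1/t)^(6+1) / (1 - 1/t) ≤ (1/t)^(6+1) / (1/2) :=
          div_le_div_of_nonneg_left (by positivity) (by norm_num) h3
      _ = 2/t^7 := by rw [h4]; field_simp
  have hlog2 : |Real.log (1 + 1/t)
      - (1/t - 1/(2*t^2) + 1/(3*t^3) - 1/(4*t^4) + 1/(5*t^5) - 1/(6*t^6))| ≤ 2/t^7 := by
    have he : Real.log (1 + 1/t)
        - (1/t - 1/(2*t^2) + 1/(3*t^3) - 1/(4*t^4) + 1/(5*t^5) - 1/(6*t^6))
        = -(1/t - 1/(2*t^2) + 1/(3*t^3) - 1/(4*t^4) + 1/(5*t^5) - 1/(6*t^6))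
          + Real.log (1 + 1/t) := by ring
    rw [he]
    exact hlog.trans hbound
  have hR : (t+1/2)*(1/t - 1/(2*t^2) + 1/(3*t^3) - 1/(4*t^4) + 1/(5*t^5) - 1/(6*t^6))
        - 1 - (aAux t - aAux (t+1))
      = -((1/12 + 2/5*t + 83/120*t^2 + 37/72*t^3 + 5/36*t^4)/(t^6*(t+1)^4)) := by
    unfold aAux
    field_simp
    ring
  have hsplit : gAux t - (aAux t - aAux (t+1))
      = ((t+1/2)*(1/t - 1/(2*t^2) + 1/(3*t^3) - 1/(4*t^4) + 1/(5*t^5) - 1/(6*t^6))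
          - 1 - (aAux t - aAux (t+1)))
        + (t+1/2)*(Real.log (1 + 1/t)
          - (1/t - 1/(2*t^2) + 1/(3*t^3) - 1/(4*t^4) + 1/(5*t^5) - 1/(6*t^6))) := by
    unfold gAux; ring
  rw [hsplit]
  refine (abs_add_le _ _).trans ?_
  have hRb : |(t+1/2)*(1/t - 1/(2*t^2) + 1/(3*t^3) - 1/(4*t^4) + 1/(5*t^5) - 1/(6*t^6))
        - 1 - (aAux t - aAux (t+1))| ≤ 2/t^6 := by
    rw [hR, abs_neg, abs_of_nonneg (by positivity)]
    have c8 : (8:ℝ) ≤ t^3 := by nlinarith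
    have p1 : 8*t ≤ t^4 := by nlinarith [mul_le_mul_of_nonneg_left c8 ht0.le]
    have p2 : 4*t^2 ≤ t^4 := by nlinarith
    have p3 : 2*t^3 ≤ t^4 := by nlinarith
    have p4 : (16:ℝ) ≤ t^4 := by nlinarith
    have hnum : 1/12 + 2/5*t + 83/120*t^2 + 37/72*t^3 + 5/36*t^4 ≤ 2*t^4 := by linarith
    have hden : t^6*t^4 ≤ t^6*(t+1)^4 := by
      have h5 : t^4 ≤ (t+1)^4 := by nlinarith
      nlinarith [pow_pos ht0 6]
    calc (1/12 + 2/5*t + 83/120*t^2 + 37/72*t^3 + 5/36*t^4)/(t^6*(t+1)^4)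
        ≤ (2*t^4)/(t^6*t^4) :=
          div_le_div₀ (by positivity) hnum (by positivity) hden
      _ = 2/t^6 := by field_simp
  have hEb : |(t+1/2)*(Real.log (1 + 1/t)
        - (1/t - 1/(2*t^2) + 1/(3*t^3) - 1/(4*t^4) + 1/(5*t^5) - 1/(6*t^6)))| ≤ 4/t^6 := by
    rw [abs_mul, abs_of_pos (by linarith : (0:ℝ) < t + 1/2)]
    have := mul_le_mul (by linarith : t + 1/2 ≤ 2*t) hlog2 (abs_nonneg _)
      (by linarith : (0:ℝ) ≤ 2*t)
    refine this.trans (le_of_eq ?_)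
    field_simp; ring
  calc _ ≤ 2/t^6 + 4/t^6 := add_le_add hRb hEb
    _ = 6/t^6 := by ring

lemma fAux_rec {t : ℝ} (ht : 0 < t) : fAux t - fAux (t + 1) = gAux t := by
  unfold fAux sAux gAux
  rw [Real.Gamma_add_one ht.ne', Real.log_mul ht.ne' (Real.Gamma_pos_of_pos ht).ne']
  have h1 : (1:ℝ) + 1/t = (t+1)/t := by field_simp
  rw [h1, Real.log_div (by positivity) ht.ne']
  ring

lemma key_ab {a : ℝ} (ha : 1 ≤ a) : 1/(a+1)^6 ≤ (1/a^5 - 1/(a+1)^5)/5 := by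
  have h : (0:ℝ) < a := by linarith
  have h1 : (0:ℝ) < a + 1 := by linarith
  have e : (1/a^5 - 1/(a+1)^5)/5 - 1/(a+1)^6
      = (15*a^4+20*a^3+15*a^2+6*a+1)/(5*a^5*(a+1)^6) := by
    field_simp
    ring
  nlinarith [div_nonneg (by positivity : (0:ℝ) ≤ 15*a^4+20*a^3+15*a^2+6*a+1)
    (by positivity : (0:ℝ) ≤ 5*a^5*(a+1)^6), e]

lemma sum_inv_pow6 {x : ℝ} (hx : 2 ≤ x) (N : ℕ) :
    ∑ n ∈ range N, 1/(x + n)^6 ≤ 1/x^6 + 1/(5*x^5) := by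
  have hx0 : (0:ℝ) < x := by linarith
  rcases Nat.eq_zero_or_pos N with h | h
  · subst h; simp; positivity
  have main : ∀ M : ℕ, 1 ≤ M →
      ∑ n ∈ range M, 1/(x + n)^6 ≤ 1/x^6 + (1/x^5 - 1/(x + (M:ℝ) - 1)^5)/5 := by
    intro M hM
    induction M, hM using Nat.le_induction with
    | base => simp
    | succ M hM ih =>
      rw [Finset.sum_range_succ]
      have hM1 : (1:ℝ) ≤ x + (M:ℝ) - 1 := by
        have : (1:ℝ) ≤ (M:ℝ) := by exact_mod_cast hM
        linarith
      have hkey := key_ab hM1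
      have he : x + (M:ℝ) - 1 + 1 = x + (M:ℝ) := by ring
      rw [he] at hkey
      have hcast : x + ((M:ℕ):ℝ) = x + (M:ℝ) := by norm_num
      have hcast2 : x + ((M+1:ℕ):ℝ) - 1 = x + (M:ℝ) := by push_cast; ring
      rw [hcast, hcast2]
      linarith
  refine (main N h).trans ?_
  have hN1 : (0:ℝ) < x + (N:ℝ) - 1 := by
    have : (1:ℝ) ≤ (N:ℝ) := by exact_mod_cast h
    linarith
  have : 0 ≤ 1/(x + (N:ℝ) - 1)^5 := by positivity
  have heq : 1/(5*x^5) = (1/x^5)/5 := by ring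
  have h5 : (1/x^5 - 1/(x + (N:ℝ) - 1)^5)/5 ≤ 1/(5*x^5) := by
    rw [heq]; linarith
  linarith

lemma fAux_teles {x : ℝ} (hx : 0 < x) (N : ℕ) :
    fAux x - fAux (x + N) = ∑ n ∈ range N, gAux (x + n) := by
  have h := Finset.sum_range_sub' (fun n : ℕ => fAux (x + n)) N
  have h2 : ∑ n ∈ range N, (fAux (x + n) - fAux (x + (n+1:ℕ))) = ∑ n ∈ range N, gAux (x + n) := by
    refine Finset.sum_congr rfl fun n _ => ?_
    have hc : x + ((n+1:ℕ):ℝ) = (x + n) + 1 := by push_cast; ring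
    rw [hc]
    exact fAux_rec (by positivity)
  rw [← h2, h]
  norm_num

lemma aAux_teles (x : ℝ) (N : ℕ) :
    aAux x - aAux (x + N) = ∑ n ∈ range N, (aAux (x + n) - aAux (x + n + 1)) := by
  have h := Finset.sum_range_sub' (fun n : ℕ => aAux (x + n)) N
  have h2 : ∑ n ∈ range N, (aAux (x + n) - aAux (x + (n+1:ℕ)))
      = ∑ n ∈ range N, (aAux (x + n) - aAux (x + n + 1)) := by
    refine Finset.sum_congr rfl fun n _ => ?_
    have hc : x + ((n+1:ℕ):ℝ) = (x + n) + 1 := by push_cast; ring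
    rw [hc]
  rw [← h2, h]
  norm_num

lemma stirC_eq : stirC = 1/2 * Real.log 2 + 1/2 * Real.log π := by
  unfold stirC
  rw [Real.log_sqrt (by positivity), Real.log_mul (by norm_num) Real.pi_pos.ne']
  ring

lemma mul_log_tendsto (θ b : ℝ) :
    Tendsto (fun y : ℝ => (y + b) * Real.log (1 + θ/y)) atTop (𝓝 θ) := by
  have h1 := Real.tendsto_mul_log_one_add_div_atTop θ
  have ha : Tendsto (fun y : ℝ => 1 + θ/y) atTop (𝓝 1) := by
    have := (tendsto_const_nhds : Tendsto (fun _ : ℝ => θ) atTop (𝓝 θ)).div_atTop tendsto_id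
    simpa using tendsto_const_nhds.add this
  have h2 : Tendsto (fun y : ℝ => Real.log (1 + θ/y)) atTop (𝓝 0) := by
    have := ha.log one_ne_zero
    simpa using this
  have h3 := h1.add (h2.const_mul b)
  have h4 : θ + b * 0 = θ := by ring
  rw [h4] at h3
  refine h3.congr fun y => by ring

lemma log_shift_tendsto : Tendsto (fun y : ℝ => Real.log (1 + 1/(y-1))) atTop (𝓝 0) := by
  have hs : Tendsto (fun y : ℝ => y - 1) atTop atTop := tendsto_atTop_add_const_right _ _ tendsto_id
  have ha : Tendsto (fun y : ℝ => 1 + 1/(y-1)) atTop (𝓝 1) := by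
    have := (tendsto_const_nhds : Tendsto (fun _ : ℝ => (1:ℝ)) atTop (𝓝 1)).div_atTop hs
    simpa using tendsto_const_nhds.add this
  simpa using ha.log one_ne_zero

lemma fAux_nat_tendsto : Tendsto (fun n : ℕ => fAux (n + 1)) atTop (𝓝 0) := by
  have hπ : (0:ℝ) < Real.sqrt π := Real.sqrt_pos.mpr Real.pi_pos
  have hlog := Stirling.tendsto_stirlingSeq_sqrt_pi.log hπ.ne'
  have hL2 : Tendsto (fun n : ℕ => ((n:ℝ) + 1/2) * Real.log (1 + 1/(n:ℝ))) atTop (𝓝 1) := by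
    exact (mul_log_tendsto 1 (1/2)).comp tendsto_natCast_atTop_atTop
  have hcomb := (hlog.sub (tendsto_const_nhds (x := Real.log (Real.sqrt π)))).add
    ((tendsto_const_nhds (x := (1:ℝ))).sub hL2)
  norm_num at hcomb
  refine hcomb.congr' ?_
  filter_upwards [eventually_ge_atTop 1] with n hn
  have hn0 : (0:ℝ) < n := by exact_mod_cast hn
  have hn1 : (0:ℝ) < (n:ℝ) + 1 := by linarith
  rw [Stirling.log_stirlingSeq_formula]
  unfold fAux sAux
  rw [Real.Gamma_nat_eq_factorial]
  rw [Real.log_mul (by norm_num) hn0.ne', Real.log_div hn0.ne' (Real.exp_ne_zero 1),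
    Real.log_exp]
  have h1p : (1:ℝ) + ((n:ℝ))⁻¹ = ((n:ℝ)+1)/(n:ℝ) := by field_simp
  rw [h1p, Real.log_div hn1.ne' hn0.ne', Real.log_sqrt Real.pi_pos.le, stirC_eq]
  ring

lemma fAux_tendsto {x : ℝ} (hx : 2 ≤ x) :
    Tendsto (fun N : ℕ => fAux (x + N)) atTop (𝓝 0) := by
  have hx0 : (0:ℝ) < x := by linarith
  have hm1 : 1 < ⌈x⌉₊ := by
    rw [Nat.lt_ceil]; norm_num; linarith
  set m : ℕ := ⌈x⌉₊ - 1 with hm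
  have hm1' : 1 ≤ m := by omega
  have hmr : (m:ℝ) = (⌈x⌉₊:ℝ) - 1 := by
    rw [hm, Nat.cast_sub (by omega)]; norm_num
  set θ : ℝ := x - m with hθ
  have hθ0 : 0 < θ := by
    have := Nat.ceil_lt_add_one hx0.le
    rw [hθ, hmr]; linarith
  have hθ1 : θ ≤ 1 := by
    have := Nat.le_ceil x
    rw [hθ, hmr]; linarith
  have hf_feq : ∀ {y : ℝ}, 0 < y →
      (Real.log ∘ Real.Gamma) (y + 1) = (Real.log ∘ Real.Gamma) y + Real.log y := by
    intro y hy
    rw [Function.comp_apply, Real.Gamma_add_one hy.ne',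
      Real.log_mul hy.ne' (Real.Gamma_pos_of_pos hy).ne', add_comm, Function.comp_apply]
  have hxN : ∀ N : ℕ, x + (N:ℝ) = ((m+N:ℕ):ℝ) + θ := by
    intro N; push_cast; rw [hθ]; ring
  have hKtop : Tendsto (fun N : ℕ => ((m+N:ℕ):ℝ)) atTop atTop := by
    refine tendsto_natCast_atTop_atTop.comp ?_
    refine (tendsto_add_atTop_nat m).congr fun n => by omega
  have T1 : Tendsto (fun N : ℕ => fAux ((m+N:ℕ):ℝ)) atTop (𝓝 0) := by
    have := fAux_nat_tendsto.comp (tendsto_add_atTop_nat (m-1))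
    refine this.congr fun N => ?_
    simp only [Function.comp_apply]
    congr 1
    have : N + (m-1) + 1 = m + N := by omega
    rw [← this]
    push_cast
    ring
  have T2 : Tendsto (fun N : ℕ => θ - (((m+N:ℕ):ℝ) + (θ - 1/2)) *
      Real.log (1 + θ/((m+N:ℕ):ℝ))) atTop (𝓝 0) := by
    have h := (tendsto_const_nhds (x := θ)).sub ((mul_log_tendsto θ (θ - 1/2)).comp hKtop)
    rw [sub_self] at h
    exact h
  have T3 : Tendsto (fun N : ℕ => θ * Real.log (1 + 1/(((m+N:ℕ):ℝ) - 1))) atTop (𝓝 0) := by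
    have h := (log_shift_tendsto.const_mul θ).comp hKtop
    rw [mul_zero] at h
    exact h
  have hg : Tendsto (fun N : ℕ => (fAux ((m+N:ℕ):ℝ) + (θ - (((m+N:ℕ):ℝ) + (θ - 1/2)) *
      Real.log (1 + θ/((m+N:ℕ):ℝ)))) - θ * Real.log (1 + 1/(((m+N:ℕ):ℝ) - 1)))
      atTop (𝓝 0) := by
    have h := (T1.add T2).sub T3
    rw [add_zero, sub_zero] at h
    exact h
  have hh : Tendsto (fun N : ℕ => fAux ((m+N:ℕ):ℝ) + (θ - (((m+N:ℕ):ℝ) + (θ - 1/2)) *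
      Real.log (1 + θ/((m+N:ℕ):ℝ)))) atTop (𝓝 0) := by
    have h := T1.add T2
    rw [add_zero] at h
    exact h
  refine tendsto_of_tendsto_of_tendsto_of_le_of_le' hg hh ?_ ?_
  · -- lower bound
    filter_upwards [eventually_ge_atTop 1] with N hN
    set K : ℕ := m + N with hK
    have hK2 : 2 ≤ K := by omega
    have hKr : (2:ℝ) ≤ (K:ℝ) := by exact_mod_cast hK2
    have hKpos : (0:ℝ) < (K:ℝ) := by linarith
    have hKθ : (0:ℝ) < (K:ℝ) + θ := by linarith
    have hK1ne : (K:ℝ) - 1 ≠ 0 := by linarith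
    have hlow := Real.BohrMollerup.f_add_nat_ge Real.convexOn_log_Gamma hf_feq hK2 hθ0
    have hwK : sAux (K:ℝ) + θ * Real.log ((K:ℝ)) - sAux ((K:ℝ) + θ)
        = θ - (((K:ℝ)) + (θ - 1/2)) * Real.log (1 + θ/((K:ℝ))) := by
      have h1 : (1:ℝ) + θ/(K:ℝ) = ((K:ℝ) + θ)/(K:ℝ) := by field_simp
      rw [h1, Real.log_div hKθ.ne' hKpos.ne']
      unfold sAux
      ring
    have hvK : Real.log ((K:ℝ)) - Real.log ((K:ℝ) - 1) = Real.log (1 + 1/((K:ℝ) - 1)) := by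
      have h1 : (1:ℝ) + 1/((K:ℝ)-1) = (K:ℝ)/((K:ℝ)-1) := by field_simp; ring
      rw [h1, Real.log_div hKpos.ne' hK1ne]
    have hfx : fAux (x + N) = (Real.log ∘ Real.Gamma) ((K:ℝ) + θ) - sAux ((K:ℝ) + θ) := by
      rw [hxN N]; rfl
    have hcomp : (Real.log ∘ Real.Gamma) ((K:ℝ)) = fAux (K:ℝ) + sAux (K:ℝ) := by
      simp only [Function.comp_apply]
      unfold fAux
      ring
    rw [hfx]
    rw [hcomp] at hlow
    rw [← hwK, ← hvK]
    linarith
  · -- upper bound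
    filter_upwards [eventually_ge_atTop 1] with N hN
    set K : ℕ := m + N with hK
    have hK0 : K ≠ 0 := by omega
    have hK2 : 2 ≤ K := by omega
    have hKr : (2:ℝ) ≤ (K:ℝ) := by exact_mod_cast hK2
    have hKpos : (0:ℝ) < (K:ℝ) := by linarith
    have hKθ : (0:ℝ) < (K:ℝ) + θ := by linarith
    have hup := Real.BohrMollerup.f_add_nat_le Real.convexOn_log_Gamma hf_feq hK0 hθ0 hθ1
    have hwK : sAux (K:ℝ) + θ * Real.log ((K:ℝ)) - sAux ((K:ℝ) + θ)
        = θ - (((K:ℝ)) + (θ - 1/2)) * Real.log (1 + θ/((K:ℝ))) := by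
      have h1 : (1:ℝ) + θ/(K:ℝ) = ((K:ℝ) + θ)/(K:ℝ) := by field_simp
      rw [h1, Real.log_div hKθ.ne' hKpos.ne']
      unfold sAux
      ring
    have hfx : fAux (x + N) = (Real.log ∘ Real.Gamma) ((K:ℝ) + θ) - sAux ((K:ℝ) + θ) := by
      rw [hxN N]; rfl
    have hcomp : (Real.log ∘ Real.Gamma) ((K:ℝ)) = fAux (K:ℝ) + sAux (K:ℝ) := by
      simp only [Function.comp_apply]
      unfold fAux
      ring
    rw [hfx]
    rw [hcomp] at hup
    rw [← hwK]
    linarith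

lemma fAux_close {x : ℝ} (hx : 2 ≤ x) : |fAux x - aAux x| ≤ 5 / x^5 := by
  have hx0 : (0:ℝ) < x := by linarith
  have key : ∀ N : ℕ, |fAux x - aAux x|
      ≤ |fAux (x + N) - aAux (x + N)| + 6*(1/x^6 + 1/(5*x^5)) := by
    intro N
    have ht := fAux_teles hx0 N
    have ha := aAux_teles x N
    have hdec : fAux x - aAux x = (fAux (x + N) - aAux (x + N))
        + ∑ n ∈ range N, (gAux (x + n) - (aAux (x + n) - aAux (x + n + 1))) := by
      rw [Finset.sum_sub_distrib, ← ht, ← ha]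
      ring
    rw [hdec]
    refine (abs_add_le _ _).trans (add_le_add le_rfl ?_)
    refine (Finset.abs_sum_le_sum_abs _ _).trans ?_
    have hsum : ∑ n ∈ range N, |gAux (x + n) - (aAux (x + n) - aAux (x + n + 1))|
        ≤ ∑ n ∈ range N, 6/(x + n)^6 := by
      refine Finset.sum_le_sum fun n _ => ?_
      have hxn : (2:ℝ) ≤ x + n := by
        have : (0:ℝ) ≤ n := Nat.cast_nonneg n
        linarith
      exact gAux_est hxn
    refine hsum.trans ?_
    have : ∑ n ∈ range N, 6/(x + n)^6 = 6 * ∑ n ∈ range N, 1/(x + n)^6 := by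
      rw [Finset.mul_sum]
      refine Finset.sum_congr rfl fun n _ => by ring
    rw [this]
    have := sum_inv_pow6 hx N
    linarith
  have haT : Tendsto (fun N : ℕ => aAux (x + N)) atTop (𝓝 0) := by
    have hseq : Tendsto (fun N : ℕ => x + (N:ℝ)) atTop atTop :=
      tendsto_atTop_add_const_left _ x tendsto_natCast_atTop_atTop
    have hbase : Tendsto aAux atTop (𝓝 0) := by
      unfold aAux
      have h1 : Tendsto (fun y : ℝ => 1/(12*y)) atTop (𝓝 0) := by
        refine (tendsto_const_nhds : Tendsto (fun _ : ℝ => (1:ℝ)) atTop (𝓝 1)).div_atTop ?_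
        exact (tendsto_id.const_mul_atTop (by norm_num : (0:ℝ) < 12))
      have h2 : Tendsto (fun y : ℝ => 1/(360*y^3)) atTop (𝓝 0) := by
        refine (tendsto_const_nhds : Tendsto (fun _ : ℝ => (1:ℝ)) atTop (𝓝 1)).div_atTop ?_
        exact ((tendsto_pow_atTop (by norm_num : 3 ≠ 0)).const_mul_atTop
          (by norm_num : (0:ℝ) < 360))
      have := h1.sub h2
      rw [sub_self] at this
      exact this
    exact hbase.comp hseq
  have hfT := fAux_tendsto hx
  have hU : Tendsto (fun N : ℕ => |fAux (x + N) - aAux (x + N)| + 6*(1/x^6 + 1/(5*x^5)))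
      atTop (𝓝 (6*(1/x^6 + 1/(5*x^5)))) := by
    have h := ((hfT.sub haT).abs).add
      (tendsto_const_nhds (x := 6*(1/x^6 + 1/(5*x^5))))
    rw [sub_self, abs_zero, zero_add] at h
    exact h
  have hle := ge_of_tendsto' hU key
  refine hle.trans ?_
  have e : 6*(1/x^6 + 1/(5*x^5)) = (6/x + 6/5)/x^5 := by
    field_simp
  rw [e]
  have h6x : 6/x ≤ 3 := by
    rw [div_le_iff₀ hx0]; linarith
  have : (6/x + 6/5 : ℝ) ≤ 5 := by linarith
  exact div_le_div₀ (by norm_num) this (by positivity) le_rfl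

lemma sqrtT {u : ℝ} (h0 : 0 ≤ u) (h1 : u ≤ 1/6) :
    |Real.sqrt (1 + u) - (1 + u/2 - u^2/8 + u^3/16)| ≤ u^4 := by
  have c2 : u^2 ≤ u := by nlinarith
  have c3 : u^3 ≤ u^2 := by nlinarith
  have c4 : u^4 ≤ u^3 := by nlinarith
  have c5 : u^5 ≤ u^4 := by nlinarith
  have c6 : u^6 ≤ u^5 := by nlinarith
  have c7 : u^7 ≤ u^6 := by nlinarith
  have c8 : u^8 ≤ u^7 := by nlinarith
  have n4 : 0 ≤ u^4 := by positivity
  have n5 : 0 ≤ u^5 := by positivity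
  have n6 : 0 ≤ u^6 := by positivity
  have n7 : 0 ≤ u^7 := by positivity
  have n8 : 0 ≤ u^8 := by positivity
  have hT0 : 0 ≤ 1 + u/2 - u^2/8 + u^3/16 := by nlinarith
  have hup : Real.sqrt (1 + u) ≤ 1 + u/2 - u^2/8 + u^3/16 := by
    have hsq : 1 + u ≤ (1 + u/2 - u^2/8 + u^3/16)^2 := by nlinarith
    have h := Real.sqrt_le_sqrt hsq
    rwa [Real.sqrt_sq hT0] at h
  have hTm0 : 0 ≤ 1 + u/2 - u^2/8 + u^3/16 - u^4 := by nlinarith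
  have hlo : 1 + u/2 - u^2/8 + u^3/16 - u^4 ≤ Real.sqrt (1 + u) := by
    rw [show (1:ℝ) + u = ((1:ℝ) + u) from rfl]
    refine (Real.le_sqrt hTm0 (by linarith)).mpr ?_
    nlinarith
  rw [abs_le]
  constructor <;> linarith

theorem new_expansion_cubic_truncation :
    ∃ C > (0:ℝ), ∃ X : ℝ, ∀ x ≥ X,
      |Real.Gamma (x + 1) / (x ^ x * Real.exp (-x) * Real.sqrt (2 * π * (x + 1/6))) -
          (1 + 1 / (144 * (x + 1/4) ^ 2) - 1 / (12960 * (x + 1/4) ^ 3))|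
        ≤ C / x ^ 4 := by
  refine ⟨30, by norm_num, 2, fun x hx => ?_⟩
  have hx0 : (0:ℝ) < x := by linarith
  have hΓpos := Real.Gamma_pos_of_pos hx0
  have hu0 : (0:ℝ) < 1/(6*x) := by positivity
  have hu6 : 1/(6*x) ≤ 1/6 := by
    rw [div_le_div_iff₀ (by positivity) (by norm_num)]; nlinarith
  have hsqpos : (0:ℝ) < Real.sqrt (1 + 1/(6*x)) := Real.sqrt_pos.mpr (by linarith)
  have hsq1 : (1:ℝ) ≤ Real.sqrt (1 + 1/(6*x)) := by
    calc (1:ℝ) = Real.sqrt 1 := Real.sqrt_one.symm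
      _ ≤ Real.sqrt (1 + 1/(6*x)) := Real.sqrt_le_sqrt (by linarith)
  -- Step A : ratio identity
  have hexpf : Real.exp (fAux x)
      = Real.Gamma x / (x ^ (x - 1/2 : ℝ) * Real.exp (-x) * Real.sqrt (2*π)) := by
    unfold fAux sAux stirC
    rw [Real.exp_sub, Real.exp_log hΓpos]
    congr 1
    rw [Real.exp_add, Real.exp_sub, Real.exp_log (by positivity : (0:ℝ) < Real.sqrt (2*π))]
    rw [Real.rpow_def_of_pos hx0, mul_comm (Real.log x)]
    rw [Real.exp_neg]
    field_simp
  have hsplit : Real.sqrt (2 * π * (x + 1/6))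
      = Real.sqrt (2*π) * Real.sqrt x * Real.sqrt (1 + 1/(6*x)) := by
    have h2π : 2*π*(x + 1/6) = (2*π) * (x * (1 + 1/(6*x))) := by
      field_simp
    rw [h2π, Real.sqrt_mul (by positivity), Real.sqrt_mul hx0.le, mul_assoc]
  have hkey : x * x ^ (x - 1/2 : ℝ) = x ^ (x:ℝ) * Real.sqrt x := by
    have h1 : x * x ^ (x - 1/2:ℝ) = x ^ (1 + (x - 1/2) : ℝ) := by
      rw [Real.rpow_add hx0, Real.rpow_one]
    have h2 : x ^ (x:ℝ) * Real.sqrt x = x ^ (x + 1/2 : ℝ) := by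
      rw [Real.sqrt_eq_rpow, ← Real.rpow_add hx0]
    rw [h1, h2]
    congr 1
    ring
  have hratio : Real.Gamma (x + 1) / (x ^ x * Real.exp (-x) * Real.sqrt (2 * π * (x + 1/6)))
      = Real.exp (fAux x) / Real.sqrt (1 + 1/(6*x)) := by
    rw [Real.Gamma_add_one hx0.ne', hsplit, hexpf]
    have hxx : (0:ℝ) < x ^ (x:ℝ) := Real.rpow_pos_of_pos hx0 _
    have hxx2 : (0:ℝ) < x ^ (x - 1/2 : ℝ) := Real.rpow_pos_of_pos hx0 _
    have hsx : (0:ℝ) < Real.sqrt x := Real.sqrt_pos.mpr hx0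
    have h2π : (0:ℝ) < Real.sqrt (2*π) := Real.sqrt_pos.mpr (by positivity)
    have hex : (0:ℝ) < Real.exp (-x) := Real.exp_pos _
    rw [div_div, div_eq_div_iff (by positivity) (by positivity)]
    have : x * Real.Gamma x * (x ^ (x - 1/2:ℝ) * Real.exp (-x) * Real.sqrt (2*π)
          * Real.sqrt (1 + 1/(6*x)))
        = Real.Gamma x * (x ^ (x:ℝ) * Real.sqrt x * Real.exp (-x) * Real.sqrt (2*π)
          * Real.sqrt (1 + 1/(6*x))) := by
      rw [show x * Real.Gamma x * (x ^ (x - 1/2:ℝ) * Real.exp (-x) * Real.sqrt (2*π)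
          * Real.sqrt (1 + 1/(6*x)))
          = Real.Gamma x * ((x * x ^ (x - 1/2:ℝ)) * Real.exp (-x) * Real.sqrt (2*π)
          * Real.sqrt (1 + 1/(6*x))) from by ring, hkey]
    rw [this]
    ring
  rw [hratio]
  -- Step B : reduce to numerator bound
  set S : ℝ := 1 + 1 / (144 * (x + 1/4) ^ 2) - 1 / (12960 * (x + 1/4) ^ 3) with hS
  have hstep : Real.exp (fAux x) / Real.sqrt (1 + 1/(6*x)) - S
      = (Real.exp (fAux x) - S * Real.sqrt (1 + 1/(6*x))) / Real.sqrt (1 + 1/(6*x)) := by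
    rw [sub_div, mul_div_assoc, div_self hsqpos.ne', mul_one]
  rw [hstep, abs_div, abs_of_pos hsqpos]
  have hdivle : |Real.exp (fAux x) - S * Real.sqrt (1 + 1/(6*x))| / Real.sqrt (1 + 1/(6*x))
      ≤ |Real.exp (fAux x) - S * Real.sqrt (1 + 1/(6*x))| :=
    div_le_self (abs_nonneg _) hsq1
  refine hdivle.trans ?_
  -- Step C : the five-term bound
  set a : ℝ := aAux x with ha
  set Q : ℝ := 1 + 1/(12*x) + 1/(288*x^2) - 139/(51840*x^3) with hQ
  set T : ℝ := 1 + (1/(6*x))/2 - (1/(6*x))^2/8 + (1/(6*x))^3/16 with hT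
  have hae : a = (30*x^2 - 1)/(360*x^3) := by
    rw [ha]; unfold aAux; field_simp; ring
  have ha0 : 0 ≤ a := by
    rw [hae]
    exact div_nonneg (by nlinarith) (by positivity)
  have haup : a ≤ 1/(12*x) := by
    rw [hae, div_le_div_iff₀ (by positivity) (by positivity)]
    nlinarith
  have ha1 : a ≤ 1 := by
    refine haup.trans ?_
    rw [div_le_one (by positivity)]
    linarith
  have hδ := fAux_close (show (2:ℝ) ≤ x from hx)
  rw [← ha] at hδ
  have hb1 : |Real.exp (fAux x) - Real.exp a| ≤ 15/x^4 := by
    have hsp : Real.exp (fAux x) - Real.exp a = Real.exp a * (Real.exp (fAux x - a) - 1) := by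
      rw [mul_sub, mul_one, ← Real.exp_add]
      ring_nf
    rw [hsp, abs_mul, abs_of_pos (Real.exp_pos a)]
    have hd1 : |fAux x - a| ≤ 1 := by
      refine hδ.trans ?_
      rw [div_le_one (by positivity)]
      nlinarith [pow_le_pow_left₀ (show (0:ℝ) ≤ 2 by norm_num) hx 5]
    have h2 := Real.abs_exp_sub_one_le hd1
    have h3 : Real.exp a ≤ 3 := by
      calc Real.exp a ≤ Real.exp 1 := Real.exp_le_exp.mpr ha1
        _ ≤ 3 := by nlinarith [Real.exp_one_lt_d9]
    calc Real.exp a * |Real.exp (fAux x - a) - 1| ≤ 3 * (2 * |fAux x - a|) := by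
          apply mul_le_mul h3 h2 (abs_nonneg _) (by norm_num)
      _ ≤ 3 * (2 * (5/x^5)) := by linarith
      _ = 30/x^5 := by ring
      _ ≤ 15/x^4 := by
          rw [div_le_div_iff₀ (by positivity) (by positivity)]
          nlinarith [mul_nonneg (show (0:ℝ) ≤ x - 2 by linarith) (pow_nonneg hx0.le 4)]
  have hb2 : |Real.exp a - (1 + a + a^2/2 + a^3/6)| ≤ 1/x^4 := by
    have haabs : |a| ≤ 1 := by rw [abs_of_nonneg ha0]; exact ha1
    have hb := Real.exp_bound haabs (by norm_num : 0 < 4)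
    have hsum : ∑ m ∈ range 4, a^m / (Nat.factorial m : ℝ) = 1 + a + a^2/2 + a^3/6 := by
      simp [Finset.sum_range_succ, Nat.factorial]
    rw [hsum] at hb
    refine hb.trans ?_
    norm_num [Nat.factorial]
    rw [← one_div (x^4)]
    have h4 : |a|^4 ≤ (1/(12*x))^4 := by
      apply pow_le_pow_left₀ (abs_nonneg a)
      rw [abs_of_nonneg ha0]; exact haup
    have pn : ∀ k : ℕ, (0:ℝ) ≤ x^k := fun k => pow_nonneg hx0.le k
    calc |a|^4 * (5/96) ≤ (1/(12*x))^4 * (5/96) :=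
          mul_le_mul_of_nonneg_right h4 (by norm_num)
      _ = 5/(1990656*x^4) := by
          rw [div_pow]
          norm_num
          ring
      _ ≤ 1/x^4 := by
          rw [div_le_div_iff₀ (by positivity) (by positivity)]
          nlinarith [pn 4]
  have hb3 : |(1 + a + a^2/2 + a^3/6) - Q| ≤ 1/x^4 := by
    have he : (1 + a + a^2/2 + a^3/6) - Q
        = (-(x:ℝ)^15 + 90*x^17 + 1080*x^18 - 2700*x^19 - 64800*x^20)/(279936000*x^24) := by
      rw [ha, hQ]
      unfold aAux
      field_simp
      ring
    rw [he, abs_div, abs_of_pos (by positivity : (0:ℝ) < 279936000*x^24)]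
    have hx1 : (1:ℝ) ≤ x := by linarith
    have p15 : x^15 ≤ x^20 := pow_le_pow_right₀ hx1 (by norm_num)
    have p17 : x^17 ≤ x^20 := pow_le_pow_right₀ hx1 (by norm_num)
    have p18 : x^18 ≤ x^20 := pow_le_pow_right₀ hx1 (by norm_num)
    have p19 : x^19 ≤ x^20 := pow_le_pow_right₀ hx1 (by norm_num)
    have pn : ∀ k : ℕ, (0:ℝ) ≤ x^k := fun k => pow_nonneg hx0.le k
    have hnumb : |(-(x:ℝ)^15 + 90*x^17 + 1080*x^18 - 2700*x^19 - 64800*x^20)| ≤ 68671*x^20 := by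
      rw [abs_le]
      constructor
      · linarith [p15, p19, pn 17, pn 18, pn 20]
      · linarith [p17, p18, pn 15, pn 19, pn 20]
    refine (div_le_div₀ (by positivity : (0:ℝ) ≤ 68671*x^20) hnumb (by positivity) le_rfl).trans ?_
    rw [div_le_div_iff₀ (by positivity) (by positivity)]
    nlinarith [pn 24]
  have pn : ∀ k : ℕ, (0:ℝ) ≤ x^k := fun k => pow_nonneg hx0.le k
  have hx1 : (1:ℝ) ≤ x := by linarith
  have hb4 : |Q - S*T| ≤ 1/x^4 := by
    have he : S*T - Q = (4201*x^9 + 73448*x^10 + 479104*x^11 + 1382784*x^12 + 1490688*x^13)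
        /(1399680*x^12*(1+4*x)^5) := by
      rw [hS, hQ, hT]
      have h14 : x + 1/4 ≠ 0 := by linarith
      field_simp
      ring
    rw [abs_sub_comm, he, abs_div, abs_of_pos (by positivity : (0:ℝ) < 1399680*x^12*(1+4*x)^5)]
    have p9 : x^9 ≤ x^13 := pow_le_pow_right₀ hx1 (by norm_num)
    have p10 : x^10 ≤ x^13 := pow_le_pow_right₀ hx1 (by norm_num)
    have p11 : x^11 ≤ x^13 := pow_le_pow_right₀ hx1 (by norm_num)
    have p12 : x^12 ≤ x^13 := pow_le_pow_right₀ hx1 (by norm_num)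
    have hnumb : |4201*x^9 + 73448*x^10 + 479104*x^11 + 1382784*x^12 + 1490688*x^13|
        ≤ 3430225*x^13 := by
      rw [abs_of_nonneg (by positivity)]
      linarith [p9, p10, p11, p12]
    have hden : 1399680*x^12*(1024*x^5) ≤ 1399680*x^12*(1+4*x)^5 := by
      have h45 : (4*x)^5 ≤ (1+4*x)^5 := pow_le_pow_left₀ (by positivity) (by linarith) 5
      have h45' : (4*x)^5 = 1024*x^5 := by ring
      rw [h45'] at h45
      have := mul_le_mul_of_nonneg_left h45 (show (0:ℝ) ≤ 1399680*x^12 by positivity)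
      linarith
    refine (div_le_div₀ (by positivity : (0:ℝ) ≤ 3430225*x^13) hnumb
      (by positivity) hden).trans ?_
    have he2 : 1399680*x^12*(1024*x^5) = 1433272320*x^17 := by ring
    rw [he2, div_le_div_iff₀ (by positivity) (by positivity)]
    nlinarith [pn 17]
  have hb5 : |S*T - S*Real.sqrt (1 + 1/(6*x))| ≤ 1/x^4 := by
    have hTs := sqrtT hu0.le hu6
    rw [← hT] at hTs
    have hSb : |S| ≤ 2 := by
      rw [hS]
      have h1 : (0:ℝ) < x + 1/4 := by linarith
      have t1 : 1/(144*(x+1/4)^2) ≤ 1 := by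
        rw [div_le_one (by positivity)]
        nlinarith
      have t2 : 1/(12960*(x+1/4)^3) ≤ 1 := by
        rw [div_le_one (by positivity)]
        nlinarith
      have t1n : (0:ℝ) ≤ 1/(144*(x+1/4)^2) := by positivity
      have t2n : (0:ℝ) ≤ 1/(12960*(x+1/4)^3) := by positivity
      rw [abs_le]
      constructor <;> linarith
    have hfac : |S*T - S*Real.sqrt (1+1/(6*x))| = |S| * |Real.sqrt (1+1/(6*x)) - T| := by
      rw [← abs_mul, abs_sub_comm]
      congr 1
      ring
    rw [hfac]
    calc |S| * |Real.sqrt (1+1/(6*x)) - T| ≤ 2 * (1/(6*x))^4 :=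
          mul_le_mul hSb hTs (abs_nonneg _) (by norm_num)
      _ = 2/(1296*x^4) := by
          rw [div_pow]
          norm_num
          ring
      _ ≤ 1/x^4 := by
          rw [div_le_div_iff₀ (by positivity) (by positivity)]
          nlinarith [pn 4]
  have htot : |Real.exp (fAux x) - S * Real.sqrt (1 + 1/(6*x))|
      ≤ 15/x^4 + 1/x^4 + 1/x^4 + 1/x^4 + 1/x^4 :=
    calc |Real.exp (fAux x) - S * Real.sqrt (1 + 1/(6*x))|
        ≤ |Real.exp (fAux x) - Real.exp a| + |Real.exp a - S * Real.sqrt (1 + 1/(6*x))| :=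
          abs_sub_le _ _ _
      _ ≤ |Real.exp (fAux x) - Real.exp a| + (|Real.exp a - (1 + a + a^2/2 + a^3/6)|
          + |(1 + a + a^2/2 + a^3/6) - S * Real.sqrt (1 + 1/(6*x))|) :=
          add_le_add le_rfl (abs_sub_le _ _ _)
      _ ≤ |Real.exp (fAux x) - Real.exp a| + (|Real.exp a - (1 + a + a^2/2 + a^3/6)|
          + (|(1 + a + a^2/2 + a^3/6) - Q| + (|Q - S*T| + |S*T - S*Real.sqrt (1 + 1/(6*x))|))) := by
          refine add_le_add le_rfl (add_le_add le_rfl ?_)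
          refine (abs_sub_le _ Q _).trans (add_le_add le_rfl (abs_sub_le _ (S*T) _))
      _ ≤ 15/x^4 + 1/x^4 + 1/x^4 + 1/x^4 + 1/x^4 := by
          have := hb1
          have := hb2
          have := hb3
          have := hb4
          have := hb5
          linarith
  refine htot.trans ?_
  have h19 : 15/x^4 + 1/x^4 + 1/x^4 + 1/x^4 + 1/x^4 = 19/x^4 := by ring
  rw [h19, div_le_div_iff₀ (by positivity) (by positivity)]
  nlinarith [pn 4]
end

section
/- There exist constants C > 0 and X such that for all x ≥ X, |Γ(x+1)/(x^x e^{-x} √(2π(x+1/6))) − (1 + (1/144)/(x + 23/90)²)| ≤ C/x⁴. -/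
open Real Filter Finset Set Nat


noncomputable def muF (x : ℝ) : ℝ :=
  Real.log (Real.Gamma x) - (x - 1/2) * Real.log x + x - Real.log (2*π) / 2

noncomputable def gF (y : ℝ) : ℝ := (y + 1/2) * (Real.log (y+1) - Real.log y) - 1

noncomputable def hF (x : ℝ) : ℝ := 1/(12*x) - 1/(360*x^3)

set_option maxHeartbeats 1000000 in
lemma log_taylor6 {t : ℝ} (h0 : 0 ≤ t) (h1 : t ≤ 1/2) :
    |Real.log (1+t) - (t - t^2/2 + t^3/3 - t^4/4 + t^5/5 - t^6/6)| ≤ 2*t^7 := by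
  have habs : |(-t)| < 1 := by rw [abs_neg, abs_of_nonneg h0]; linarith
  have h := Real.abs_log_sub_add_sum_range_le habs 6
  rw [abs_neg, abs_of_nonneg h0] at h
  simp only [Finset.sum_range_succ, Finset.sum_range_zero] at h
  rw [sub_neg_eq_add] at h
  norm_num at h
  have h2 : t^7/(1-t) ≤ 2*t^7 := by
    rw [div_le_iff₀ (by linarith)]
    nlinarith [pow_nonneg h0 7]
  have e : Real.log (1+t) - (t - t^2/2 + t^3/3 - t^4/4 + t^5/5 - t^6/6)
      = -t + t^2/2 - t^3/3 + t^4/4 - t^5/5 + t^6/6 + Real.log (1+t) := by ring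
  rw [e]
  exact le_of_eq (by ring_nf) |>.trans h |>.trans h2

set_option maxHeartbeats 1000000 in
lemma log_taylor3 {t : ℝ} (h0 : 0 ≤ t) (h1 : t ≤ 1/2) :
    |Real.log (1+t) - (t - t^2/2 + t^3/3)| ≤ 2*t^4 := by
  have habs : |(-t)| < 1 := by rw [abs_neg, abs_of_nonneg h0]; linarith
  have h := Real.abs_log_sub_add_sum_range_le habs 3
  rw [abs_neg, abs_of_nonneg h0] at h
  simp only [Finset.sum_range_succ, Finset.sum_range_zero] at h
  rw [sub_neg_eq_add] at h
  norm_num at h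
  have h2 : t^4/(1-t) ≤ 2*t^4 := by
    rw [div_le_iff₀ (by linarith)]
    nlinarith [pow_nonneg h0 4]
  have e : Real.log (1+t) - (t - t^2/2 + t^3/3)
      = -t + t^2/2 - t^3/3 + Real.log (1+t) := by ring
  rw [e]
  exact le_of_eq (by ring_nf) |>.trans h |>.trans h2

set_option maxHeartbeats 1000000 in
lemma log_taylor1 {t : ℝ} (h0 : 0 ≤ t) (h1 : t ≤ 1/2) :
    |Real.log (1+t) - t| ≤ 2*t^2 := by
  have habs : |(-t)| < 1 := by rw [abs_neg, abs_of_nonneg h0]; linarith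
  have h := Real.abs_log_sub_add_sum_range_le habs 1
  rw [abs_neg, abs_of_nonneg h0] at h
  simp only [Finset.sum_range_succ, Finset.sum_range_zero] at h
  rw [sub_neg_eq_add] at h
  norm_num at h
  have h2 : t^2/(1-t) ≤ 2*t^2 := by
    rw [div_le_iff₀ (by linarith)]
    nlinarith [pow_nonneg h0 2]
  have e : Real.log (1+t) - t = -t + Real.log (1+t) := by ring
  rw [e]
  exact le_of_eq (by ring_nf) |>.trans h |>.trans h2

lemma log_le_self' {t : ℝ} (h0 : 0 ≤ t) : Real.log (1+t) ≤ t := by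
  have := Real.add_one_le_exp t
  calc Real.log (1+t) ≤ Real.log (Real.exp t) := by
        apply Real.log_le_log (by linarith) (by linarith)
      _ = t := Real.log_exp t

lemma muF_sub {x : ℝ} (hx : 0 < x) : muF x - muF (x+1) = gF x := by
  have h1 : Real.Gamma (x+1) = x * Real.Gamma x := Real.Gamma_add_one (ne_of_gt hx)
  have h2 : Real.log (Real.Gamma (x+1)) = Real.log x + Real.log (Real.Gamma x) := by
    rw [h1, Real.log_mul (ne_of_gt hx) (ne_of_gt (Real.Gamma_pos_of_pos hx))]
  unfold muF gF
  rw [h2]; ring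

lemma log_succ_sub {y : ℝ} (hy : 0 < y) :
    Real.log (y+1) - Real.log y = Real.log (1 + 1/y) := by
  rw [← Real.log_div (by linarith) (ne_of_gt hy)]
  congr 1
  field_simp

lemma gF_approx {y : ℝ} (hy : 2 ≤ y) :
    |gF y - (1/(12*y^2) - 1/(12*y^3) + 3/(40*y^4) - 1/(15*y^5) - 1/(12*y^6))| ≤ 3/y^6 := by
  have hy0 : (0:ℝ) < y := by linarith
  have ht0 : (0:ℝ) ≤ 1/y := by positivity
  have ht1 : 1/y ≤ 1/2 := by rw [div_le_div_iff₀ hy0 two_pos]; linarith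
  have hL := log_taylor6 ht0 ht1
  have hgf : gF y = (y + 1/2) * Real.log (1+1/y) - 1 := by
    unfold gF; rw [log_succ_sub hy0]
  have hid : (y+1/2) * (1/y - (1/y)^2/2 + (1/y)^3/3 - (1/y)^4/4 + (1/y)^5/5 - (1/y)^6/6) - 1
      = 1/(12*y^2) - 1/(12*y^3) + 3/(40*y^4) - 1/(15*y^5) - 1/(12*y^6) := by
    field_simp; ring
  have e : gF y - (1/(12*y^2) - 1/(12*y^3) + 3/(40*y^4) - 1/(15*y^5) - 1/(12*y^6))
      = (y+1/2) * (Real.log (1+1/y) - (1/y - (1/y)^2/2 + (1/y)^3/3 - (1/y)^4/4 + (1/y)^5/5 - (1/y)^6/6)) := by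
    rw [hgf, ← hid]; ring
  rw [e, abs_mul, abs_of_pos (by linarith : (0:ℝ) < y + 1/2)]
  calc (y+1/2) * |Real.log (1+1/y) - _| ≤ (y+1/2) * (2*(1/y)^7) := by
        exact mul_le_mul_of_nonneg_left hL (by linarith)
    _ ≤ 3/y^6 := by
        rw [div_le_div_iff₀ hy0 two_pos] at ht1
        have h7 : (1/y)^7 = 1/y^7 := by ring
        rw [h7]
        rw [show (y+1/2) * (2*(1/y^7)) = (2*y+1)/y^7 by field_simp]
        rw [div_le_div_iff₀ (by positivity) (by positivity)]
        nlinarith [pow_pos hy0 6, pow_pos hy0 7]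

lemma gF_sub_hF {y : ℝ} (hy : 2 ≤ y) :
    |gF y - (hF y - hF (y+1))| ≤ 4/y^6 := by
  have hy0 : (0:ℝ) < y := by linarith
  have hy1 : (0:ℝ) < y + 1 := by linarith
  have hQD : (1/(12*y^2) - 1/(12*y^3) + 3/(40*y^4) - 1/(15*y^5) - 1/(12*y^6)) - (hF y - hF (y+1))
      = -((50*y^3+135*y^2+114*y+30)/(360*y^6*(y+1)^3)) := by
    unfold hF
    field_simp
    ring
  have h1 := gF_approx hy
  have h2 : |(1/(12*y^2) - 1/(12*y^3) + 3/(40*y^4) - 1/(15*y^5) - 1/(12*y^6)) - (hF y - hF (y+1))| ≤ 1/y^6 := by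
    rw [hQD, abs_neg, abs_of_nonneg (by positivity)]
    rw [div_le_div_iff₀ (by positivity) (by positivity)]
    nlinarith [pow_pos hy0 6, pow_pos hy1 3, sq_nonneg y, pow_pos hy0 3]
  calc |gF y - (hF y - hF (y+1))|
      ≤ |gF y - (1/(12*y^2) - 1/(12*y^3) + 3/(40*y^4) - 1/(15*y^5) - 1/(12*y^6))|
        + |(1/(12*y^2) - 1/(12*y^3) + 3/(40*y^4) - 1/(15*y^5) - 1/(12*y^6)) - (hF y - hF (y+1))| :=
        abs_sub_le _ _ _
    _ ≤ 3/y^6 + 1/y^6 := add_le_add h1 h2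
    _ = 4/y^6 := by ring

lemma muF_stirling {n : ℕ} (hn : 1 ≤ n) :
    muF ((n:ℝ)+1) = Real.log (Stirling.stirlingSeq n) - Real.log π / 2
      + (1 - ((n:ℝ)+1/2) * Real.log (1 + 1/(n:ℝ))) := by
  have hn0 : (0:ℝ) < n := by exact_mod_cast hn
  have hfac : (0:ℝ) < (n ! : ℝ) := by exact_mod_cast Nat.factorial_pos n
  have hst : Real.log (Stirling.stirlingSeq n)
      = Real.log (n ! : ℝ) - (Real.log 2 + Real.log n)/2 - n * Real.log n + n := by
    unfold Stirling.stirlingSeq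
    rw [Real.log_div (ne_of_gt hfac) (by positivity),
        Real.log_mul (by positivity) (by positivity),
        Real.log_sqrt (by positivity),
        Real.log_mul (by norm_num) (ne_of_gt hn0),
        Real.log_pow,
        Real.log_div (ne_of_gt hn0) (Real.exp_ne_zero 1), Real.log_exp]
    ring
  have hgamma : Real.Gamma ((n:ℝ)+1) = (n ! : ℝ) := Real.Gamma_nat_eq_factorial n
  have hlog2pi : Real.log (2*π) = Real.log 2 + Real.log π :=
    Real.log_mul (by norm_num) (ne_of_gt pi_pos)
  have hsucc : Real.log ((n:ℝ)+1) - Real.log n = Real.log (1 + 1/(n:ℝ)) := log_succ_sub hn0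
  unfold muF
  rw [hgamma, hst, hlog2pi, ← hsucc]
  ring

lemma muF_nat_tendsto : Tendsto (fun n : ℕ => muF n) atTop (nhds 0) := by
  rw [← tendsto_add_atTop_iff_nat 1]
  have h1 : Tendsto (fun n : ℕ => Real.log (Stirling.stirlingSeq n) - Real.log π / 2)
      atTop (nhds 0) := by
    have hc : Tendsto (fun n : ℕ => Real.log (Stirling.stirlingSeq n)) atTop
        (nhds (Real.log (Real.sqrt π))) :=
      ((Real.continuousAt_log (by positivity)).tendsto).comp Stirling.tendsto_stirlingSeq_sqrt_pi
    rw [Real.log_sqrt pi_pos.le] at hc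
    simpa using hc.sub_const (Real.log π / 2)
  have h2 : Tendsto (fun n : ℕ => 1 - ((n:ℝ)+1/2) * Real.log (1 + 1/(n:ℝ))) atTop (nhds 0) := by
    refine squeeze_zero_norm' ?_ (tendsto_const_div_atTop_nhds_zero_nat 4)
    filter_upwards [eventually_ge_atTop 2] with n hn
    have hn0 : (0:ℝ) < n := by exact_mod_cast Nat.pos_of_ne_zero (by omega)
    have hn2 : (2:ℝ) ≤ n := by exact_mod_cast hn
    have ht1 : 1/(n:ℝ) ≤ 1/2 := by rw [div_le_div_iff₀ hn0 two_pos]; linarith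
    have hL := log_taylor1 (by positivity : (0:ℝ) ≤ 1/(n:ℝ)) ht1
    rw [Real.norm_eq_abs]
    have expand : 1 - ((n:ℝ)+1/2) * Real.log (1+1/(n:ℝ))
        = -((1/(2*(n:ℝ))) + ((n:ℝ)+1/2) * (Real.log (1+1/(n:ℝ)) - 1/(n:ℝ))) := by
      field_simp
      ring
    rw [expand, abs_neg]
    calc |1/(2*(n:ℝ)) + ((n:ℝ)+1/2) * (Real.log (1+1/(n:ℝ)) - 1/(n:ℝ))|
        ≤ |1/(2*(n:ℝ))| + |((n:ℝ)+1/2) * (Real.log (1+1/(n:ℝ)) - 1/(n:ℝ))| := abs_add_le _ _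
      _ ≤ 1/(2*(n:ℝ)) + ((n:ℝ)+1/2) * (2*(1/(n:ℝ))^2) := by
          rw [abs_of_nonneg (by positivity), abs_mul, abs_of_nonneg (by linarith : (0:ℝ) ≤ (n:ℝ)+1/2)]
          exact add_le_add le_rfl (mul_le_mul_of_nonneg_left hL (by linarith))
      _ ≤ 4/(n:ℝ) := by
          rw [show (1/(n:ℝ))^2 = 1/(n:ℝ)^2 by ring,
              show 1/(2*(n:ℝ)) + ((n:ℝ)+1/2) * (2*(1/(n:ℝ)^2)) = (5*(n:ℝ)+2)/(2*(n:ℝ)^2) by field_simp; ring,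
              div_le_div_iff₀ (by positivity) hn0]
          nlinarith [sq_nonneg ((n:ℝ))]
  have h3 := h1.add h2
  rw [add_zero] at h3
  apply h3.congr'
  filter_upwards [eventually_ge_atTop 1] with n hn
  rw [← muF_stirling hn]
  push_cast
  ring_nf

set_option maxHeartbeats 2000000 in
lemma muF_interp {y : ℝ} (hy : 2 ≤ y) :
    |muF y| ≤ |muF (Nat.floor y : ℕ)| + 4/(Nat.floor y : ℝ) := by
  set m : ℕ := Nat.floor y with hmdef
  have hy0 : (0:ℝ) < y := by linarith
  have hm2 : 2 ≤ m := Nat.le_floor (by exact_mod_cast hy)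
  have hmr : (2:ℝ) ≤ (m:ℝ) := by exact_mod_cast hm2
  have hm0 : (0:ℝ) < (m:ℝ) := by linarith
  have hmy : (m:ℝ) ≤ y := Nat.floor_le (by linarith)
  have hym : y < (m:ℝ) + 1 := Nat.lt_floor_add_one y
  set s : ℝ := y - m with hsdef
  clear_value s
  have hs0 : 0 ≤ s := by rw [hsdef]; linarith
  have hs1 : s < 1 := by rw [hsdef]; linarith
  -- basic positivity
  have hGy : 0 < Real.Gamma y := Real.Gamma_pos_of_pos hy0
  have hGm : 0 < Real.Gamma (m:ℝ) := Real.Gamma_pos_of_pos hm0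
  -- functional equation logs
  have hfm1 : Real.log (Real.Gamma ((m:ℝ)+1)) = Real.log (m:ℝ) + Real.log (Real.Gamma (m:ℝ)) := by
    rw [Real.Gamma_add_one (ne_of_gt hm0), Real.log_mul (ne_of_gt hm0) (ne_of_gt hGm)]
  have hfy1 : Real.log (Real.Gamma (y+1)) = Real.log y + Real.log (Real.Gamma y) := by
    rw [Real.Gamma_add_one (ne_of_gt hy0), Real.log_mul (ne_of_gt hy0) (ne_of_gt hGy)]
  -- convexity upper bound
  have hub : Real.log (Real.Gamma y) - Real.log (Real.Gamma (m:ℝ)) ≤ s * Real.log (m:ℝ) := by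
    have hc := Real.convexOn_log_Gamma.2 (mem_Ioi.mpr hm0)
      (mem_Ioi.mpr (by linarith : (0:ℝ) < (m:ℝ)+1))
      (by linarith : (0:ℝ) ≤ 1 - s) (hs0) (by ring)
    simp only [smul_eq_mul, Function.comp_apply] at hc
    rw [show (1-s) * (m:ℝ) + s * ((m:ℝ)+1) = y by rw [hsdef]; ring] at hc
    rw [hfm1] at hc
    linarith
  -- convexity lower bound
  have hlb : Real.log (m:ℝ) - (1-s) * Real.log y
      ≤ Real.log (Real.Gamma y) - Real.log (Real.Gamma (m:ℝ)) := by
    have hc := Real.convexOn_log_Gamma.2 (mem_Ioi.mpr hy0)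
      (mem_Ioi.mpr (by linarith : (0:ℝ) < y+1))
      hs0 (by linarith : (0:ℝ) ≤ 1 - s) (by ring)
    simp only [smul_eq_mul, Function.comp_apply] at hc
    rw [show s * y + (1-s) * (y+1) = (m:ℝ)+1 by rw [hsdef]; ring] at hc
    rw [hfm1, hfy1] at hc
    linarith
  -- log y = log m + lu
  have hly : Real.log y = Real.log (m:ℝ) + Real.log (1 + s/(m:ℝ)) := by
    rw [← Real.log_mul (ne_of_gt hm0) (by positivity : (1 + s/(m:ℝ)) ≠ 0)]
    congr 1
    field_simp
    linarith [hsdef]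
  set lu : ℝ := Real.log (1 + s/(m:ℝ)) with hludef
  clear_value lu
  -- bounds on lu
  have hts : 0 ≤ s/(m:ℝ) := by positivity
  have hts2 : s/(m:ℝ) ≤ 1/2 := by
    rw [div_le_div_iff₀ hm0 two_pos]; linarith
  have hlu_up : lu ≤ s/(m:ℝ) := by rw [hludef]; exact log_le_self' hts
  have hlu_lo : s/(m:ℝ) - 2*(s/(m:ℝ))^2 ≤ lu := by
    rw [hludef]
    have := (abs_le.mp (log_taylor1 hts hts2)).1
    linarith
  -- the difference identity
  have hysub : y = (m:ℝ) + s := by rw [hsdef]; ring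
  have hdiff : muF y - muF (m:ℝ)
      = (Real.log (Real.Gamma y) - Real.log (Real.Gamma (m:ℝ)))
        - s * Real.log (m:ℝ) + s - ((m:ℝ) + s - 1/2) * lu := by
    unfold muF
    rw [hly, hysub]
    ring
  -- upper estimate
  have hup : muF y - muF (m:ℝ) ≤ 4/(m:ℝ) := by
    have h1 : muF y - muF (m:ℝ) ≤ s - ((m:ℝ) + s - 1/2) * lu := by
      rw [hdiff]; nlinarith [hub]
    have h2 : s - ((m:ℝ) + s - 1/2) * lu
        ≤ s - ((m:ℝ) + s - 1/2) * (s/(m:ℝ) - 2*(s/(m:ℝ))^2) := by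
      have hc : (0:ℝ) ≤ (m:ℝ) + s - 1/2 := by linarith
      nlinarith [mul_le_mul_of_nonneg_left hlu_lo hc]
    have h3 : s - ((m:ℝ) + s - 1/2) * (s/(m:ℝ) - 2*(s/(m:ℝ))^2) ≤ 4/(m:ℝ) := by
      rw [show s/(m:ℝ) - 2*(s/(m:ℝ))^2 = (s*(m:ℝ) - 2*s^2)/(m:ℝ)^2 by field_simp,
          show s - ((m:ℝ) + s - 1/2) * ((s*(m:ℝ) - 2*s^2)/(m:ℝ)^2)
            = (s*(m:ℝ)^2 - ((m:ℝ) + s - 1/2) * (s*(m:ℝ) - 2*s^2))/(m:ℝ)^2 by field_simp,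
          div_le_div_iff₀ (by positivity) hm0]
      have e1 : s^2 ≤ 1 := by nlinarith
      have e2 : s^3 ≤ 1 := by nlinarith
      nlinarith [mul_le_mul_of_nonneg_right e1 (sq_nonneg (m:ℝ)), mul_nonneg (mul_nonneg hs0 hs0) hm0.le,
        mul_le_mul_of_nonneg_right e2 hm0.le, mul_le_mul_of_nonneg_right hs1.le (sq_nonneg (m:ℝ)),
        sq_nonneg ((m:ℝ) - 2), mul_pos hm0 hm0]
    linarith
  -- lower estimate
  have hlo : -(4/(m:ℝ)) ≤ muF y - muF (m:ℝ) := by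
    have h1 : s - ((m:ℝ) + 1/2) * lu ≤ muF y - muF (m:ℝ) := by
      rw [hdiff]
      have hlb' : Real.log (m:ℝ) - (1-s) * (Real.log (m:ℝ) + lu)
          ≤ Real.log (Real.Gamma y) - Real.log (Real.Gamma (m:ℝ)) := by rw [← hly]; exact hlb
      nlinarith [hlb']
    have h2 : s - ((m:ℝ) + 1/2) * (s/(m:ℝ)) ≤ s - ((m:ℝ) + 1/2) * lu := by
      have hc : (0:ℝ) ≤ (m:ℝ) + 1/2 := by linarith
      nlinarith [mul_le_mul_of_nonneg_left hlu_up hc]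
    have h3 : -(4/(m:ℝ)) ≤ s - ((m:ℝ) + 1/2) * (s/(m:ℝ)) := by
      rw [show s - ((m:ℝ) + 1/2) * (s/(m:ℝ)) = -(s/(2*(m:ℝ))) by field_simp; ring]
      rw [neg_le_neg_iff, div_le_div_iff₀ (by positivity) hm0]
      nlinarith
    linarith
  have : |muF y - muF (m:ℝ)| ≤ 4/(m:ℝ) := abs_le.mpr ⟨by linarith, hup⟩
  calc |muF y| = |muF (m:ℝ) + (muF y - muF (m:ℝ))| := by congr 1; ring
    _ ≤ |muF (m:ℝ)| + |muF y - muF (m:ℝ)| := abs_add_le _ _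
    _ ≤ |muF (m:ℝ)| + 4/(m:ℝ) := by linarith

lemma muF_tendsto : Tendsto muF atTop (nhds 0) := by
  have h1 : Tendsto (fun n : ℕ => |muF n| + 4/(n:ℝ)) atTop (nhds 0) := by
    have := (muF_nat_tendsto.abs).add (tendsto_const_div_atTop_nhds_zero_nat 4)
    simpa using this
  have hb : Tendsto (fun y : ℝ => |muF (Nat.floor y : ℕ)| + 4/(Nat.floor y : ℝ))
      atTop (nhds 0) := h1.comp tendsto_nat_floor_atTop
  have habs : Tendsto (fun y => |muF y|) atTop (nhds 0) := by
    apply squeeze_zero' (Eventually.of_forall fun y => abs_nonneg _) _ hb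
    filter_upwards [eventually_ge_atTop (2:ℝ)] with y hy
    exact muF_interp hy
  exact (tendsto_zero_iff_abs_tendsto_zero muF).mpr habs

lemma hF_tendsto : Tendsto hF atTop (nhds 0) := by
  have h1 : Tendsto (fun x:ℝ => 12*x) atTop atTop :=
    tendsto_id.const_mul_atTop (by norm_num : (0:ℝ) < 12)
  have h2 : Tendsto (fun x:ℝ => 360*x^3) atTop atTop :=
    (tendsto_pow_atTop (by norm_num : 3 ≠ 0)).const_mul_atTop (by norm_num : (0:ℝ) < 360)
  have g1 : Tendsto (fun x:ℝ => (12*x)⁻¹) atTop (nhds 0) := tendsto_inv_atTop_zero.comp h1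
  have g2 : Tendsto (fun x:ℝ => (360*x^3)⁻¹) atTop (nhds 0) := tendsto_inv_atTop_zero.comp h2
  have g3 := g1.sub g2
  rw [sub_zero] at g3
  apply g3.congr
  intro x
  unfold hF
  rw [one_div, one_div]

/-- single-step bound: `4/y^6 ≤ (4/5)(1/(y-1/2)^5 - 1/(y+1/2)^5)` for `y ≥ 2` -/
lemma step_bound {y : ℝ} (hy : 2 ≤ y) :
    4/y^6 ≤ 4/5 * (1/(y-1/2)^5 - 1/(y+1/2)^5) := by
  have h1 : (0:ℝ) < y - 1/2 := by linarith
  have h2 : (0:ℝ) < y + 1/2 := by linarith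
  have h0 : (0:ℝ) < y := by linarith
  rw [div_sub_div _ _ (by positivity) (by positivity), one_mul, mul_one,
      show (4:ℝ)/5 * (((y+1/2)^5 - (y-1/2)^5)/((y-1/2)^5*(y+1/2)^5))
        = (4*((y+1/2)^5 - (y-1/2)^5))/(5*((y-1/2)^5*(y+1/2)^5)) by
          rw [_root_.div_mul_div_comm],
      div_le_div_iff₀ (by positivity) (by positivity)]
  have e1 : (y+1/2)^5 - (y-1/2)^5 = 5*y^4 + 5/2*y^2 + 1/16 := by ring
  have e2 : (y-1/2)^5*(y+1/2)^5 = (y^2 - 1/4)^5 := by ring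
  rw [e1, e2]
  nlinarith [pow_pos h0 2, pow_pos h0 4, pow_pos h0 6, sq_nonneg y, pow_pos h0 8,
    sq_nonneg (y^2 - 4), pow_pos h0 10, sq_nonneg (y^4 - y^3), sq_nonneg (y^3 - y^2),
    sq_nonneg (y^2 - y), sq_nonneg (y - 1), pow_le_pow_left₀ (by norm_num : (0:ℝ) ≤ 2) hy 2]

lemma muF_hF_bound {x : ℝ} (hx : 2 ≤ x) : |muF x - hF x| ≤ 4/x^5 := by
  have hx0 : (0:ℝ) < x := by linarith
  set a : ℕ → ℝ := fun k => muF (x+k) - hF (x+k) with ha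
  set c : ℕ → ℝ := fun k => 1/(x+k-1/2)^5 with hc
  -- telescoping identity
  have hstep : ∀ k : ℕ, a k - a (k+1) = gF (x+k) - (hF (x+k) - hF (x+k+1)) := by
    intro k
    have : muF (x+k) - muF ((x+k)+1) = gF (x+k) := muF_sub (by positivity)
    simp only [ha]
    push_cast
    rw [show x + ((k:ℝ)+1) = (x+k)+1 by ring]
    linarith [this]
  have hsum : ∀ n : ℕ, a 0 - a n = ∑ k ∈ Finset.range n, (a k - a (k+1)) := by
    intro n; rw [Finset.sum_range_sub' a n]
  have hcsum : ∀ n : ℕ, ∑ k ∈ Finset.range n, (c k - c (k+1)) = c 0 - c n := by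
    intro n; rw [Finset.sum_range_sub' c n]
  have hkey : ∀ n : ℕ, |a 0 - a n| ≤ 4/5 * (1/(x-1/2)^5) := by
    intro n
    rw [hsum n]
    calc |∑ k ∈ Finset.range n, (a k - a (k+1))|
        ≤ ∑ k ∈ Finset.range n, |a k - a (k+1)| := Finset.abs_sum_le_sum_abs _ _
      _ ≤ ∑ k ∈ Finset.range n, 4/5 * (c k - c (k+1)) := by
          apply Finset.sum_le_sum
          intro k _
          have hxk : 2 ≤ x + (k:ℝ) := by
            have : (0:ℝ) ≤ k := Nat.cast_nonneg k
            linarith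
          rw [hstep k]
          calc |gF (x+k) - (hF (x+k) - hF (x+k+1))| ≤ 4/(x+k)^6 := gF_sub_hF hxk
            _ ≤ 4/5 * (1/(x+k-1/2)^5 - 1/(x+k+1/2)^5) := step_bound hxk
            _ = 4/5 * (c k - c (k+1)) := by
                simp only [hc]
                push_cast
                ring_nf
      _ = 4/5 * (c 0 - c n) := by rw [← Finset.mul_sum, hcsum n]
      _ ≤ 4/5 * (1/(x-1/2)^5) := by
          have hc0 : c 0 = 1/(x-1/2)^5 := by simp [hc]
          have hcn : 0 ≤ c n := by
            simp only [hc]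
            have h1 : (0:ℝ) ≤ (n:ℝ) := Nat.cast_nonneg n
            have h2 : (0:ℝ) < x + (n:ℝ) - 1/2 := by linarith
            positivity
          rw [hc0]
          nlinarith [hcn]
  -- limit of a n
  have hmu : Tendsto (fun n : ℕ => muF (x+n)) atTop (nhds 0) :=
    muF_tendsto.comp (tendsto_atTop_add_const_left _ x tendsto_natCast_atTop_atTop)
  have hhf : Tendsto (fun n : ℕ => hF (x+n)) atTop (nhds 0) :=
    hF_tendsto.comp (tendsto_atTop_add_const_left _ x tendsto_natCast_atTop_atTop)
  have han : Tendsto a atTop (nhds 0) := by simpa using hmu.sub hhf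
  have hlim : Tendsto (fun n : ℕ => |a 0 - a n|) atTop (nhds |a 0|) := by
    have := (tendsto_const_nhds (x := a 0) (f := atTop (α := ℕ))).sub han
    rw [sub_zero] at this
    exact this.abs
  have h0 : |a 0| ≤ 4/5 * (1/(x-1/2)^5) :=
    le_of_tendsto hlim (Eventually.of_forall hkey)
  have hfin : 4/5 * (1/(x-1/2)^5) ≤ 4/x^5 := by
    have hxp : (0:ℝ) < x - 1/2 := by linarith
    rw [show (4:ℝ)/5 * (1/(x-1/2)^5) = 4/(5*(x-1/2)^5) by
          rw [_root_.div_mul_div_comm, mul_one],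
        div_le_div_iff₀ (by positivity) (by positivity)]
    nlinarith [pow_le_pow_left₀ (by linarith : (0:ℝ) ≤ 3/4*x) (by linarith : 3/4*x ≤ x-1/2) 5,
      pow_pos hx0 5]
  have : a 0 = muF x - hF x := by simp [ha]
  rw [← this]
  linarith [h0]

set_option maxHeartbeats 2000000 in
theorem even_expansion_first_term :
    ∃ C > (0:ℝ), ∃ X : ℝ, ∀ x ≥ X,
      |Real.Gamma (x + 1) / (x ^ x * Real.exp (-x) * Real.sqrt (2 * π * (x + 1/6))) -
          (1 + (1/144) / (x + 23/90) ^ 2)|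
        ≤ C / x ^ 4 := by
  refine ⟨5, by norm_num, 2, fun x hx => ?_⟩
  have hx0 : (0:ℝ) < x := by linarith
  have hx4 : (0:ℝ) < x^4 := by positivity
  have hGx : 0 < Real.Gamma x := Real.Gamma_pos_of_pos hx0
  have hGx1 : 0 < Real.Gamma (x+1) := Real.Gamma_pos_of_pos (by linarith)
  have hrp : (0:ℝ) < x ^ x := Real.rpow_pos_of_pos hx0 x
  have harg : (0:ℝ) < 2*π*(x+1/6) := by
    have := pi_pos
    nlinarith
  have hsq : (0:ℝ) < Real.sqrt (2*π*(x+1/6)) := Real.sqrt_pos.mpr harg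
  have hden : (0:ℝ) < x ^ x * Real.exp (-x) * Real.sqrt (2*π*(x+1/6)) := by
    have := Real.exp_pos (-x)
    positivity
  set E : ℝ := muF x - Real.log (1 + 1/(6*x)) / 2 with hEdef
  -- ratio = exp E
  have hlogden : Real.log (x ^ x * Real.exp (-x) * Real.sqrt (2*π*(x+1/6)))
      = x * Real.log x + (-x) + (Real.log (2*π) + Real.log x + Real.log (1 + 1/(6*x)))/2 := by
    rw [Real.log_mul (by positivity) (ne_of_gt hsq),
        Real.log_mul (ne_of_gt hrp) (Real.exp_ne_zero _),
        Real.log_rpow hx0, Real.log_exp, Real.log_sqrt harg.le,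
        show 2*π*(x+1/6) = (2*π) * x * (1 + 1/(6*x)) by field_simp,
        Real.log_mul (by positivity) (by positivity),
        Real.log_mul (by positivity : (2*π) ≠ 0) (ne_of_gt hx0)]
  have hloggamma : Real.log (Real.Gamma (x+1))
      = muF x + (x + 1/2) * Real.log x - x + Real.log (2*π)/2 := by
    rw [Real.Gamma_add_one (ne_of_gt hx0), Real.log_mul (ne_of_gt hx0) (ne_of_gt hGx)]
    unfold muF
    ring
  have hratio : Real.Gamma (x+1) / (x ^ x * Real.exp (-x) * Real.sqrt (2*π*(x+1/6)))
      = Real.exp E := by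
    rw [← Real.exp_log hGx1, ← Real.exp_log hden, ← Real.exp_sub]
    congr 1
    rw [hloggamma, hlogden, hEdef]
    ring
  -- Taylor estimate for E
  set P : ℝ := 1/(144*x^2) - 23/(6480*x^3) with hPdef
  have ht0 : (0:ℝ) ≤ 1/(6*x) := by positivity
  have ht1 : 1/(6*x) ≤ 1/2 := by
    rw [div_le_div_iff₀ (by positivity) two_pos]; linarith
  have hlog3 := log_taylor3 ht0 ht1
  have hmuh := muF_hF_bound hx
  have hEP : |E - P| ≤ 3/x^4 := by
    have hid : E - P = (muF x - hF x)
        - (Real.log (1 + 1/(6*x)) - (1/(6*x) - (1/(6*x))^2/2 + (1/(6*x))^3/3))/2 := by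
      rw [hEdef, hPdef]
      unfold hF
      field_simp
      ring
    rw [hid]
    have h2 : |(Real.log (1 + 1/(6*x)) - (1/(6*x) - (1/(6*x))^2/2 + (1/(6*x))^3/3))/2|
        ≤ (1/(6*x))^4 := by
      rw [abs_div, abs_two]
      linarith [hlog3]
    have h3 : (1/(6*x))^4 = 1/(1296*x^4) := by
      field_simp
      ring
    have h4 : 4/x^5 ≤ 2/x^4 := by
      rw [div_le_div_iff₀ (by positivity) hx4]
      nlinarith [pow_pos hx0 4]
    have h5 : 1/(1296*x^4) ≤ 1/x^4 := by
      rw [div_le_div_iff₀ (by positivity) hx4]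
      nlinarith [pow_pos hx0 4]
    calc |muF x - hF x - (Real.log (1 + 1/(6*x)) - (1/(6*x) - (1/(6*x))^2/2 + (1/(6*x))^3/3))/2|
        ≤ |muF x - hF x| + |(Real.log (1 + 1/(6*x)) - (1/(6*x) - (1/(6*x))^2/2 + (1/(6*x))^3/3))/2| :=
          abs_sub _ _
      _ ≤ 2/x^4 + 1/x^4 := by
          rw [h3] at h2
          linarith
      _ = 3/x^4 := by ring
  have hP0 : 0 ≤ P := by
    rw [hPdef, sub_nonneg, div_le_div_iff₀ (by positivity) (by positivity)]
    nlinarith [pow_pos hx0 2, pow_pos hx0 3]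
  have hPle : P ≤ 1/(144*x^2) := by
    rw [hPdef]
    have : 0 ≤ 23/(6480*x^3) := by positivity
    linarith
  have hE2 : |E| ≤ 1/x^2 := by
    have h1 : |E| ≤ |P| + 3/x^4 := by
      calc |E| = |P + (E - P)| := by congr 1; ring
        _ ≤ |P| + |E - P| := abs_add_le _ _
        _ ≤ |P| + 3/x^4 := by linarith
    have h2 : |P| ≤ 1/(144*x^2) := by rw [abs_of_nonneg hP0]; exact hPle
    have h3 : 1/(144*x^2) + 3/x^4 ≤ 1/x^2 := by
      rw [show 1/(144*x^2) + 3/x^4 = (x^2 + 432)/(144*x^4) by field_simp; ring,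
          div_le_div_iff₀ (by positivity) (by positivity)]
      nlinarith [pow_pos hx0 2, pow_pos hx0 4, sq_nonneg (x^2 - 4)]
    linarith
  have hE1 : |E| ≤ 1 := by
    have : 1/x^2 ≤ 1 := by
      rw [div_le_one (by positivity)]
      nlinarith
    linarith
  have hexp : |Real.exp E - 1 - E| ≤ 1/x^4 := by
    have h1 := Real.abs_exp_sub_one_sub_id_le hE1
    have h2 : E^2 ≤ 1/x^4 := by
      have he : E^2 = |E|^2 := (sq_abs E).symm
      rw [he]
      calc |E|^2 ≤ (1/x^2)^2 := pow_le_pow_left₀ (abs_nonneg E) hE2 2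
        _ = 1/x^4 := by rw [div_pow, one_pow, ← pow_mul]
    exact h1.trans h2
  have hq : |(1 + P) - (1 + (1/144)/(x+23/90)^2)| ≤ 1/x^4 := by
    have ha : (0:ℝ) < x + 23/90 := by linarith
    have hid : (1 + P) - (1 + (1/144)/(x+23/90)^2)
        = -((529/60*x + 12167/8100)/(6480*x^3*(x+23/90)^2)) := by
      rw [hPdef]
      field_simp
      ring
    rw [hid, abs_neg, abs_of_nonneg (by positivity)]
    rw [div_le_div_iff₀ (by positivity) hx4]
    nlinarith [pow_pos hx0 3, pow_pos hx0 4, sq_nonneg (x + 23/90), pow_pos ha 2,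
      mul_pos (pow_pos hx0 3) (pow_pos ha 2)]
  -- final combination
  rw [hratio]
  calc |Real.exp E - (1 + (1/144)/(x+23/90)^2)|
      ≤ |Real.exp E - (1 + E)| + |(1 + E) - (1 + P)| + |(1 + P) - (1 + (1/144)/(x+23/90)^2)| := by
        have t1 := abs_sub_le (Real.exp E) (1 + E) (1 + P)
        have t2 := abs_sub_le (Real.exp E) (1 + P) (1 + (1/144)/(x+23/90)^2)
        linarith
    _ ≤ 1/x^4 + 3/x^4 + 1/x^4 := by
        have e1 : |Real.exp E - (1 + E)| = |Real.exp E - 1 - E| := by congr 1; ring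
        have e2 : |(1 + E) - (1 + P)| = |E - P| := by congr 1; ring
        rw [e1, e2]
        exact add_le_add (add_le_add hexp hEP) hq
    _ = 5/x^4 := by ring
end

section
/- For all x ≥ 1, x^x e^{-x} √(2π(x + 1/6)) < Γ(x+1). -/
open Real Filter Topology



lemma log_ratio_bound (w : ℝ) (h0 : 0 ≤ w) (h1 : w ≤ 1/2) :
    2*w + 2/3*w^3 + 2/5*w^5 ≤ Real.log ((1+w)/(1-w)) := by
  have hlt : w < 1 := by linarith
  rw [Real.log_div (by linarith) (by linarith)]
  set f : ℝ → ℝ := fun t => Real.log (1+t) - Real.log (1-t) - (2*t + 2/3*t^3 + 2/5*t^5) with hf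
  have hder : ∀ t ∈ Set.Icc (0:ℝ) (1/2), HasDerivAt f
      (1/(1+t) + 1/(1-t) - (2 + 2*t^2 + 2*t^4)) t := by
    intro t ht
    obtain ⟨ht0, ht1⟩ := ht
    have d1 : HasDerivAt (fun u : ℝ => Real.log (1+u)) (1/(1+t)) t := by
      have := ((hasDerivAt_id t).const_add 1).log (by linarith : (1:ℝ) + t ≠ 0)
      simpa using this
    have d2 : HasDerivAt (fun u : ℝ => Real.log (1-u)) (-(1/(1-t))) t := by
      have h : HasDerivAt (fun u : ℝ => 1 - u) (-1) t := by
        simpa using ((hasDerivAt_id t).const_sub 1)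
      have := h.log (by linarith : (1:ℝ) - t ≠ 0)
      convert this using 1
      field_simp
    have d3 : HasDerivAt (fun u : ℝ => 2*u + 2/3*u^3 + 2/5*u^5) (2 + 2*t^2 + 2*t^4) t := by
      have p1 : HasDerivAt (fun u : ℝ => u^3) (3*t^2) t := by simpa using hasDerivAt_pow 3 t
      have p2 : HasDerivAt (fun u : ℝ => u^5) (5*t^4) t := by simpa using hasDerivAt_pow 5 t
      have := (((hasDerivAt_id t).const_mul 2).add ((p1.const_mul (2/3)))).add (p2.const_mul (2/5))
      exact this.congr_deriv (by ring)
    have := (d1.sub d2).sub d3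
    exact this.congr_deriv (by ring)
  have hmono : MonotoneOn f (Set.Icc (0:ℝ) (1/2)) := by
    apply monotoneOn_of_deriv_nonneg (convex_Icc _ _)
    · exact fun t ht => (hder t ht).differentiableAt.continuousAt.continuousWithinAt
    · intro t ht
      rw [interior_Icc] at ht
      exact ((hder t (Set.mem_Ioo.mp ht |> fun h => ⟨h.1.le, h.2.le⟩)).differentiableAt).differentiableWithinAt
    · intro t ht
      rw [interior_Icc] at ht
      obtain ⟨ht0, ht1⟩ := ht
      rw [(hder t ⟨ht0.le, ht1.le⟩).deriv]
      have hA : (0:ℝ) < 1+t := by linarith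
      have hB : (0:ℝ) < 1-t := by linarith
      have e : 1/(1+t) + 1/(1-t) - (2 + 2*t^2 + 2*t^4) = 2*t^6 / ((1+t)*(1-t)) := by
        field_simp [hA.ne', hB.ne']
        ring
      rw [e]
      have hAB : (0:ℝ) < (1+t)*(1-t) := mul_pos hA hB
      positivity
  have h00 : f 0 = 0 := by simp [hf]
  have := hmono (Set.mem_Icc.mpr ⟨le_refl 0, by norm_num⟩) (Set.mem_Icc.mpr ⟨h0, h1⟩) h0
  rw [h00] at this
  simp only [hf] at this
  linarith


noncomputable def Gos (x : ℝ) : ℝ := x ^ x * Real.exp (-x) * Real.sqrt (2 * π * (x + 1/6))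

lemma gos_pos {x : ℝ} (hx : 0 < x) : 0 < Gos x := by
  unfold Gos
  have hpi := pi_pos
  positivity

lemma log_gos {x : ℝ} (hx : 0 < x) :
    Real.log (Gos x) = x * Real.log x - x + (1/2) * Real.log (2*π*(x+1/6)) := by
  unfold Gos
  have hpi := pi_pos
  have h1 : x ^ x ≠ 0 := by positivity
  have h2 : Real.exp (-x) ≠ 0 := (exp_pos _).ne'
  have h3 : (0:ℝ) ≤ 2*π*(x+1/6) := by positivity
  rw [Real.log_mul (by positivity) (Real.sqrt_ne_zero'.mpr (by positivity)),
    Real.log_mul h1 h2, Real.log_rpow hx, Real.log_exp, Real.log_sqrt h3]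
  ring

lemma gosper_step {x : ℝ} (hx : 1 ≤ x) : (x+1) * Gos x < Gos (x+1) := by
  have hx0 : (0:ℝ) < x := by linarith
  have hx1 : (0:ℝ) < x + 1 := by linarith
  have hpi := pi_pos
  have hgx : 0 < Gos x := gos_pos hx0
  have hL : (0:ℝ) < (x+1) * Gos x := by positivity
  rw [← Real.exp_log hL, ← Real.exp_log (gos_pos hx1), Real.exp_lt_exp,
    Real.log_mul hx1.ne' hgx.ne', log_gos hx0, log_gos hx1]
  -- reduce to : 1 < x*(log(x+1) - log x) + (1/2)*(log(2π(x+7/6)) - log(2π(x+1/6)))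
  set w₁ : ℝ := 1/(2*x+1) with hw₁
  set w₂ : ℝ := 3/(6*x+4) with hw₂
  have ha : (0:ℝ) < 2*x+1 := by linarith
  have hb : (0:ℝ) < 6*x+4 := by linarith
  have hid1 : Real.log (x+1) - Real.log x = Real.log ((1+w₁)/(1-w₁)) := by
    rw [← Real.log_div hx1.ne' hx0.ne']
    congr 1
    rw [hw₁]
    field_simp
    ring
  have hid2 : Real.log (2*π*(x+1+1/6)) - Real.log (2*π*(x+1/6)) =
      Real.log ((1+w₂)/(1-w₂)) := by
    rw [← Real.log_div (by positivity) (by positivity)]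
    congr 1
    rw [hw₂]
    have hd1 : (2*π*(x+1/6)) ≠ 0 := by positivity
    have hd2 : 1 - 3/(6*x+4) ≠ 0 := by
      rw [sub_ne_zero]
      intro h
      rw [eq_comm, div_eq_one_iff_eq hb.ne'] at h
      linarith
    rw [div_eq_div_iff hd1 hd2]
    field_simp [hb.ne']
    ring
  have hb1 : 2*w₁ + 2/3*w₁^3 + 2/5*w₁^5 ≤ Real.log ((1+w₁)/(1-w₁)) := by
    apply log_ratio_bound
    · positivity
    · rw [hw₁, div_le_div_iff₀ ha (by norm_num)]
      linarith
  have hb2 : 2*w₂ + 2/3*w₂^3 + 2/5*w₂^5 ≤ Real.log ((1+w₂)/(1-w₂)) := by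
    apply log_ratio_bound
    · positivity
    · rw [hw₂, div_le_div_iff₀ hb (by norm_num)]
      linarith
  have hw5 : (0:ℝ) ≤ 2/5*w₂^5 := by positivity
  have hP : (0:ℝ) < 1440*x^5 + 3216*x^4 + 2512*x^3 + 508*x^2 - 266*x - 105 := by
    nlinarith [pow_nonneg (by linarith : (0:ℝ) ≤ x - 1) 3, pow_nonneg (by linarith : (0:ℝ) ≤ x - 1) 4,
      pow_nonneg (by linarith : (0:ℝ) ≤ x - 1) 5, sq_nonneg (x-1), hx]
  have hexpand : x*(2*w₁ + 2/3*w₁^3 + 2/5*w₁^5) + (1/2)*(2*w₂ + 2/3*w₂^3) - 1 =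
      (1440*x^5 + 3216*x^4 + 2512*x^3 + 508*x^2 - 266*x - 105) / (15*(2*x+1)^5*(6*x+4)^3) := by
    rw [hw₁, hw₂]
    field_simp
    ring
  have hkey : 1 < x*(2*w₁ + 2/3*w₁^3 + 2/5*w₁^5) + (1/2)*(2*w₂ + 2/3*w₂^3) := by
    have hden : (0:ℝ) < 15*(2*x+1)^5*(6*x+4)^3 := by positivity
    have := div_pos hP hden
    linarith [hexpand ▸ this]
  have hm1 : x*(2*w₁ + 2/3*w₁^3 + 2/5*w₁^5) ≤ x*(Real.log (x+1) - Real.log x) := by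
    rw [hid1] at *
    exact mul_le_mul_of_nonneg_left hb1 hx0.le
  nlinarith [hm1, hb2, hid2, hkey, hw5]

lemma fact_eq_stirling (n : ℕ) (hn : 1 ≤ n) :
    (n.factorial : ℝ) = Stirling.stirlingSeq n * (√(2*(n:ℝ)) * ((n:ℝ)/Real.exp 1)^n) := by
  have hN : (0:ℝ) < n := by exact_mod_cast hn
  rw [Stirling.stirlingSeq, div_mul_cancel₀]
  positivity

lemma T_eq (s : ℝ) (hs : 0 < s) (n : ℕ) (hn : 1 ≤ n) :
    (n:ℝ)^s * n.factorial / Gos ((n:ℝ) + s) =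
      (Stirling.stirlingSeq n / √π) * √((n:ℝ)/((n:ℝ)+(s+1/6))) *
        ((1+s/(n:ℝ))^n)⁻¹ * ((1+s/(n:ℝ))^s)⁻¹ * Real.exp s := by
  have hN : (0:ℝ) < n := by exact_mod_cast hn
  have hNs : (0:ℝ) < (n:ℝ) + s := by linarith
  have hpi := pi_pos
  rw [fact_eq_stirling n hn]
  unfold Gos
  have h1 : 1 + s/(n:ℝ) = ((n:ℝ)+s)/(n:ℝ) := by field_simp
  rw [h1, div_pow, Real.div_rpow hNs.le hN.le, div_pow, Real.exp_one_pow,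
    Real.rpow_add hNs, Real.rpow_natCast,
    show 2*π*((n:ℝ)+s+1/6) = 2*(π*((n:ℝ)+(s+1/6))) by ring,
    Real.sqrt_mul (by norm_num : (0:ℝ) ≤ 2) (π*((n:ℝ)+(s+1/6))),
    Real.sqrt_mul pi_pos.le ((n:ℝ)+(s+1/6)),
    Real.sqrt_mul (by norm_num : (0:ℝ) ≤ 2) (n:ℝ),
    Real.sqrt_div hN.le, Real.exp_neg, Real.exp_add]
  have f1 : √π ≠ 0 := by positivity
  have f2 : √((n:ℝ)+(s+1/6)) ≠ 0 := by positivity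
  have f3 : (√2 : ℝ) ≠ 0 := by positivity
  have f4 : Real.exp (n:ℝ) ≠ 0 := Real.exp_ne_zero _
  have f5 : Real.exp s ≠ 0 := Real.exp_ne_zero _
  have f6 : ((n:ℝ))^n ≠ 0 := by positivity
  have f7 : ((n:ℝ)+s)^n ≠ 0 := by positivity
  have f8 : ((n:ℝ)+s)^s ≠ 0 := (Real.rpow_pos_of_pos hNs s).ne'
  have f9 : ((n:ℝ))^s ≠ 0 := (Real.rpow_pos_of_pos hN s).ne'
  have f10 : √(n:ℝ) ≠ 0 := by positivity
  field_simp

lemma tendsto_T (s : ℝ) (hs : 0 < s) :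
    Filter.Tendsto (fun n : ℕ => (n:ℝ)^s * n.factorial / Gos ((n:ℝ) + s))
      Filter.atTop (𝓝 1) := by
  have l1 : Filter.Tendsto (fun n => Stirling.stirlingSeq n / √π) Filter.atTop (𝓝 1) := by
    have h := Stirling.tendsto_stirlingSeq_sqrt_pi.div_const (√π)
    rwa [div_self (by positivity : (√π : ℝ) ≠ 0)] at h
  have l2 : Filter.Tendsto (fun n : ℕ => √((n:ℝ)/((n:ℝ)+(s+1/6)))) Filter.atTop (𝓝 1) := by
    have := (tendsto_natCast_div_add_atTop (𝕜 := ℝ) (s+1/6)).sqrt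
    rwa [Real.sqrt_one] at this
  have l3 : Filter.Tendsto (fun n : ℕ => ((1+s/(n:ℝ))^n)⁻¹) Filter.atTop (𝓝 (Real.exp s)⁻¹) :=
    (Real.tendsto_one_add_div_pow_exp s).inv₀ (Real.exp_ne_zero s)
  have lb : Filter.Tendsto (fun n : ℕ => 1+s/(n:ℝ)) Filter.atTop (𝓝 1) := by
    have h0 := tendsto_const_div_atTop_nhds_zero_nat s
    have := tendsto_const_nhds (x := (1:ℝ)) (f := Filter.atTop (α := ℕ)) |>.add h0
    simpa using this
  have l4 : Filter.Tendsto (fun n : ℕ => ((1+s/(n:ℝ))^s)⁻¹) Filter.atTop (𝓝 1) := by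
    have h := (lb.rpow_const (p := s) (Or.inl one_ne_zero)).inv₀
      (by rw [Real.one_rpow]; norm_num)
    rwa [Real.one_rpow, inv_one] at h
  have lall := (((l1.mul l2).mul l3).mul l4).mul
    (tendsto_const_nhds (x := Real.exp s) (f := Filter.atTop (α := ℕ)))
  have heq : (1:ℝ)*1*(Real.exp s)⁻¹*1*Real.exp s = 1 := by
    field_simp
  rw [heq] at lall
  apply lall.congr'
  filter_upwards [Filter.eventually_ge_atTop 1] with n hn
  exact (T_eq s hs n hn).symm

lemma tendsto_ratio (s : ℝ) (hs : 1 < s) :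
    Filter.Tendsto (fun n : ℕ => Real.Gamma (s + (n:ℝ) + 1) / Gos ((n:ℝ) + s))
      Filter.atTop (𝓝 1) := by
  have hs0 : (0:ℝ) < s := by linarith
  have hGam : ∀ m : ℕ, Real.Gamma (s + m) = Real.Gamma s * ∏ j ∈ Finset.range m, (s + j) := by
    intro m
    induction m with
    | zero => simp
    | succ k ih =>
      have hc : s + ((k+1 : ℕ):ℝ) = (s + k) + 1 := by push_cast; ring
      rw [hc, Real.Gamma_add_one (by positivity : s + (k:ℝ) ≠ 0), ih, Finset.prod_range_succ]
      ring
  have hGpos := Real.Gamma_pos_of_pos hs0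
  have l5 : Filter.Tendsto (fun n : ℕ => Real.Gamma s / Real.GammaSeq s n)
      Filter.atTop (𝓝 1) := by
    have h := (tendsto_const_nhds (x := Real.Gamma s) (f := Filter.atTop (α := ℕ))).div
      (Real.GammaSeq_tendsto_Gamma s) hGpos.ne'
    rwa [div_self hGpos.ne'] at h
  have lT := tendsto_T s hs0
  have hmul := l5.mul lT
  rw [one_mul] at hmul
  apply hmul.congr'
  filter_upwards [Filter.eventually_ge_atTop 1] with n hn
  have hN : (0:ℝ) < n := by exact_mod_cast hn
  have hgam : Real.Gamma (s + (n:ℝ) + 1) = Real.Gamma s * ∏ j ∈ Finset.range (n+1), (s + (j:ℝ)) := by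
    rw [← hGam (n+1)]
    congr 1
    push_cast
    ring
  have hprodpos : 0 < ∏ j ∈ Finset.range (n+1), (s + (j:ℝ)) :=
    Finset.prod_pos fun j _ => by positivity
  have hGos : 0 < Gos ((n:ℝ) + s) := gos_pos (by linarith)
  have hns : ((n:ℝ))^s ≠ 0 := (Real.rpow_pos_of_pos hN s).ne'
  have hfac : ((n.factorial : ℝ)) ≠ 0 := by positivity
  rw [hgam, Real.GammaSeq]
  field_simp

theorem gosper_lower_bound (x : ℝ) (hx : 1 ≤ x) :
    x ^ x * Real.exp (-x) * Real.sqrt (2 * π * (x + 1/6)) < Real.Gamma (x + 1) := by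
  have hx0 : (0:ℝ) < x := by linarith
  suffices h : 1 < Real.Gamma (x+1) / Gos x by
    have := (one_lt_div (gos_pos hx0)).mp h
    simpa [Gos] using this
  set A : ℕ → ℝ := fun n => Real.Gamma (x + 1 + n) / Gos (x + n) with hA
  have hstep : ∀ n : ℕ, A (n+1) < A n := by
    intro n
    have hn0 : (0:ℝ) ≤ n := Nat.cast_nonneg n
    have hxn : 1 ≤ x + (n:ℝ) := by linarith
    have hg := gosper_step hxn
    have hΓpos : 0 < Real.Gamma (x+1+(n:ℝ)) := Real.Gamma_pos_of_pos (by linarith)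
    have hgam1 : Real.Gamma (x + 1 + ((n+1:ℕ):ℝ)) = (x + 1 + (n:ℝ)) * Real.Gamma (x + 1 + (n:ℝ)) := by
      have hc : x + 1 + ((n+1:ℕ):ℝ) = (x + 1 + (n:ℝ)) + 1 := by push_cast; ring
      rw [hc, Real.Gamma_add_one (by positivity : x + 1 + (n:ℝ) ≠ 0)]
    have hgos1 : Gos (x + ((n+1:ℕ):ℝ)) = Gos (x + (n:ℝ) + 1) := by
      congr 1
      push_cast
      ring
    show Real.Gamma (x + 1 + ((n+1:ℕ):ℝ)) / Gos (x + ((n+1:ℕ):ℝ)) <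
      Real.Gamma (x + 1 + (n:ℝ)) / Gos (x + (n:ℝ))
    rw [hgam1, hgos1]
    have hGosn : 0 < Gos (x + (n:ℝ)) := gos_pos (by linarith)
    have h2 : (x + 1 + (n:ℝ)) * Real.Gamma (x+1+(n:ℝ)) / Gos (x + (n:ℝ) + 1) <
        (x + 1 + (n:ℝ)) * Real.Gamma (x+1+(n:ℝ)) / ((x + (n:ℝ) + 1) * Gos (x + (n:ℝ))) := by
      apply div_lt_div_of_pos_left (by positivity) (by positivity)
      convert hg using 2
    calc (x + 1 + (n:ℝ)) * Real.Gamma (x+1+(n:ℝ)) / Gos (x + (n:ℝ) + 1)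
        < (x + 1 + (n:ℝ)) * Real.Gamma (x+1+(n:ℝ)) / ((x + (n:ℝ) + 1) * Gos (x + (n:ℝ))) := h2
      _ = Real.Gamma (x+1+(n:ℝ)) / Gos (x + (n:ℝ)) := by
          rw [show x + 1 + (n:ℝ) = x + (n:ℝ) + 1 by ring, mul_div_mul_left]
          positivity
  have hanti : StrictAnti A := strictAnti_nat_of_succ_lt hstep
  have hlim : Filter.Tendsto (fun n : ℕ => A (n+1)) Filter.atTop (𝓝 1) := by
    have h := tendsto_ratio (x+1) (by linarith)
    apply h.congr
    intro n
    show Real.Gamma (x + 1 + (n:ℝ) + 1) / Gos ((n:ℝ) + (x+1)) =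
      Real.Gamma (x + 1 + ((n+1:ℕ):ℝ)) / Gos (x + ((n+1:ℕ):ℝ))
    congr 1
    · congr 1; push_cast; ring
    · congr 1; push_cast; ring
  have h1le : 1 ≤ A 1 := by
    apply le_of_tendsto hlim
    filter_upwards with n
    exact hanti.antitone (by omega : 1 ≤ n+1)
  have hfin : 1 < A 0 := lt_of_le_of_lt h1le (hstep 0)
  have hA0 : A 0 = Real.Gamma (x + 1) / Gos x := by
    show Real.Gamma (x + 1 + ((0:ℕ):ℝ)) / Gos (x + ((0:ℕ):ℝ)) = _
    norm_num
  rwa [hA0] at hfin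
end
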